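/- arXiv:0910.5897 — 9 statements merged into one kernel-verified Lean document; each statement's English description precedes it below -/
import Mathlib

section
/- For any integer n ≥ 2, any pairwise distinct positive real numbers λ_1, …, λ_n, and any nonnegative integer m, one has ∑_{k=1}^{n} (1/λ_k^m) · ∏_{l ≠ k} λ_l/(λ_l − λ_k) = ∑_{i_1 + ⋯ + i_n = m, i_j ≥ 0} 1/(λ_1^{i_1} ⋯ λ_n^{i_n}), where the right-hand sum ranges over all n-tuples of nonnegative integers summing to m. -/
open Finset

/-- Geometric series: `(1 - aX) * (∑ aʲ Xʲ) = 1`. -/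
lemma aux_one_sub_mul_geom (a : ℝ) :
    (1 - PowerSeries.C a * PowerSeries.X) * PowerSeries.mk (fun j => a ^ j) = 1 := by
  ext j
  rw [sub_mul, one_mul, mul_assoc]
  cases j with
  | zero => simp
  | succ j =>
      rw [map_sub, PowerSeries.coeff_C_mul, PowerSeries.coeff_succ_X_mul,
        PowerSeries.coeff_mk, PowerSeries.coeff_mk, pow_succ, mul_comm]
      simp

/-- The key polynomial identity (Lagrange basis sums to one, rescaled). -/
lemma aux_poly_identity (n : ℕ) (hn : 1 ≤ n) (lam : Fin n → ℝ)
    (hne : ∀ k, lam k ≠ 0) (hdist : Function.Injective lam) :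
    ∑ k : Fin n, Polynomial.C (∏ l ∈ Finset.univ.erase k, lam l / (lam l - lam k)) *
      ∏ l ∈ Finset.univ.erase k, (1 - Polynomial.C (lam l)⁻¹ * Polynomial.X) = 1 := by
  have : NeZero n := ⟨by omega⟩
  refine Eq.trans (Finset.sum_congr rfl fun k _ => ?_)
    (Lagrange.sum_basis (v := lam) (s := Finset.univ) hdist.injOn univ_nonempty)
  rw [Lagrange.basis, map_prod, ← Finset.prod_mul_distrib]
  refine Finset.prod_congr rfl fun l hl => ?_
  have hlk : lam l - lam k ≠ 0 := by
    simp only [mem_erase, mem_univ, and_true] at hl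
    exact sub_ne_zero.2 fun h => hl (hdist h)
  have hkl : lam k - lam l ≠ 0 := by
    intro h; exact hlk (by linarith [sub_eq_zero.1 h])
  rw [Lagrange.basisDivisor]
  have e1 : lam l / (lam l - lam k) * (lam l)⁻¹ = -((lam k - lam l)⁻¹) := by
    rw [← neg_sub (lam l) (lam k), inv_neg, neg_neg]
    field_simp
    exact div_self (hne l)
  have e2 : lam l / (lam l - lam k) = -((lam k - lam l)⁻¹ * lam l) := by
    rw [← neg_sub (lam l) (lam k), inv_neg, neg_mul, neg_neg, div_eq_inv_mul, mul_comm]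
  calc Polynomial.C (lam l / (lam l - lam k)) *
        (1 - Polynomial.C (lam l)⁻¹ * Polynomial.X)
      = Polynomial.C (lam l / (lam l - lam k)) -
          Polynomial.C (lam l / (lam l - lam k) * (lam l)⁻¹) * Polynomial.X := by
        rw [map_mul]; ring
    _ = Polynomial.C ((lam k - lam l)⁻¹) * (Polynomial.X - Polynomial.C (lam l)) := by
        rw [e1, e2, map_neg, map_neg, map_mul]; ring

/-- For pairwise distinct positive reals `λ₁, …, λₙ` (`n ≥ 2`) and any nonnegative
integer `m`, `∑ₖ λₖ⁻ᵐ ∏_{l ≠ k} λₗ/(λₗ - λₖ)` equals the sum of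
`1/(λ₁^{i₁} ⋯ λₙ^{iₙ})` over all compositions `(i₁, …, iₙ)` of `m` into `n`
nonnegative parts. -/
theorem sum_inv_pow_mul_prod_div_eq_sum_compositions
    (n : ℕ) (hn : 2 ≤ n) (lam : Fin n → ℝ)
    (hpos : ∀ k, 0 < lam k) (hdist : Function.Injective lam) (m : ℕ) :
    ∑ k : Fin n, (1 / lam k ^ m) *
        ∏ l ∈ Finset.univ.erase k, lam l / (lam l - lam k) =
      ∑ f ∈ Finset.Nat.antidiagonalTuple n m, ∏ i : Fin n, 1 / lam i ^ f i := by
  have hne : ∀ k, lam k ≠ 0 := fun k => (hpos k).ne'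
  set μ : Fin n → ℝ := fun i => (lam i)⁻¹ with hμ
  set G : Fin n → PowerSeries ℝ := fun i => PowerSeries.mk fun j => μ i ^ j with hG
  set w : Fin n → ℝ := fun k => ∏ l ∈ Finset.univ.erase k, lam l / (lam l - lam k) with hw
  set P : PowerSeries ℝ :=
    ∏ i : Fin n, (1 - PowerSeries.C (μ i) * PowerSeries.X) with hP
  -- P * ∏ G = 1
  have key1 : P * ∏ i : Fin n, G i = 1 := by
    rw [hP, ← Finset.prod_mul_distrib]
    rw [Finset.prod_congr rfl fun i _ => aux_one_sub_mul_geom (μ i)]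
    simp
  -- P * (∑ w k • G k) = 1
  have key2 : P * (∑ k : Fin n, PowerSeries.C (w k) * G k) = 1 := by
    rw [Finset.mul_sum]
    have hterm : ∀ k : Fin n, P * (PowerSeries.C (w k) * G k) =
        PowerSeries.C (w k) *
          ∏ l ∈ Finset.univ.erase k, (1 - PowerSeries.C (μ l) * PowerSeries.X) := by
      intro k
      rw [hP, ← Finset.prod_erase_mul _ _ (Finset.mem_univ k)]
      rw [show (∏ l ∈ Finset.univ.erase k, (1 - PowerSeries.C (μ l) * PowerSeries.X)) *
            (1 - PowerSeries.C (μ k) * PowerSeries.X) * (PowerSeries.C (w k) * G k)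
          = PowerSeries.C (w k) *
            ((∏ l ∈ Finset.univ.erase k, (1 - PowerSeries.C (μ l) * PowerSeries.X)) *
              ((1 - PowerSeries.C (μ k) * PowerSeries.X) * G k)) by ring]
      rw [hG, aux_one_sub_mul_geom, mul_one]
    rw [Finset.sum_congr rfl fun k _ => hterm k]
    -- now transfer the polynomial identity
    have hpoly := congrArg (Polynomial.coeToPowerSeries.ringHom (R := ℝ))
      (aux_poly_identity n (by omega) lam hne hdist)
    simp only [map_sum, map_mul, map_prod, map_sub, map_one,
      Polynomial.coeToPowerSeries.ringHom_apply, Polynomial.coe_C, Polynomial.coe_X] at hpoly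
    simp only [hw, hμ, map_prod]
    exact hpoly
  -- hence ∏ G = ∑ w k • G k
  have key3 : (∏ i : Fin n, G i) = ∑ k : Fin n, PowerSeries.C (w k) * G k := by
    calc (∏ i : Fin n, G i) = (∏ i : Fin n, G i) *
          (P * (∑ k : Fin n, PowerSeries.C (w k) * G k)) := by rw [key2, mul_one]
      _ = (P * ∏ i : Fin n, G i) * (∑ k : Fin n, PowerSeries.C (w k) * G k) := by ring
      _ = ∑ k : Fin n, PowerSeries.C (w k) * G k := by rw [key1, one_mul]
  -- take coefficient m
  have := congrArg (PowerSeries.coeff m) key3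
  rw [PowerSeries.coeff_prod, map_sum] at this
  -- compute both sides
  have hL : ∑ k : Fin n, (PowerSeries.coeff m) (PowerSeries.C (w k) * G k) =
      ∑ k : Fin n, (1 / lam k ^ m) * w k := by
    refine Finset.sum_congr rfl fun k _ => ?_
    rw [PowerSeries.coeff_C_mul, hG]
    simp only [PowerSeries.coeff_mk]
    rw [hμ]
    rw [one_div, inv_pow]
    ring
  have hR : ∑ l ∈ Finset.finsuppAntidiag Finset.univ m,
        ∏ i : Fin n, (PowerSeries.coeff (l i)) (G i) =
      ∑ f ∈ Finset.Nat.antidiagonalTuple n m, ∏ i : Fin n, 1 / lam i ^ f i := by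
    refine Finset.sum_nbij' (fun l => ⇑l) (fun f => Finsupp.equivFunOnFinite.symm f)
      ?_ ?_ ?_ ?_ ?_
    · intro l hl
      simp only [Finset.mem_finsuppAntidiag] at hl
      simp [Finset.Nat.mem_antidiagonalTuple, ← hl.1, Finsupp.sum_fintype]
    · intro f hf
      simp only [Finset.Nat.mem_antidiagonalTuple] at hf
      simp only [Finset.mem_finsuppAntidiag]
      constructor
      · rw [Finset.sum_congr rfl fun i _ => rfl]
        simpa [Finsupp.sum_fintype] using hf
      · exact fun i _ => Finset.mem_univ i
    · intro l _; exact Finsupp.equivFunOnFinite.symm_apply_apply l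
    · intro f _; exact Finsupp.equivFunOnFinite.apply_symm_apply f
    · intro l _
      refine Finset.prod_congr rfl fun i _ => ?_
      rw [hG]
      simp only [PowerSeries.coeff_mk]
      rw [hμ, one_div, inv_pow]
  rw [hL, hR] at this
  simp only [hw] at this
  exact this.symm
end

section
/- Good's identity: for any integer n ≥ 2 and any pairwise distinct nonzero real numbers x_1, …, x_n, one has ∑_{j=1}^{n} ∏_{i ≠ j} (1 − x_j/x_i)^{-1} = 1. -/
open Finset

/-- Good's identity: for pairwise distinct nonzero reals `x₁, …, xₙ` (`n ≥ 2`),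
`∑ⱼ ∏_{i ≠ j} (1 - xⱼ/xᵢ)⁻¹ = 1`. -/
theorem good_identity (n : ℕ) (hn : 2 ≤ n) (x : Fin n → ℝ)
    (hx : ∀ i, x i ≠ 0) (hdist : Function.Injective x) :
    ∑ j : Fin n, ∏ i ∈ Finset.univ.erase j, (1 - x j / x i)⁻¹ = 1 := by
  have hne : (Finset.univ : Finset (Fin n)).Nonempty := by
    refine Finset.univ_nonempty_iff.mpr ?_
    exact Fin.pos_iff_nonempty.mp (by omega)
  have hsum := Lagrange.sum_basis (Set.injOn_of_injective hdist) hne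
  have heval := congrArg (Polynomial.eval (0 : ℝ)) hsum
  rw [Polynomial.eval_finset_sum, Polynomial.eval_one] at heval
  have key : ∀ j : Fin n, ∏ i ∈ Finset.univ.erase j, (1 - x j / x i)⁻¹
      = Polynomial.eval 0 (Lagrange.basis Finset.univ x j) := by
    intro j
    rw [Lagrange.basis, Polynomial.eval_prod]
    refine Finset.prod_congr rfl fun i hi => ?_
    have hij : x j ≠ x i := fun h => (Finset.mem_erase.mp hi).1 (hdist h).symm
    simp only [Lagrange.basisDivisor, Polynomial.eval_mul, Polynomial.eval_C,
      Polynomial.eval_sub, Polynomial.eval_X]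
    rw [eq_comm, ← inv_inv ((x j - x i)⁻¹ * (0 - x i)), inv_eq_iff_eq_inv, inv_inv]
    field_simp [sub_ne_zero.mpr hij, hx i]
    ring
  simp_rw [key]
  exact heval
end

section
/- Let n ≥ 2 and let X_1, …, X_n be independent real-valued random variables on a probability space, where X_j is exponentially distributed with rate λ_j (density λ_j e^{−λ_j x} for x ≥ 0, and 0 for x < 0), and the λ_j are pairwise distinct positive reals. Then the distribution of S_n = X_1 + ⋯ + X_n has density with respect to Lebesgue measure given by f_n(x) = (∏_{j=1}^{n} λ_j) · ∑_{k=1}^{n} e^{−λ_k x}/∏_{l ≠ k} (λ_l − λ_k) for x ≥ 0, and f_n(x) = 0 for x < 0. -/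
open Finset MeasureTheory ProbabilityTheory
open scoped ENNReal

private lemma pf_identity {n : ℕ} [NeZero n] (v : Fin n → ℝ) (hv : Function.Injective v)
    (c : ℝ) (hc : ∀ k, v k ≠ c) :
    ∑ k, 1 / ((v k - c) * ∏ l ∈ univ.erase k, (v l - v k)) = 1 / ∏ l, (v l - c) := by
  have hsub : ∀ k : Fin n, v k - c ≠ 0 := fun k => sub_ne_zero.mpr (hc k)
  have hE : ∀ k : Fin n, ∏ l ∈ univ.erase k, (v l - c) ≠ 0 := fun k =>
    Finset.prod_ne_zero_iff.mpr fun l _ => sub_ne_zero.mpr (hc l)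
  have hD : ∀ k : Fin n, ∏ l ∈ univ.erase k, (v l - v k) ≠ 0 := fun k =>
    Finset.prod_ne_zero_iff.mpr fun l hl =>
      sub_ne_zero.mpr (hv.ne (Finset.mem_erase.mp hl).1)
  have hP : ∏ l, (v l - c) ≠ 0 :=
    Finset.prod_ne_zero_iff.mpr fun l _ => sub_ne_zero.mpr (hc l)
  have key : ∑ k, Polynomial.eval c (Lagrange.basis univ v k) = 1 := by
    rw [← Polynomial.eval_finset_sum, Lagrange.sum_basis hv.injOn univ_nonempty,
      Polynomial.eval_one]
  have hev : ∀ k : Fin n, Polynomial.eval c (Lagrange.basis univ v k)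
      = (∏ l ∈ univ.erase k, (v l - c)) / ∏ l ∈ univ.erase k, (v l - v k) := by
    intro k
    rw [Lagrange.basis, Polynomial.eval_prod, ← Finset.prod_div_distrib]
    refine Finset.prod_congr rfl fun l hl => ?_
    have hkl : v k - v l ≠ 0 :=
      sub_ne_zero.mpr (hv.ne (Finset.mem_erase.mp hl).1.symm)
    simp only [Lagrange.basisDivisor, Polynomial.eval_mul, Polynomial.eval_C,
      Polynomial.eval_sub, Polynomial.eval_X]
    rw [inv_mul_eq_div, div_eq_div_iff hkl (sub_ne_zero.mpr
      (hv.ne (Finset.mem_erase.mp hl).1))]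
    ring
  have step : ∀ k : Fin n, 1 / ((v k - c) * ∏ l ∈ univ.erase k, (v l - v k))
      = Polynomial.eval c (Lagrange.basis univ v k) / ∏ l, (v l - c) := by
    intro k
    rw [hev k, ← Finset.mul_prod_erase univ (fun l => v l - c) (mem_univ k)]
    set E := ∏ l ∈ univ.erase k, (v l - c) with hEdef
    set D := ∏ l ∈ univ.erase k, (v l - v k) with hDdef
    set a := v k - c with hadef
    have ha : a ≠ 0 := hsub k
    have hE' : E ≠ 0 := hE k
    have hD' : D ≠ 0 := hD k
    field_simp
  rw [Finset.sum_congr rfl fun k _ => step k, ← Finset.sum_div, key]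

private lemma erase_castSucc {n : ℕ} (k : Fin n) :
    (univ : Finset (Fin (n+1))).erase (Fin.castSucc k)
      = insert (Fin.last n) ((univ.erase k).image Fin.castSucc) := by
  ext l
  simp only [ne_eq, mem_erase, mem_univ, and_true, mem_insert, mem_image, Fin.ext_iff,
    Fin.coe_castSucc, Fin.val_last]
  constructor
  · intro h
    rcases eq_or_lt_of_le (Nat.lt_succ_iff.mp l.isLt) with h1 | h1
    · exact Or.inl h1
    · exact Or.inr ⟨⟨l.val, h1⟩, by simpa using h, rfl⟩
  · rintro (h | ⟨m, hm, hml⟩)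
    · have := k.isLt; omega
    · omega
private lemma erase_last {n : ℕ} :
    (univ : Finset (Fin (n+1))).erase (Fin.last n)
      = (univ : Finset (Fin n)).image Fin.castSucc := by
  ext l
  simp only [ne_eq, mem_erase, mem_univ, and_true, mem_image, Fin.ext_iff,
    Fin.coe_castSucc, Fin.val_last]
  constructor
  · intro h
    exact ⟨⟨l.val, by omega⟩, trivial, rfl⟩
  · rintro ⟨m, -, hml⟩
    have := m.isLt; omega

noncomputable def hypoPos {n : ℕ} (v : Fin n → ℝ) (x : ℝ) : ℝ :=
  (∏ j, v j) * ∑ k, Real.exp (-(v k * x)) / ∏ l ∈ univ.erase k, (v l - v k)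

private lemma hypoPos_snoc {n : ℕ} (v : Fin n → ℝ) (c x : ℝ) :
    hypoPos (Fin.snoc v c) x = ((∏ j, v j) * c) *
      ((∑ k, Real.exp (-(v k * x)) / ((c - v k) * ∏ l ∈ univ.erase k, (v l - v k)))
        + Real.exp (-(c * x)) / ∏ l, (v l - c)) := by
  have hinj : Function.Injective (Fin.castSucc : Fin n → Fin (n+1)) :=
    Fin.castSucc_injective n
  unfold hypoPos
  rw [Fin.prod_univ_castSucc, Fin.sum_univ_castSucc]
  simp only [Fin.snoc_castSucc, Fin.snoc_last]
  have h1 : ∀ k : Fin n,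
      ∏ l ∈ (univ : Finset (Fin (n+1))).erase (Fin.castSucc k),
        ((Fin.snoc v c : Fin (n+1) → ℝ) l - v k) = (c - v k) * ∏ l ∈ univ.erase k, (v l - v k) := by
    intro k
    rw [erase_castSucc k, prod_insert, prod_image]
    · simp only [Fin.snoc_castSucc, Fin.snoc_last]
    · intro a _ b _ h; exact hinj h
    · simp only [mem_image]
      rintro ⟨m, -, hm⟩
      exact (Fin.castSucc_lt_last m).ne hm
  have h2 : ∏ l ∈ (univ : Finset (Fin (n+1))).erase (Fin.last n),
      ((Fin.snoc v c : Fin (n+1) → ℝ) l - c) = ∏ l, (v l - c) := by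
    rw [erase_last, prod_image]
    · simp only [Fin.snoc_castSucc]
    · intro a _ b _ h; exact hinj h
  rw [Finset.sum_congr rfl fun k _ => by rw [h1 k], h2]

private lemma integral_exp_mul' (a x : ℝ) (ha : a ≠ 0) :
    ∫ t in (0:ℝ)..x, Real.exp (a * t) = (Real.exp (a * x) - 1) / a := by
  have hderiv : ∀ t ∈ Set.uIcc (0:ℝ) x,
      HasDerivAt (fun t => Real.exp (a * t) / a) (Real.exp (a * t)) t := by
    intro t _
    have h1 : HasDerivAt (fun t : ℝ => a * t) a t := by
      simpa using (hasDerivAt_id t).const_mul a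
    have h2 := (Real.hasDerivAt_exp (a * t)).comp t h1
    have h3 := h2.div_const a
    simpa [mul_div_assoc, mul_div_cancel_right₀ _ ha] using h3
  rw [intervalIntegral.integral_eq_sub_of_hasDerivAt hderiv
    ((Real.continuous_exp.comp (continuous_const.mul continuous_id)).intervalIntegrable 0 x)]
  simp [sub_div]

private lemma conv_integral {n : ℕ} [NeZero n] (v : Fin n → ℝ) (hv : Function.Injective v)
    (c : ℝ) (hc : ∀ k, v k ≠ c) (x : ℝ) :
    ∫ t in (0:ℝ)..x, hypoPos v t * (c * Real.exp (-(c * (x - t))))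
      = hypoPos (Fin.snoc v c) x := by
  have ha : ∀ k : Fin n, c - v k ≠ 0 := fun k => sub_ne_zero.mpr (Ne.symm (hc k))
  have hD : ∀ k : Fin n, ∏ l ∈ univ.erase k, (v l - v k) ≠ 0 := fun k =>
    Finset.prod_ne_zero_iff.mpr fun l hl =>
      sub_ne_zero.mpr (hv.ne (Finset.mem_erase.mp hl).1)
  have hint : ∀ t : ℝ, hypoPos v t * (c * Real.exp (-(c * (x - t))))
      = ∑ k, ((∏ j, v j) * c * Real.exp (-(c * x)) / ∏ l ∈ univ.erase k, (v l - v k))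
          * Real.exp ((c - v k) * t) := by
    intro t
    unfold hypoPos
    rw [Finset.mul_sum, Finset.sum_mul]
    refine Finset.sum_congr rfl fun k _ => ?_
    have hE : Real.exp (-(c*x)) * Real.exp ((c - v k) * t)
        = Real.exp (-(v k * t)) * Real.exp (-(c * (x - t))) := by
      rw [← Real.exp_add, ← Real.exp_add]; ring_nf
    have h2 := hD k
    field_simp
    linear_combination (norm := ring_nf) (-((∏ j : Fin n, v j) * c)) * hE
  simp_rw [hint]
  rw [intervalIntegral.integral_finset_sum (fun k _ =>
    (Continuous.intervalIntegrable (by continuity) 0 x))]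
  simp_rw [intervalIntegral.integral_const_mul, fun k => integral_exp_mul' (c - v k) x (ha k)]
  rw [hypoPos_snoc]
  have hexp : ∀ k : Fin n, Real.exp (-(c * x)) * Real.exp ((c - v k) * x)
      = Real.exp (-(v k * x)) := by
    intro k; rw [← Real.exp_add]; ring_nf
  have hterm : ∀ k : Fin n,
      ((∏ j, v j) * c * Real.exp (-(c * x)) / ∏ l ∈ univ.erase k, (v l - v k))
          * ((Real.exp ((c - v k) * x) - 1) / (c - v k))
      = ((∏ j, v j) * c) * (Real.exp (-(v k * x))
            / ((c - v k) * ∏ l ∈ univ.erase k, (v l - v k)))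
        + ((∏ j, v j) * c * Real.exp (-(c * x)))
            * (1 / ((v k - c) * ∏ l ∈ univ.erase k, (v l - v k))) := by
    intro k
    rw [← hexp k]
    have h1 := ha k
    have h2 := hD k
    have h3 : v k - c ≠ 0 := sub_ne_zero.mpr (hc k)
    field_simp
    ring
  rw [Finset.sum_congr rfl fun k _ => hterm k, Finset.sum_add_distrib,
    ← Finset.mul_sum, ← Finset.mul_sum, pf_identity v hv c hc]
  ring

private lemma hypoPos_nonneg : ∀ (n : ℕ) (v : Fin (n+1) → ℝ), (∀ j, 0 < v j) →
    Function.Injective v → ∀ x : ℝ, 0 ≤ x → 0 ≤ hypoPos v x := by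
  intro n
  induction n with
  | zero =>
    intro v hpos _ x _
    have : hypoPos v x = v 0 * Real.exp (-(v 0 * x)) := by
      simp [hypoPos]
    rw [this]
    exact mul_nonneg (hpos 0).le (Real.exp_nonneg _)
  | succ n ih =>
    intro v hpos hinj x hx
    set w : Fin (n+1) → ℝ := Fin.init v with hw
    set c : ℝ := v (Fin.last (n+1)) with hcdef
    have hvs : v = Fin.snoc w c := (Fin.snoc_init_self v).symm
    have hwinj : Function.Injective w := fun a b h =>
      Fin.castSucc_injective _ (hinj h)
    have hcne : ∀ k, w k ≠ c := fun k h =>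
      (Fin.castSucc_lt_last k).ne (hinj h)
    rw [hvs, ← conv_integral w hwinj c hcne x]
    refine intervalIntegral.integral_nonneg hx fun t ht => ?_
    have h0 : (0:ℝ) ≤ c := (hpos _).le
    exact mul_nonneg (ih w (fun j => hpos _) hwinj t ht.1)
      (mul_nonneg h0 (Real.exp_nonneg _))

private lemma map_add_withDensity (f g : ℝ → ℝ≥0∞) (hf : Measurable f) (hg : Measurable g) :
    Measure.map (fun p : ℝ × ℝ => p.1 + p.2)
        ((volume.withDensity f).prod (volume.withDensity g))
      = volume.withDensity fun z => ∫⁻ t, f t * g (z - t) := by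
  have hadd : Measurable fun p : ℝ × ℝ => p.1 + p.2 := measurable_add
  ext s hs
  rw [Measure.map_apply hadd hs, withDensity_apply _ hs,
    Measure.prod_apply (hadd hs)]
  have hind : Measurable (s.indicator (fun _ => (1:ℝ≥0∞))) :=
    measurable_const.indicator hs
  have h1 : ∀ x : ℝ, (volume.withDensity g) (Prod.mk x ⁻¹' ((fun p : ℝ × ℝ => p.1 + p.2) ⁻¹' s))
      = ∫⁻ y, s.indicator (fun _ => (1:ℝ≥0∞)) (x + y) * g y := by
    intro x
    have hps : MeasurableSet ((fun y => x + y) ⁻¹' s) := (measurable_const_add x) hs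
    have : Prod.mk x ⁻¹' ((fun p : ℝ × ℝ => p.1 + p.2) ⁻¹' s) = (fun y => x + y) ⁻¹' s := rfl
    rw [this, withDensity_apply _ hps, ← lintegral_indicator hps]
    congr 1
    ext y
    by_cases h : x + y ∈ s <;> simp [Set.indicator, h]
  rw [lintegral_congr h1]
  have hFmeas : Measurable fun x : ℝ => ∫⁻ y, s.indicator (fun _ => (1:ℝ≥0∞)) (x + y) * g y := by
    apply Measurable.lintegral_prod_right
    exact ((hind.comp (measurable_fst.add measurable_snd)).mul (hg.comp measurable_snd))
  rw [lintegral_withDensity_eq_lintegral_mul volume hf hFmeas]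
  have h2 : ∀ x : ℝ, (f * fun x => ∫⁻ y, s.indicator (fun _ => (1:ℝ≥0∞)) (x + y) * g y) x
      = ∫⁻ z, f x * (s.indicator (fun _ => (1:ℝ≥0∞)) z * g (z - x)) := by
    intro x
    simp only [Pi.mul_apply]
    have hm1 : Measurable fun y : ℝ => s.indicator (fun _ => (1:ℝ≥0∞)) (x + y) * g y :=
      (hind.comp (measurable_const_add x)).mul hg
    rw [← lintegral_const_mul _ hm1,
      ← lintegral_add_right_eq_self
        (fun z => f x * (s.indicator (fun _ => (1:ℝ≥0∞)) z * g (z - x))) x]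
    congr 1
    ext y
    rw [add_comm y x, add_sub_cancel_left]
  rw [lintegral_congr h2, lintegral_lintegral_swap]
  · have h3 : ∀ z : ℝ, ∫⁻ x, f x * (s.indicator (fun _ => (1:ℝ≥0∞)) z * g (z - x))
        = s.indicator (fun _ => (1:ℝ≥0∞)) z * ∫⁻ x, f x * g (z - x) := by
      intro z
      have hm2 : Measurable fun x : ℝ => f x * g (z - x) :=
        hf.mul (hg.comp (measurable_const.sub measurable_id))
      rw [← lintegral_const_mul _ hm2]
      congr 1; ext x; ring
    rw [lintegral_congr h3, ← lintegral_indicator hs]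
    congr 1
    ext z
    by_cases h : z ∈ s <;> simp [Set.indicator, h]
  · exact ((hf.comp measurable_fst).mul
      ((hind.comp measurable_snd).mul (hg.comp (measurable_snd.sub measurable_fst)))).aemeasurable

private lemma continuous_hypoPos {n : ℕ} (v : Fin n → ℝ) : Continuous (hypoPos v) := by
  unfold hypoPos
  refine continuous_const.mul (continuous_finset_sum _ fun k _ => ?_)
  exact (Real.continuous_exp.comp (continuous_const.mul continuous_id).neg).div_const _

private lemma kernel_eq {n : ℕ} [NeZero n] (v : Fin n → ℝ) (hpos : ∀ j, 0 < v j)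
    (hv : Function.Injective v) (c : ℝ) (hcpos : 0 < c) (hc : ∀ k, v k ≠ c) (z : ℝ) :
    (∫⁻ t, ENNReal.ofReal (if 0 ≤ t then hypoPos v t else 0)
        * ENNReal.ofReal (if 0 ≤ z - t then c * Real.exp (-(c * (z - t))) else 0))
      = ENNReal.ofReal (if 0 ≤ z then hypoPos (Fin.snoc v c) z else 0) := by
  set q : ℝ → ℝ := fun t =>
    (if 0 ≤ t then hypoPos v t else 0) * (if 0 ≤ z - t then c * Real.exp (-(c * (z - t))) else 0)
    with hq
  have hg_nonneg : ∀ t : ℝ, 0 ≤ (if 0 ≤ z - t then c * Real.exp (-(c * (z - t))) else 0) := by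
    intro t
    split_ifs
    · exact mul_nonneg hcpos.le (Real.exp_nonneg _)
    · exact le_rfl
  have hofReal : ∀ t : ℝ, ENNReal.ofReal (if 0 ≤ t then hypoPos v t else 0)
      * ENNReal.ofReal (if 0 ≤ z - t then c * Real.exp (-(c * (z - t))) else 0)
      = ENNReal.ofReal (q t) := fun t => (ENNReal.ofReal_mul' (hg_nonneg t)).symm
  simp_rw [hofReal]
  by_cases hz : 0 ≤ z
  · -- main case
    obtain ⟨m, rfl⟩ : ∃ m, n = m + 1 := ⟨n - 1, (Nat.succ_pred_eq_of_pos (NeZero.pos n)).symm⟩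
    have hq_nonneg : ∀ t, 0 ≤ q t := by
      intro t
      refine mul_nonneg ?_ (hg_nonneg t)
      split_ifs with h
      · exact hypoPos_nonneg _ v hpos hv t h
      · exact le_rfl
    have hq_zero : ∀ t, t ∉ Set.Icc 0 z → q t = 0 := by
      intro t ht
      simp only [Set.mem_Icc, not_and_or, not_le] at ht
      rcases ht with h | h
      · simp [hq, not_le.mpr h]
      · have h2 : ¬ (0 ≤ z - t) := by simp only [not_le, sub_neg]; linarith
        simp only [hq, if_neg h2, mul_zero]
    have hq_ind : q = (Set.Icc 0 z).indicator q := by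
      funext t
      by_cases ht : t ∈ Set.Icc 0 z
      · rw [Set.indicator_of_mem ht]
      · rw [Set.indicator_of_notMem ht, hq_zero t ht]
    have hq_eqOn : ∀ t ∈ Set.Icc (0:ℝ) z,
        q t = hypoPos v t * (c * Real.exp (-(c * (z - t)))) := by
      intro t ht
      rw [hq]
      simp only [if_pos ht.1, if_pos (by linarith [ht.2] : (0:ℝ) ≤ z - t)]
    have hcont : ContinuousOn (fun t => hypoPos v t * (c * Real.exp (-(c * (z - t)))))
        (Set.Icc 0 z) :=
      Continuous.continuousOn <| (continuous_hypoPos v).mul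
        (continuous_const.mul (Real.continuous_exp.comp (by fun_prop)))
    have hIntOn : IntegrableOn q (Set.Icc 0 z) := by
      refine IntegrableOn.congr_fun (hcont.integrableOn_Icc) ?_ measurableSet_Icc
      intro t ht
      exact (hq_eqOn t ht).symm
    have hInt : Integrable q := by
      rw [hq_ind]
      exact (integrable_indicator_iff measurableSet_Icc).mpr hIntOn
    rw [← ofReal_integral_eq_lintegral_ofReal hInt
      (Filter.Eventually.of_forall hq_nonneg)]
    congr 1
    rw [if_pos hz]
    calc ∫ t, q t = ∫ t, (Set.Icc 0 z).indicator q t := by rw [← hq_ind]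
      _ = ∫ t in Set.Icc 0 z, q t := integral_indicator measurableSet_Icc
      _ = ∫ t in Set.Ioc 0 z, q t := integral_Icc_eq_integral_Ioc
      _ = ∫ t in (0:ℝ)..z, q t := (intervalIntegral.integral_of_le hz).symm
      _ = ∫ t in (0:ℝ)..z, hypoPos v t * (c * Real.exp (-(c * (z - t)))) := by
          refine intervalIntegral.integral_congr ?_
          intro t ht
          rw [Set.uIcc_of_le hz] at ht
          exact hq_eqOn t ht
      _ = hypoPos (Fin.snoc v c) z := conv_integral v hv c hc z
  · -- z < 0 : integrand vanishes
    have hq0 : ∀ t, q t = 0 := by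
      intro t
      by_cases ht : 0 ≤ t
      · have h2 : ¬ (0 ≤ z - t) := by simp only [not_le, sub_neg]; linarith
        simp only [hq, if_neg h2, mul_zero]
      · simp [hq, ht]
    simp [hq0, if_neg hz]

private lemma iIndepFun_init {Ω : Type*} [MeasurableSpace Ω] {μ : Measure Ω} {n : ℕ}
    {X : Fin (n+1) → Ω → ℝ}
    (h : iIndepFun X μ) :
    iIndepFun
      (fun i : Fin n => X (Fin.castSucc i)) μ := by
  classical
  rw [iIndepFun_iff (fun _ => inferInstance)] at h
  rw [iIndepFun_iff (fun _ => inferInstance)]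
  intro s f' hf'
  set F' : Fin (n+1) → Set Ω :=
    fun j => if hj : (j : ℕ) < n then f' ⟨j, hj⟩ else Set.univ with hF'
  have hFc : ∀ m : Fin n, F' (Fin.castSucc m) = f' m := by
    intro m
    simp only [hF', Fin.coe_castSucc, m.isLt, dif_pos, Fin.eta]
  have key := h (s.image Fin.castSucc) (f' := F') ?_
  · have h1 : ⋂ i ∈ s.image Fin.castSucc, F' i = ⋂ m ∈ s, f' m := by
      ext ω
      simp only [Set.mem_iInter, Finset.mem_image]
      constructor
      · intro H m hm
        rw [← hFc m]
        exact H _ ⟨m, hm, rfl⟩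
      · rintro H i ⟨m, hm, rfl⟩
        rw [hFc m]
        exact H m hm
    have h2 : ∏ i ∈ s.image Fin.castSucc, μ (F' i) = ∏ m ∈ s, μ (f' m) := by
      rw [Finset.prod_image (fun a _ b _ hab => Fin.castSucc_injective n hab)]
      exact Finset.prod_congr rfl fun m _ => by rw [hFc m]
    rw [← h1, ← h2]
    exact key
  · intro i hi
    obtain ⟨m, hm, rfl⟩ := Finset.mem_image.mp hi
    rw [hFc m]
    exact hf' m hm

private lemma density_measurable {g : ℝ → ℝ} (hg : Continuous g) :
    Measurable fun x : ℝ => ENNReal.ofReal (if 0 ≤ x then g x else 0) := by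
  refine ENNReal.measurable_ofReal.comp (Measurable.ite ?_ hg.measurable measurable_const)
  exact measurableSet_Ici

private lemma main_aux : ∀ (n : ℕ) {Ω : Type*} [MeasurableSpace Ω] (μ : Measure Ω)
    [IsProbabilityMeasure μ] (lam : Fin (n+1) → ℝ), (∀ j, 0 < lam j) →
    Function.Injective lam → ∀ (X : Fin (n+1) → Ω → ℝ), (∀ j, Measurable (X j)) →
    iIndepFun X μ →
    (∀ j, Measure.map (X j) μ = volume.withDensity fun x =>
      ENNReal.ofReal (if 0 ≤ x then lam j * Real.exp (-(lam j * x)) else 0)) →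
    Measure.map (fun ω => ∑ j, X j ω) μ = volume.withDensity fun x =>
      ENNReal.ofReal (if 0 ≤ x then hypoPos lam x else 0) := by
  intro n
  induction n with
  | zero =>
    intro Ω _ μ _ lam hpos hinj X hmeas hindep hlaw
    have h0 : (fun ω => ∑ j : Fin 1, X j ω) = X 0 := by
      funext ω; simp
    rw [h0, hlaw 0]
    congr 1
    funext x
    congr 1
    have h1 : hypoPos lam x = lam 0 * Real.exp (-(lam 0 * x)) := by simp [hypoPos]
    rw [h1]
  | succ n ih =>
    intro Ω _ μ _ lam hpos hinj X hmeas hindep hlaw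
    set w := Fin.init lam with hwdef
    set c := lam (Fin.last (n+1)) with hcdef
    have hwpos : ∀ j, 0 < w j := fun j => hpos _
    have hwinj : Function.Injective w := fun a b hab => Fin.castSucc_injective _ (hinj hab)
    have hcpos : 0 < c := hpos _
    have hcne : ∀ k, w k ≠ c := fun k hk => (Fin.castSucc_lt_last k).ne (hinj hk)
    set Y := fun ω => ∑ j : Fin (n+1), X (Fin.castSucc j) ω with hYdef
    set Z := X (Fin.last (n+1)) with hZdef
    have hYmeas : Measurable Y :=
      Finset.measurable_sum univ fun j _ => hmeas _
    have hZmeas : Measurable Z := hmeas _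
    have hmapY : Measure.map Y μ = volume.withDensity fun x =>
        ENNReal.ofReal (if 0 ≤ x then hypoPos w x else 0) :=
      ih μ w hwpos hwinj (fun i => X (Fin.castSucc i)) (fun i => hmeas _)
        (iIndepFun_init hindep) (fun i => hlaw _)
    have hYZ : IndepFun Y Z μ := by
      have h1 := hindep.indepFun_finset_sum_of_notMem hmeas
        (s := (univ : Finset (Fin (n+2))).erase (Fin.last (n+1)))
        (i := Fin.last (n+1)) (Finset.notMem_erase _ _)
      have h2 : (∑ j ∈ (univ : Finset (Fin (n+2))).erase (Fin.last (n+1)), X j) = Y := by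
        funext ω
        rw [Finset.sum_apply, erase_last,
          Finset.sum_image (fun a _ b _ hab => Fin.castSucc_injective _ hab)]
      rwa [h2] at h1
    have hsum : (fun ω => ∑ j : Fin (n+2), X j ω) = fun ω => Y ω + Z ω := by
      funext ω
      rw [Fin.sum_univ_castSucc]
    rw [hsum]
    have hpair : Measure.map (fun ω => (Y ω, Z ω)) μ
        = (Measure.map Y μ).prod (Measure.map Z μ) :=
      (indepFun_iff_map_prod_eq_prod_map_map hYmeas.aemeasurable hZmeas.aemeasurable).mp hYZ
    have hcomp : (fun ω => Y ω + Z ω)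
        = (fun p : ℝ × ℝ => p.1 + p.2) ∘ (fun ω => (Y ω, Z ω)) := rfl
    have hfm : Measurable fun x : ℝ => ENNReal.ofReal (if 0 ≤ x then hypoPos w x else 0) :=
      density_measurable (continuous_hypoPos w)
    have hgm : Measurable fun x : ℝ =>
        ENNReal.ofReal (if 0 ≤ x then c * Real.exp (-(c * x)) else 0) :=
      density_measurable (by fun_prop)
    rw [hcomp, ← Measure.map_map measurable_add (hYmeas.prodMk hZmeas), hpair, hmapY,
      hZdef, hlaw _, ← hcdef, map_add_withDensity _ _ hfm hgm]
    congr 1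
    funext z
    rw [kernel_eq w hwpos hwinj c hcpos hcne z, hwdef, hcdef, Fin.snoc_init_self]


/-- If `X₁, …, Xₙ` (`n ≥ 2`) are independent exponential random variables with
pairwise distinct rates `λ₁, …, λₙ > 0` (i.e. `Xⱼ` has density
`λⱼ e^{-λⱼ x}` for `x ≥ 0` and `0` for `x < 0`), then `Sₙ = X₁ + ⋯ + Xₙ` has
density `fₙ(x) = (∏ⱼ λⱼ) ∑ₖ e^{-λₖ x} / ∏_{l ≠ k} (λₗ - λₖ)` for `x ≥ 0`
and `0` for `x < 0`. -/
theorem sum_indep_exponential_density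
    {Ω : Type*} [MeasurableSpace Ω] (μ : Measure Ω) [IsProbabilityMeasure μ]
    (n : ℕ) (hn : 2 ≤ n) (lam : Fin n → ℝ)
    (hpos : ∀ j, 0 < lam j) (hdist : Function.Injective lam)
    (X : Fin n → Ω → ℝ) (hmeas : ∀ j, Measurable (X j))
    (hindep : iIndepFun X μ)
    (hlaw : ∀ j, Measure.map (X j) μ =
      volume.withDensity fun x =>
        ENNReal.ofReal (if 0 ≤ x then lam j * Real.exp (-(lam j * x)) else 0)) :
    Measure.map (fun ω => ∑ j : Fin n, X j ω) μ =
      volume.withDensity fun x =>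
        ENNReal.ofReal (if 0 ≤ x then
          (∏ j : Fin n, lam j) *
            ∑ k : Fin n, Real.exp (-(lam k * x)) /
              ∏ l ∈ Finset.univ.erase k, (lam l - lam k)
        else 0) := by
  obtain ⟨m, rfl⟩ : ∃ m, n = m + 1 := ⟨n - 1, by omega⟩
  exact main_aux m μ lam hpos hdist X hmeas hindep hlaw
end

section
/- Let n ≥ 2, α_i > 0, β_i > 0 for 1 ≤ i ≤ n, with β_1 = min_{1≤i≤n} β_i. Set A = ∑_{i=1}^{n} α_i, γ_l = (1/l) ∑_{i=1}^{n} α_i (1 − β_1/β_i)^l for l ≥ 1, and define δ_0 = 1, δ_{j+1} = (1/(j+1)) ∑_{l=1}^{j+1} l γ_l δ_{j+1−l} for j ≥ 0. Then ∏_{i=1}^{n} (β_1/β_i)^{α_i} · β_1 · ∑_{j=0}^{∞} δ_j (A + j) = ∑_{i=1}^{n} α_i β_i, the series on the left converging. -/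
open Finset Real

open Filter Topology

noncomputable def bb (a : ℝ) : ℕ → ℝ
  | 0 => 1
  | m + 1 => (a + m) / (m + 1) * bb a m

lemma bb_zero (a : ℝ) : bb a 0 = 1 := rfl
lemma bb_succ (a : ℝ) (m : ℕ) : bb a (m + 1) = (a + m) / (m + 1) * bb a m := rfl

lemma bb_pos {a : ℝ} (ha : 0 < a) : ∀ m, 0 < bb a m := by
  intro m
  induction m with
  | zero => norm_num [bb_zero]
  | succ m ih =>
    rw [bb_succ]
    positivity

lemma bb_succ_mul (a : ℝ) (m : ℕ) :
    ((m : ℝ) + 1) * bb a (m + 1) = (a + m) * bb a m := by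
  rw [bb_succ]
  field_simp

lemma tendsto_ratio (a b : ℝ) :
    Tendsto (fun m : ℕ => (a + m) / (b + m)) atTop (𝓝 1) := by
  have hb : Tendsto (fun m : ℕ => b + (m : ℝ)) atTop atTop :=
    tendsto_atTop_add_const_left _ b tendsto_natCast_atTop_atTop
  have hinv : Tendsto (fun m : ℕ => (b + (m : ℝ))⁻¹) atTop (𝓝 0) :=
    hb.inv_tendsto_atTop
  have h1 : Tendsto (fun m : ℕ => 1 + (a - b) * (b + (m : ℝ))⁻¹) atTop (𝓝 1) := by
    have := hinv.const_mul (a - b)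
    have := (tendsto_const_nhds (x := (1:ℝ))).add this
    simpa using this
  apply h1.congr'
  filter_upwards [hb.eventually_gt_atTop 0] with m hm
  field_simp
  ring

lemma summable_bb_pow {a : ℝ} (ha : 0 < a) {y : ℝ} (hy : |y| < 1) :
    Summable (fun m => bb a m * y ^ m) := by
  rcases eq_or_ne y 0 with rfl | hy0
  · apply summable_of_ne_finset_zero (s := {0})
    intro m hm
    simp only [mem_singleton] at hm
    rw [zero_pow hm, mul_zero]
  · have hay : 0 < |y| := abs_pos.2 hy0
    set r : ℝ := (1 + |y|) / 2 with hr
    have hyr : |y| < r := by rw [hr]; linarith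
    have hr1 : r < 1 := by rw [hr]; linarith
    have hrr : 1 < r / |y| := (one_lt_div hay).2 hyr
    apply summable_of_ratio_norm_eventually_le hr1
    filter_upwards [(tendsto_ratio a 1).eventually_lt_const hrr] with m hm
    have h1 : ((m : ℝ) + 1) > 0 := by positivity
    have h2 : (a + m) / (1 + m) ≤ r / |y| := le_of_lt (by simpa using hm)
    have hbm := bb_pos ha m
    have hbm1 := bb_pos ha (m + 1)
    simp only [norm_mul, norm_pow, Real.norm_eq_abs, abs_of_pos hbm, abs_of_pos hbm1, pow_succ]
    have hb1 : bb a (m+1) = (a + m) / (1 + m) * bb a m := by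
      rw [bb_succ]; ring_nf
    rw [hb1]
    calc (a + m) / (1 + m) * bb a m * (|y| ^ m * |y|)
        ≤ r / |y| * bb a m * (|y| ^ m * |y|) := by
          apply mul_le_mul_of_nonneg_right (mul_le_mul_of_nonneg_right h2 hbm.le)
          positivity
      _ = r * (bb a m * |y| ^ m) := by field_simp

lemma summable_bb_deriv {a : ℝ} (ha : 0 < a) {r : ℝ} (hr0 : 0 < r) (hr1 : r < 1) :
    Summable (fun m => bb a m * ((m : ℝ) * r ^ (m - 1))) := by
  set r' : ℝ := (1 + r) / 2 with hr'
  have hrr' : r < r' := by rw [hr']; linarith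
  have hr'1 : r' < 1 := by rw [hr']; linarith
  have hrr : 1 < r' / r := (one_lt_div hr0).2 hrr'
  apply summable_of_ratio_norm_eventually_le hr'1
  have hev : ∀ᶠ m : ℕ in atTop, (a + m) / (0 + m) < r' / r :=
    (tendsto_ratio a 0).eventually_lt_const hrr
  filter_upwards [hev, eventually_ge_atTop 1] with m hm hm1
  have hmpos : (0:ℝ) < m := by exact_mod_cast hm1
  have h2 : (a + m) / m ≤ r' / r := le_of_lt (by simpa using hm)
  have hbm := bb_pos ha m
  have hbm1 := bb_pos ha (m + 1)
  have e1 : bb a (m+1) * (((m:ℕ)+1 : ℝ) * r ^ m) = (a+m) * bb a m * r ^ m := by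
    have h := bb_succ_mul a m
    calc bb a (m+1) * (((m:ℕ)+1 : ℝ) * r ^ m) = (((m:ℝ)+1) * bb a (m+1)) * r ^ m := by ring
      _ = (a+m) * bb a m * r ^ m := by rw [h]
  have key : bb a (m + 1) * (((m+1 : ℕ) : ℝ) * r ^ (m + 1 - 1)) =
      ((a + m) / m) * r * (bb a m * ((m : ℝ) * r ^ (m - 1))) := by
    have hm' : m - 1 + 1 = m := by omega
    have : r ^ m = r ^ (m - 1) * r := by rw [← pow_succ, hm']
    have h3 : m + 1 - 1 = m := by omega
    rw [h3]
    push_cast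
    rw [e1, this]
    field_simp
  rw [Real.norm_eq_abs, Real.norm_eq_abs, key, abs_mul, abs_of_nonneg (by positivity : (0:ℝ) ≤ (a+m)/m * r)]
  apply mul_le_mul_of_nonneg_right
  · calc (a + m) / m * r ≤ r' / r * r := by nlinarith
      _ = r' := by field_simp
  · positivity

lemma bb_hasSum {a : ℝ} (ha : 0 < a) {x : ℝ} (hx0 : 0 ≤ x) (hx1 : x < 1) :
    HasSum (fun m => bb a m * x ^ m) ((1 - x) ^ (-a)) := by
  set r : ℝ := (1 + x) / 2 with hrdef
  have hxr : x < r := by rw [hrdef]; linarith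
  have hr1 : r < 1 := by rw [hrdef]; linarith
  have hr0 : 0 < r := by rw [hrdef]; linarith
  set t : Set ℝ := Set.Ioo (-r) r with htdef
  have hmem : ∀ y ∈ t, |y| < r := fun y hy => abs_lt.2 ⟨hy.1, hy.2⟩
  have h0t : (0:ℝ) ∈ t := ⟨by linarith, hr0⟩
  have hxt : x ∈ t := ⟨by linarith, hxr⟩
  set u : ℕ → ℝ := fun m => bb a m * ((m : ℝ) * r ^ (m - 1)) with hudef
  have hu : Summable u := summable_bb_deriv ha hr0 hr1
  set g : ℕ → ℝ → ℝ := fun m y => bb a m * y ^ m with hgdef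
  set g' : ℕ → ℝ → ℝ := fun m y => bb a m * ((m : ℝ) * y ^ (m - 1)) with hg'def
  have hg : ∀ m y, HasDerivAt (g m) (g' m y) y := fun m y =>
    (hasDerivAt_pow m y).const_mul (bb a m)
  have hbound : ∀ m, ∀ y ∈ t, ‖g' m y‖ ≤ u m := by
    intro m y hy
    have : ‖g' m y‖ = bb a m * ((m:ℝ) * |y| ^ (m-1)) := by
      simp [hg'def, abs_mul, abs_pow, abs_of_pos (bb_pos ha m), abs_of_nonneg (Nat.cast_nonneg (α := ℝ) m)]
    rw [this]
    show bb a m * ((m:ℝ) * |y| ^ (m-1)) ≤ bb a m * ((m:ℝ) * r ^ (m-1))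
    have hyr : |y| ≤ r := (hmem y hy).le
    have hb := (bb_pos ha m).le
    have hmn : (0:ℝ) ≤ (m:ℝ) := Nat.cast_nonneg m
    apply mul_le_mul_of_nonneg_left _ hb
    apply mul_le_mul_of_nonneg_left _ hmn
    exact pow_le_pow_left₀ (abs_nonneg y) hyr _
  have hg0 : Summable fun m => g m 0 := summable_bb_pow ha (by norm_num)
  set S : ℝ → ℝ := fun y => ∑' m, g m y with hSdef
  have hD : ∀ y ∈ t, HasDerivAt S (∑' m, g' m y) y := by
    intro y hy
    exact hasDerivAt_tsum_of_isPreconnected hu isOpen_Ioo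
      ((convex_Ioo _ _).isPreconnected) (fun m z hz => hg m z)
      (fun m z hz => hbound m z hz) h0t hg0 hy
  have hSsum : ∀ y ∈ t, Summable (fun m => g m y) :=
    fun y hy => summable_bb_pow ha (lt_trans (hmem y hy) hr1)
  -- ODE
  have hode : ∀ y ∈ t, (1 - y) * (∑' m, g' m y) = a * S y := by
    intro y hy
    have hc : Summable (fun m => g' m y) :=
      Summable.of_norm_bounded hu (fun m => hbound m y hy)
    have hshift : Summable (fun m => g' (m+1) y) := by
      have := (summable_nat_add_iff 1).2 hc
      exact this
    have h1 : ∑' m, g' m y = ∑' m, g' (m+1) y := by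
      rw [Summable.tsum_eq_zero_add hc]
      simp [hg'def]
    have hterm : ∀ m : ℕ, g' (m+1) y = (a + m) * bb a m * y ^ m := by
      intro m
      have h := bb_succ_mul a m
      simp only [hg'def, Nat.add_sub_cancel]
      push_cast
      calc bb a (m+1) * (((m:ℝ) + 1) * y ^ m) = (((m:ℝ)+1) * bb a (m+1)) * y ^ m := by ring
        _ = (a + m) * bb a m * y ^ m := by rw [h]
    have hys : Summable (fun m : ℕ => ((m:ℝ)) * bb a m * y ^ m) := by
      have : ∀ m : ℕ, ((m:ℝ)) * bb a m * y ^ m = y * g' m y := by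
        intro m
        cases m with
        | zero => simp [hg'def]
        | succ k =>
          simp only [hg'def, Nat.add_sub_cancel]
          push_cast
          ring
      exact (hc.mul_left y).congr (fun m => (this m).symm)
    have hy_tsum : y * (∑' m, g' m y) = ∑' (m : ℕ), ((m:ℝ)) * bb a m * y ^ m := by
      rw [← tsum_mul_left]
      apply tsum_congr
      intro m
      cases m with
      | zero => simp [hg'def]
      | succ k =>
        simp only [hg'def, Nat.add_sub_cancel]
        push_cast
        ring
    have hsum2 : Summable (fun m : ℕ => (a + (m:ℝ)) * bb a m * y ^ m) :=
      hshift.congr (fun m => (hterm m))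
    calc (1 - y) * (∑' m, g' m y) = (∑' m, g' m y) - y * (∑' m, g' m y) := by ring
      _ = (∑' (m : ℕ), (a + (m:ℝ)) * bb a m * y ^ m) - (∑' (m : ℕ), ((m:ℝ)) * bb a m * y ^ m) := by
          rw [hy_tsum, h1, tsum_congr hterm]
      _ = ∑' (m : ℕ), ((a + (m:ℝ)) * bb a m * y ^ m - ((m:ℝ)) * bb a m * y ^ m) := by
          rw [Summable.tsum_sub hsum2 hys]
      _ = ∑' (m : ℕ), a * (bb a m * y ^ m) := by
          apply tsum_congr; intro m; ring
      _ = a * S y := by rw [tsum_mul_left]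
  -- constancy of (1-y)^a * S y on [0, x]
  set F : ℝ → ℝ := fun y => (1 - y) ^ a * S y with hFdef
  have hIcc : Set.Icc (0:ℝ) x ⊆ t := by
    intro y hy
    exact ⟨by linarith [hy.1], by linarith [hy.2]⟩
  have hFderiv : ∀ y ∈ t, HasDerivAt F 0 y := by
    intro y hy
    have hy1 : (0:ℝ) < 1 - y := by linarith [hy.2]
    have h1 : HasDerivAt (fun z : ℝ => 1 - z) (-1) y := by
      simpa using (hasDerivAt_id y).const_sub 1
    have h2 : HasDerivAt (fun z : ℝ => (1 - z) ^ a) (a * (1 - y) ^ (a - 1) * (-1)) y :=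
      (Real.hasDerivAt_rpow_const (Or.inl hy1.ne')).comp y h1
    have h3 := h2.mul (hD y hy)
    refine h3.congr_deriv ?_
    have hpow : (1 - y) ^ a = (1 - y) ^ (a - 1) * (1 - y) := by
      rw [← Real.rpow_add_one hy1.ne' (a - 1)] ; ring_nf
    rw [hpow]
    linear_combination ((1 - y) ^ (a - 1)) * (hode y hy)
  have hcont : ContinuousOn F (Set.Icc 0 x) :=
    fun y hy => (hFderiv y (hIcc hy)).continuousAt.continuousWithinAt
  have hconst : F x = F 0 :=
    constant_of_has_deriv_right_zero hcont
      (fun y hy => (hFderiv y (hIcc ⟨hy.1, hy.2.le⟩)).hasDerivWithinAt) x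
      (Set.right_mem_Icc.2 hx0)
  have hS0 : S 0 = 1 := by
    have h : S 0 = ∑' m, g m 0 := rfl
    rw [h, tsum_eq_single 0 (by intro m hm; show bb a m * (0:ℝ) ^ m = 0; rw [zero_pow hm, mul_zero])]
    show bb a 0 * (0:ℝ) ^ 0 = 1
    simp [bb_zero]
  have hF0 : F 0 = 1 := by
    have h : F 0 = (1 - 0 : ℝ) ^ a * S 0 := rfl
    rw [h, hS0]; norm_num [Real.one_rpow]
  have h1x : (0:ℝ) < 1 - x := by linarith
  have hval : (1 - x) ^ a * S x = 1 := by
    have h : F x = (1 - x) ^ a * S x := rfl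
    rw [← h, hconst, hF0]
  have hSx : S x = (1 - x) ^ (-a) := by
    rw [Real.rpow_neg h1x.le]
    have hpos : (0:ℝ) < (1-x) ^ a := Real.rpow_pos_of_pos h1x a
    field_simp
    linarith [hval]
  have h := (hSsum x hxt).hasSum
  have h2 : (∑' b, g b x) = S x := rfl
  rw [h2, hSx] at h
  exact h

/-- helper: sum over `Icc 1 n` as shifted range sum -/
lemma sum_Icc_one_eq (n : ℕ) (f : ℕ → ℝ) :
    ∑ l ∈ Icc 1 n, f l = ∑ k ∈ range n, f (k + 1) := by
  induction n with
  | zero => simp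
  | succ n ih =>
    rw [Finset.sum_Icc_succ_top (by omega), ih, Finset.sum_range_succ]

/-- helper: shifted Icc sum -/
lemma sum_Icc_shift (l n : ℕ) (f : ℕ → ℝ) :
    ∑ m ∈ Icc l n, f m = ∑ k ∈ range (n + 1 - l), f (l + k) := by
  apply Finset.sum_nbij' (fun m => m - l) (fun k => l + k)
  · intro m hm; simp only [mem_Icc] at hm; simp only [mem_range]; omega
  · intro k hk; simp only [mem_range] at hk; simp only [mem_Icc]; omega
  · intro m hm; simp only [mem_Icc] at hm; omega
  · intro k hk; omega
  · intro m hm; simp only [mem_Icc] at hm; congr 1; omega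

/-- The recursion predicate. -/
def RecP (p : ℕ → ℝ) (c : ℕ → ℝ) : Prop :=
  c 0 = 1 ∧ ∀ j : ℕ, ((j : ℝ) + 1) * c (j + 1) = ∑ l ∈ Icc 1 (j + 1), p l * c (j + 1 - l)

lemma RecP.mul_self {p c : ℕ → ℝ} (h : RecP p c) (m : ℕ) :
    (m : ℝ) * c m = ∑ l ∈ Icc 1 m, p l * c (m - l) := by
  cases m with
  | zero => simp
  | succ j => exact_mod_cast h.2 j

lemma recP_unique {p c d : ℕ → ℝ} (hc : RecP p c) (hd : RecP p d) : c = d := by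
  funext m
  induction m using Nat.strong_induction_on with
  | _ m ih =>
    cases m with
    | zero => rw [hc.1, hd.1]
    | succ j =>
      have h1 := hc.2 j
      have h2 := hd.2 j
      have hs : ∑ l ∈ Icc 1 (j+1), p l * c (j + 1 - l)
          = ∑ l ∈ Icc 1 (j+1), p l * d (j + 1 - l) := by
        apply Finset.sum_congr rfl
        intro l hl
        simp only [mem_Icc] at hl
        rw [ih (j + 1 - l) (by omega)]
      rw [hs] at h1
      have hj : ((j : ℝ) + 1) ≠ 0 := by positivity
      exact mul_left_cancel₀ hj (h1.trans h2.symm)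

/-- convolution -/
def cv (f g : ℕ → ℝ) (j : ℕ) : ℝ := ∑ m ∈ range (j + 1), f m * g (j - m)

lemma cv_comm (f g : ℕ → ℝ) : cv f g = cv g f := by
  funext j
  unfold cv
  rw [← Finset.sum_range_reflect]
  apply Finset.sum_congr rfl
  intro m hm
  simp only [mem_range] at hm
  have h1 : j + 1 - 1 - m = j - m := by omega
  rw [h1, mul_comm]
  congr 2
  omega

lemma cv_nonneg {f g : ℕ → ℝ} (hf : ∀ m, 0 ≤ f m) (hg : ∀ m, 0 ≤ g m) (j : ℕ) :
    0 ≤ cv f g j :=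
  Finset.sum_nonneg fun m _ => mul_nonneg (hf m) (hg _)

/-- key swap lemma -/
lemma key_swap {p c : ℕ → ℝ} (hc : RecP p c) (d : ℕ → ℝ) (j : ℕ) :
    ∑ m ∈ range (j + 2), ((m : ℝ) * c m) * d (j + 1 - m)
      = ∑ l ∈ Icc 1 (j + 1), p l * cv c d (j + 1 - l) := by
  have h1 : ∀ m ∈ range (j + 2), ((m : ℝ) * c m) * d (j + 1 - m)
      = ∑ l ∈ Icc 1 m, p l * c (m - l) * d (j + 1 - m) := by
    intro m hm
    rw [hc.mul_self m, Finset.sum_mul]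
  rw [Finset.sum_congr rfl h1]
  rw [Finset.sum_comm' (t' := Icc 1 (j + 1)) (s' := fun l => Icc l (j + 1))
    (by intro m l
        simp only [mem_range, mem_Icc]
        omega)]
  apply Finset.sum_congr rfl
  intro l hl
  simp only [mem_Icc] at hl
  rw [sum_Icc_shift]
  have hcv : cv c d (j + 1 - l) = ∑ k ∈ range (j + 1 - l + 1), c k * d (j + 1 - l - k) := rfl
  rw [hcv, Finset.mul_sum]
  have hrange : j + 1 + 1 - l = j + 1 - l + 1 := by omega
  rw [hrange]
  apply Finset.sum_congr rfl
  intro k hk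
  simp only [mem_range] at hk
  have e1 : l + k - l = k := by omega
  have e2 : j + 1 - (l + k) = j + 1 - l - k := by omega
  rw [e1, e2]
  ring

lemma recP_conv {p q c d : ℕ → ℝ} (hc : RecP p c) (hd : RecP q d) :
    RecP (fun l => p l + q l) (cv c d) := by
  constructor
  · unfold cv; simp [hc.1, hd.1]
  · intro j
    have expand : ((j : ℝ) + 1) * cv c d (j + 1)
        = ∑ m ∈ range (j + 2), ((m : ℝ) * c m) * d (j + 1 - m)
          + ∑ m ∈ range (j + 2), c m * ((((j + 1 - m : ℕ) : ℝ)) * d (j + 1 - m)) := by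
      unfold cv
      rw [Finset.mul_sum, ← Finset.sum_add_distrib]
      apply Finset.sum_congr rfl
      intro m hm
      simp only [mem_range] at hm
      have : ((j + 1 - m : ℕ) : ℝ) = (j : ℝ) + 1 - m := by
        have : (j + 1 - m : ℕ) = j + 1 - m := rfl
        push_cast [Nat.cast_sub (by omega : m ≤ j + 1)]
        ring
      rw [this]
      ring
    rw [expand]
    have part1 := key_swap hc d j
    have part2 : ∑ m ∈ range (j + 2), c m * ((((j + 1 - m : ℕ) : ℝ)) * d (j + 1 - m))
        = ∑ l ∈ Icc 1 (j + 1), q l * cv c d (j + 1 - l) := by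
      have reflect : ∑ m ∈ range (j + 2), c m * ((((j + 1 - m : ℕ) : ℝ)) * d (j + 1 - m))
          = ∑ m ∈ range (j + 2), ((m : ℝ) * d m) * c (j + 1 - m) := by
        rw [← Finset.sum_range_reflect]
        apply Finset.sum_congr rfl
        intro m hm
        simp only [mem_range] at hm
        have e1 : j + 2 - 1 - m = j + 1 - m := by omega
        have e2 : j + 1 - (j + 1 - m) = m := by omega
        rw [e1, e2]
        ring
      rw [reflect, key_swap hd c j]
      apply Finset.sum_congr rfl
      intro l hl
      rw [cv_comm]
    rw [part1, part2, ← Finset.sum_add_distrib]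
    apply Finset.sum_congr rfl
    intro l hl
    ring

lemma summable_norm_of_nonneg {f : ℕ → ℝ} (hf : ∀ m, 0 ≤ f m) (h : Summable f) :
    Summable fun m => ‖f m‖ :=
  h.congr fun m => by rw [Real.norm_eq_abs, abs_of_nonneg (hf m)]

lemma cv_hasSum {f g : ℕ → ℝ} {F G : ℝ} (hf0 : ∀ m, 0 ≤ f m) (hg0 : ∀ m, 0 ≤ g m)
    (hf : HasSum f F) (hg : HasSum g G) : HasSum (cv f g) (F * G) := by
  have h := hasSum_sum_range_mul_of_summable_norm
    (summable_norm_of_nonneg hf0 hf.summable) (summable_norm_of_nonneg hg0 hg.summable)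
  rwa [hf.tsum_eq, hg.tsum_eq] at h

lemma recP_single (a x : ℝ) : RecP (fun l => a * x ^ l) (fun m => bb a m * x ^ m) := by
  constructor
  · simp [bb_zero]
  · intro j
    induction j with
    | zero =>
      simp only [Icc_self, Finset.sum_singleton]
      norm_num [bb_succ, bb_zero]
    | succ j ih =>
      set c : ℕ → ℝ := fun m => bb a m * x ^ m with hcdef
      have hrw : ∑ l ∈ Icc 1 (j + 1 + 1), (fun l => a * x ^ l) l * c (j + 1 + 1 - l)
          = x * (((j : ℝ) + 1) * c (j + 1)) + a * x * c (j + 1) := by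
        rw [ih]
        rw [sum_Icc_one_eq, sum_Icc_one_eq, Finset.sum_range_succ', Finset.mul_sum]
        simp only []
        congr 1
        · apply Finset.sum_congr rfl
          intro k hk
          simp only [mem_range] at hk
          have e1 : j + 1 + 1 - (k + 1 + 1) = j + 1 - (k + 1) := by omega
          rw [e1]
          ring
        · simp only [hcdef]; norm_num
      rw [hrw]
      have key : ((j : ℝ) + 1 + 1) * bb a (j + 2) = (a + (j + 1)) * bb a (j + 1) := by
        have := bb_succ_mul a (j + 1)
        push_cast at this ⊢
        linarith [this]
      have expand : c (j + 1 + 1) = bb a (j + 2) * (x ^ (j + 1) * x) := by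
        simp only [hcdef]
        rw [pow_succ]
      push_cast
      rw [expand]
      calc ((j:ℝ) + 1 + 1) * (bb a (j + 2) * (x ^ (j+1) * x))
          = (((j:ℝ) + 1 + 1) * bb a (j + 2)) * (x ^ (j+1) * x) := by ring
        _ = ((a + ((j:ℝ) + 1)) * bb a (j + 1)) * (x ^ (j+1) * x) := by rw [key]
        _ = x * (((j : ℝ) + 1) * c (j + 1)) + a * x * c (j + 1) := by
            simp only [hcdef]; ring

/-- main induction over Fin n -/
lemma main_aux_s7 : ∀ (n : ℕ) (a x : Fin n → ℝ), (∀ i, 0 < a i) → (∀ i, 0 ≤ x i) → (∀ i, x i < 1) →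
    ∃ c : ℕ → ℝ, RecP (fun l => ∑ i, a i * x i ^ l) c ∧ (∀ j, 0 ≤ c j) ∧
      HasSum c (∏ i, (1 - x i) ^ (-(a i))) := by
  intro n
  induction n with
  | zero =>
    intro a x _ _ _
    refine ⟨fun j => if j = 0 then 1 else 0, ⟨by simp, ?_⟩, ?_, ?_⟩
    · intro j; simp
    · intro j; positivity
    · simpa using hasSum_ite_eq 0 (1:ℝ)
  | succ n ih =>
    intro a x ha hx0 hx1
    obtain ⟨c, hrec, hcnn, hcsum⟩ :=
      ih (fun i => a i.succ) (fun i => x i.succ) (fun i => ha _) (fun i => hx0 _) (fun i => hx1 _)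
    refine ⟨cv (fun m => bb (a 0) m * x 0 ^ m) c, ?_, ?_, ?_⟩
    · have h := recP_conv (recP_single (a 0) (x 0)) hrec
      have : (fun l => a 0 * x 0 ^ l + ∑ i : Fin n, a i.succ * x i.succ ^ l)
          = fun l => ∑ i : Fin (n + 1), a i * x i ^ l := by
        funext l
        rw [Fin.sum_univ_succ]
      rwa [this] at h
    · exact cv_nonneg (fun m => mul_nonneg (bb_pos (ha 0) m).le (pow_nonneg (hx0 0) m)) hcnn
    · have h := cv_hasSum (fun m => mul_nonneg (bb_pos (ha 0) m).le (pow_nonneg (hx0 0) m))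
        hcnn (bb_hasSum (ha 0) (hx0 0) (hx1 0)) hcsum
      rwa [← Fin.prod_univ_succ (fun i => (1 - x i) ^ (-(a i)))] at h

/-- For `n ≥ 2`, `αᵢ > 0`, `βᵢ > 0` with `β₁ = min βᵢ`, setting `A = ∑ αᵢ`,
`γₗ = (1/l) ∑ᵢ αᵢ (1 - β₁/βᵢ)^l`, `δ₀ = 1` and
`δ_{j+1} = (1/(j+1)) ∑_{l=1}^{j+1} l γₗ δ_{j+1-l}`, the series
`∑ⱼ δⱼ (A + j)` converges and
`∏ᵢ (β₁/βᵢ)^{αᵢ} · β₁ · ∑_{j=0}^∞ δⱼ (A + j) = ∑ᵢ αᵢ βᵢ`. -/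
theorem gamma_sum_mean_identity
    (n : ℕ) (hn : 2 ≤ n) (α β : Fin n → ℝ)
    (hα : ∀ i, 0 < α i) (hβ : ∀ i, 0 < β i)
    (β1 : ℝ) (hβ1 : β1 = β ⟨0, by omega⟩) (hmin : ∀ i, β1 ≤ β i)
    (A : ℝ) (hA : A = ∑ i : Fin n, α i)
    (γ δ : ℕ → ℝ)
    (hγ : ∀ l : ℕ, 1 ≤ l →
      γ l = (∑ i : Fin n, α i * (1 - β1 / β i) ^ l) / l)
    (hδ0 : δ 0 = 1)
    (hδ : ∀ j : ℕ, δ (j + 1) =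
      (1 / (j + 1 : ℝ)) * ∑ l ∈ Finset.Icc 1 (j + 1), (l : ℝ) * γ l * δ (j + 1 - l)) :
    Summable (fun j : ℕ => δ j * (A + j)) ∧
      (∏ i : Fin n, (β1 / β i) ^ (α i)) * β1 * (∑' j : ℕ, δ j * (A + j)) =
        ∑ i : Fin n, α i * β i := by
  have hβ1pos : 0 < β1 := hβ1 ▸ hβ _
  set x : Fin n → ℝ := fun i => 1 - β1 / β i with hxdef
  have hx0 : ∀ i, 0 ≤ x i := by
    intro i
    have : β1 / β i ≤ 1 := (div_le_one (hβ i)).2 (hmin i)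
    simp only [hxdef]; linarith
  have hx1 : ∀ i, x i < 1 := by
    intro i
    have : 0 < β1 / β i := div_pos hβ1pos (hβ i)
    simp only [hxdef]; linarith
  set p : ℕ → ℝ := fun l => ∑ i, α i * x i ^ l with hpdef
  -- δ satisfies RecP p
  have hrecδ : RecP p δ := by
    constructor
    · exact hδ0
    · intro j
      rw [hδ j]
      have hj : ((j : ℝ) + 1) ≠ 0 := by positivity
      rw [← mul_assoc, mul_one_div, div_self hj, one_mul]
      apply Finset.sum_congr rfl
      intro l hl
      simp only [mem_Icc] at hl
      have hl1 : (1:ℕ) ≤ l := hl.1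
      have hlne : ((l:ℝ)) ≠ 0 := by positivity
      rw [hγ l hl1]
      field_simp
      simp only [hpdef, hxdef]
      ring
  obtain ⟨c, hrecc, hcnn, hcsum⟩ := main_aux_s7 n α x hα hx0 hx1
  have hδc : δ = c := recP_unique hrecδ hrecc
  subst hδc
  set T : ℝ := ∏ i, (1 - x i) ^ (-(α i)) with hTdef
  -- the auxiliary convolutions
  set e : Fin n → ℕ → ℝ := fun i => cv (fun m => x i ^ m) δ with hedef
  have hgeo : ∀ i : Fin n, Summable (fun m => x i ^ m) :=
    fun i => summable_geometric_of_lt_one (hx0 i) (hx1 i)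
  have hsum_e : ∀ i, Summable (e i) := by
    intro i
    exact (summable_norm_sum_mul_range_of_summable_norm
      (summable_norm_of_nonneg (fun m => pow_nonneg (hx0 i) m) (hgeo i))
      (summable_norm_of_nonneg hcnn hcsum.summable)).of_norm
  have htsum_e : ∀ i, ∑' j, e i j = (1 - x i)⁻¹ * T := by
    intro i
    have h := tsum_mul_tsum_eq_tsum_sum_range_of_summable_norm
      (summable_norm_of_nonneg (fun m => pow_nonneg (hx0 i) m) (hgeo i))
      (summable_norm_of_nonneg hcnn hcsum.summable)
    rw [tsum_geometric_of_lt_one (hx0 i) (hx1 i), hcsum.tsum_eq] at h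
    exact h.symm
  -- key identity
  have hid : ∀ j, δ j * (A + j) = ∑ i, α i * e i j := by
    intro j
    cases j with
    | zero =>
      have he0 : ∀ i : Fin n, e i 0 = 1 := by
        intro i
        show ∑ m ∈ range 1, x i ^ m * δ (0 - m) = 1
        simp [hrecδ.1]
      simp only [he0, Nat.cast_zero, add_zero, hrecδ.1, one_mul, mul_one]
      exact hA
    | succ j =>
      have hsplit : ∀ i : Fin n, e i (j + 1)
          = δ (j + 1) + ∑ l ∈ Icc 1 (j + 1), x i ^ l * δ (j + 1 - l) := by
        intro i
        show ∑ m ∈ range (j + 2), x i ^ m * δ (j + 1 - m) = _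
        rw [Finset.sum_range_succ', sum_Icc_one_eq]
        simp only [pow_zero, one_mul, Nat.sub_zero]
        ring
      have hrec2 := hrecδ.2 j
      calc δ (j + 1) * (A + ((j:ℕ) + 1 : ℕ)) = A * δ (j + 1) + (((j:ℝ)) + 1) * δ (j + 1) := by
            push_cast; ring
        _ = (∑ i, α i) * δ (j + 1) + ∑ l ∈ Icc 1 (j + 1), p l * δ (j + 1 - l) := by
            rw [hrec2, hA]
        _ = ∑ i, α i * δ (j + 1) + ∑ l ∈ Icc 1 (j + 1), ∑ i, α i * (x i ^ l * δ (j + 1 - l)) := by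
            rw [Finset.sum_mul]
            congr 1
            apply Finset.sum_congr rfl
            intro l _
            rw [hpdef]
            simp only [Finset.sum_mul]
            apply Finset.sum_congr rfl
            intro i _
            ring
        _ = ∑ i, α i * δ (j + 1) + ∑ i, ∑ l ∈ Icc 1 (j + 1), α i * (x i ^ l * δ (j + 1 - l)) := by
            rw [Finset.sum_comm]
        _ = ∑ i, α i * e i (j + 1) := by
            rw [← Finset.sum_add_distrib]
            apply Finset.sum_congr rfl
            intro i _
            rw [hsplit i, mul_add, Finset.mul_sum]
  -- summability
  have hsummable : Summable (fun j : ℕ => δ j * (A + j)) := by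
    apply Summable.congr _ (fun j => (hid j).symm)
    exact summable_sum (fun i _ => (hsum_e i).mul_left (α i))
  refine ⟨hsummable, ?_⟩
  -- compute the tsum
  have htsum : ∑' j : ℕ, δ j * (A + j) = ∑ i, α i * ((1 - x i)⁻¹ * T) := by
    rw [tsum_congr hid, Summable.tsum_finsetSum (fun i _ => (hsum_e i).mul_left (α i))]
    apply Finset.sum_congr rfl
    intro i _
    rw [tsum_mul_left, htsum_e i]
  rw [htsum]
  -- final algebra
  have h1x : ∀ i, 1 - x i = β1 / β i := by intro i; simp [hxdef]
  have hT : T = (∏ i, (β1 / β i) ^ (α i))⁻¹ := by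
    rw [hTdef, ← Finset.prod_inv_distrib]
    apply Finset.prod_congr rfl
    intro i _
    rw [h1x i, Real.rpow_neg (le_of_lt (div_pos hβ1pos (hβ i)))]
  set P : ℝ := ∏ i, (β1 / β i) ^ (α i) with hPdef
  have hPpos : 0 < P :=
    Finset.prod_pos fun i _ => Real.rpow_pos_of_pos (div_pos hβ1pos (hβ i)) _
  rw [hT, Finset.mul_sum]
  apply Finset.sum_congr rfl
  intro i _
  rw [h1x i]
  have hβi := hβ i
  field_simp
end

section
/- Let n ≥ 2, m ≥ 1 an integer, α_i > 0, β_i > 0 for 1 ≤ i ≤ n, with β_1 = min_{1≤i≤n} β_i. Set A = ∑_{i=1}^{n} α_i, γ_l = (1/l) ∑_{i=1}^{n} α_i (1 − β_1/β_i)^l for l ≥ 1, and define δ_0 = 1, δ_{j+1} = (1/(j+1)) ∑_{l=1}^{j+1} l γ_l δ_{j+1−l} for j ≥ 0. Then ∏_{i=1}^{n} (β_1/β_i)^{α_i} · β_1^m · ∑_{j=0}^{∞} δ_j · Γ(A+j+m)/Γ(A+j) = ∑_{i_1 + ⋯ + i_n = m} (m!/(i_1! ⋯ i_n!)) · ∏_{k=1}^{n}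 (Γ(α_k + i_k)/Γ(α_k)) β_k^{i_k}, where the right sum ranges over all n-tuples of nonnegative integers summing to m, and the series on the left converges. -/
open Finset Real Filter PowerSeries

set_option maxHeartbeats 1000000




noncomputable def poch (x : ℝ) (s : ℕ) : ℝ := (ascPochhammer ℝ s).eval x

lemma poch_zero (x : ℝ) : poch x 0 = 1 := by simp [poch]

lemma poch_succ (x : ℝ) (s : ℕ) : poch x (s + 1) = poch x s * (x + s) := by
  simp [poch, ascPochhammer_succ_right, Polynomial.eval_mul]

lemma poch_succ' (x : ℝ) (s : ℕ) : poch x (s + 1) = x * poch (x + 1) s := by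
  simp [poch, ascPochhammer_succ_left, Polynomial.eval_mul, Polynomial.eval_comp]

lemma poch_pos {x : ℝ} (hx : 0 < x) (s : ℕ) : 0 < poch x s := by
  induction s with
  | zero => simp [poch_zero]
  | succ s ih => rw [poch_succ]; positivity

lemma poch_add (x : ℝ) (s f : ℕ) : poch x (s + f) = poch x s * poch (x + s) f := by
  have := congrArg (Polynomial.eval x) (ascPochhammer_mul (S := ℝ) s f)
  simpa [poch, Polynomial.eval_mul, Polynomial.eval_comp] using this.symm

lemma poch_swap (x : ℝ) (s f : ℕ) :
    poch x s * poch (x + s) f = poch x f * poch (x + f) s := by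
  rw [← poch_add, ← poch_add, Nat.add_comm]

lemma Gamma_poch {x : ℝ} (hx : 0 < x) (s : ℕ) :
    Real.Gamma (x + s) = poch x s * Real.Gamma x := by
  induction s with
  | zero => simp [poch_zero]
  | succ s ih =>
    have h1 : x + (s + 1 : ℕ) = (x + s) + 1 := by push_cast; ring
    rw [h1, Real.Gamma_add_one (by positivity), ih, poch_succ]; ring


noncomputable def bino (x : ℝ) (s : ℕ) : ℝ := poch x s / (s.factorial : ℝ)

lemma bino_pos {x : ℝ} (hx : 0 < x) (s : ℕ) : 0 < bino x s := by
  have := poch_pos hx s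
  have h2 : (0:ℝ) < s.factorial := by positivity
  exact div_pos this h2

lemma bino_zero (x : ℝ) : bino x 0 = 1 := by simp [bino, poch_zero]

lemma bino_succ_mul (x : ℝ) (s : ℕ) :
    ((s:ℝ) + 1) * bino x (s + 1) = (x + s) * bino x s := by
  have hs : (s.factorial : ℝ) ≠ 0 := by positivity
  rw [bino, bino, poch_succ, Nat.factorial_succ]
  push_cast
  field_simp

lemma bino_succ_mul' (x : ℝ) (s : ℕ) :
    ((s:ℝ) + 1) * bino x (s + 1) = x * bino (x + 1) s := by
  have hs : (s.factorial : ℝ) ≠ 0 := by positivity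
  rw [bino, bino, poch_succ', Nat.factorial_succ]
  push_cast
  field_simp

lemma summable_bino {x : ℝ} (hx : 0 < x) {r : ℝ} (h0 : 0 ≤ r) (h1 : r < 1) :
    Summable (fun s : ℕ => bino x s * r ^ s) := by
  set l : ℝ := (1 + r) / 2 with hl
  have hrl : r < l := by rw [hl]; linarith
  have hl1 : l < 1 := by rw [hl]; linarith
  apply summable_of_ratio_norm_eventually_le hl1
  have htend : Tendsto (fun s : ℕ => (x + s) / (s + 1) * r) atTop (nhds r) := by
    have h2 : Tendsto (fun s : ℕ => (x - 1) / ((s:ℝ) + 1)) atTop (nhds 0) := by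
      have := (tendsto_const_div_atTop_nhds_zero_nat (x - 1)).comp
        (tendsto_add_atTop_nat 1)
      have he : ((fun n : ℕ => (x - 1) / (n:ℝ)) ∘ fun a => a + 1)
          = fun s : ℕ => (x - 1) / ((s:ℝ) + 1) := by
        funext s; simp [Function.comp]
      simpa [he] using this
    have h3 : Tendsto (fun s : ℕ => (1 + (x - 1) / ((s:ℝ) + 1)) * r) atTop
        (nhds ((1 + 0) * r)) := ((tendsto_const_nhds.add h2).mul tendsto_const_nhds)
    have h4 : (fun s : ℕ => (1 + (x - 1) / ((s:ℝ) + 1)) * r)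
        = fun s : ℕ => (x + s) / (s + 1) * r := by
      funext s
      have hne : ((s:ℝ) + 1) ≠ 0 := by positivity
      have h5 : (1 + (x - 1) / ((s:ℝ) + 1)) = (x + s) / ((s:ℝ) + 1) := by
        field_simp; ring
      rw [h5]
    rw [h4] at h3
    simpa using h3
  have hev : ∀ᶠ s : ℕ in atTop, (x + s) / (s + 1) * r ≤ l :=
    htend.eventually_le_const hrl
  filter_upwards [hev] with s hs
  have hb := bino_pos hx s
  have hb1 := bino_pos hx (s + 1)
  have hrs : (0:ℝ) ≤ r ^ s := by positivity
  have key : bino x (s + 1) * r ^ (s + 1) = ((x + s) / (s + 1) * r) * (bino x s * r ^ s) := by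
    have hs1 : ((s:ℝ) + 1) ≠ 0 := by positivity
    have := bino_succ_mul x s
    have hb2 : bino x (s + 1) = (x + s) * bino x s / ((s:ℝ) + 1) := by
      field_simp at this ⊢; linarith [this]
    rw [hb2, pow_succ]
    field_simp
  rw [Real.norm_eq_abs, Real.norm_eq_abs, abs_of_nonneg (by positivity),
    abs_of_nonneg (by positivity), key]
  apply mul_le_mul_of_nonneg_right hs (by positivity)


theorem hasSum_bino {x : ℝ} (hx : 0 < x) {c : ℝ} (h0 : 0 ≤ c) (h1 : c < 1) :
    HasSum (fun s : ℕ => bino x s * c ^ s) ((1 - c) ^ (-x)) := by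
  have hx1 : (0:ℝ) < x + 1 := by linarith
  set r : ℝ := (1 + c) / 2 with hr
  have hcr : c < r := by rw [hr]; linarith
  have hr1 : r < 1 := by rw [hr]; linarith
  have hr0 : 0 < r := by rw [hr]; linarith
  set u : ℕ → ℝ := fun s => if s = 0 then (0:ℝ) else x * bino (x + 1) (s - 1) * r ^ (s - 1)
    with hu
  have hu0 : u 0 = 0 := rfl
  have huS : ∀ t : ℕ, u (t + 1) = x * bino (x + 1) t * r ^ t := by
    intro t; simp [hu]
  have husum : Summable u := by
    rw [← summable_nat_add_iff 1]
    simp only [huS]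
    simpa [mul_assoc] using (summable_bino hx1 hr0.le hr1).mul_left x
  set g : ℕ → ℝ → ℝ := fun s y => bino x s * y ^ s with hg
  set g' : ℕ → ℝ → ℝ := fun s y => bino x s * (s * y ^ (s - 1)) with hg'
  have hderiv : ∀ s y, HasDerivAt (g s) (g' s y) y := fun s y =>
    (hasDerivAt_pow s y).const_mul (bino x s)
  have hg'succ : ∀ t (y : ℝ), g' (t + 1) y = x * bino (x + 1) t * y ^ t := by
    intro t y
    have h2 := bino_succ_mul' x t
    simp only [hg', Nat.add_sub_cancel]
    push_cast
    rw [← h2]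
    ring
  have hg'nonneg : ∀ s (y : ℝ), 0 ≤ y → 0 ≤ g' s y := by
    intro s y hy
    simp only [hg']
    have := (bino_pos hx s).le
    positivity
  have hbound : ∀ s (y : ℝ), |y| ≤ r → ‖g' s y‖ ≤ u s := by
    intro s y hy
    match s with
    | 0 => simp [hg', hu0]
    | t + 1 =>
      rw [hg'succ, huS]
      have hb : 0 < bino (x + 1) t := bino_pos hx1 t
      rw [Real.norm_eq_abs, abs_mul, abs_mul, abs_pow]
      rw [abs_of_pos hx, abs_of_pos hb]
      have h5 : |y| ^ t ≤ r ^ t := pow_le_pow_left₀ (abs_nonneg y) hy t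
      have : (0:ℝ) ≤ x * bino (x + 1) t := by positivity
      exact mul_le_mul_of_nonneg_left h5 this
  have hmemr : ∀ y : ℝ, y ∈ Set.Ioo (-r) r → |y| ≤ r := by
    intro y hy
    rw [abs_le]
    exact ⟨hy.1.le, hy.2.le⟩
  have hsummand : ∀ y : ℝ, |y| ≤ r → Summable (fun s => g s y) := by
    intro y hy
    have hnorm : Summable (fun s => ‖g s y‖) := by
      refine Summable.of_nonneg_of_le (fun s => norm_nonneg _) ?_
        (summable_bino hx hr0.le hr1)
      intro s
      simp only [hg, Real.norm_eq_abs, abs_mul, abs_pow,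
        abs_of_pos (bino_pos hx s)]
      exact mul_le_mul_of_nonneg_left (pow_le_pow_left₀ (abs_nonneg y) hy s)
        (bino_pos hx s).le
    exact hnorm.of_norm
  have HD : ∀ y ∈ Set.Ioo (-r) r,
      HasDerivAt (fun z => ∑' s, g s z) (∑' s, g' s y) y := by
    intro y hy
    exact hasDerivAt_tsum_of_isPreconnected husum isOpen_Ioo
      (convex_Ioo _ _).isPreconnected
      (fun s z _ => hderiv s z) (fun s z hz => hbound s z (hmemr z hz))
      (Set.mem_Ioo.2 ⟨by linarith, hr0⟩)
      (hsummand 0 (by rw [abs_zero]; exact hr0.le)) hy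
  set h : ℝ → ℝ := fun y => ∑' s, g s y with hh
  have ODE : ∀ y : ℝ, 0 ≤ y → y < r → (1 - y) * (∑' s, g' s y) = x * h y := by
    intro y hy0 hyr
    have hyabs : |y| ≤ r := by rw [abs_of_nonneg hy0]; exact hyr.le
    have Sd : Summable (fun s => g' s y) := by
      apply Summable.of_nonneg_of_le (fun s => hg'nonneg s y hy0)
        (fun s => by
          have := hbound s y hyabs
          rwa [Real.norm_eq_abs, abs_of_nonneg (hg'nonneg s y hy0)] at this)
        husum
    set T : ℝ := ∑' s, g' s y with hT
    have HdT : HasSum (fun s => g' s y) T := Sd.hasSum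
    have hg'0 : g' 0 y = 0 := by simp [hg']
    have Hshift : HasSum (fun t => g' (t + 1) y) T := by
      have h6 : HasSum (fun s => g' s y) (T + ∑ i ∈ range 1, g' i y) := by
        simpa [hg'0] using HdT
      exact (hasSum_nat_add_iff 1).2 h6
    have Hh : HasSum (fun t => g t y) (h y) := (hsummand y hyabs).hasSum
    have key : ∀ t : ℕ, g' (t + 1) y = x * g t y + y * g' t y := by
      intro t
      rw [hg'succ]
      have h7 : x * bino (x + 1) t = (x + t) * bino x t := by
        rw [← bino_succ_mul, bino_succ_mul']
      rw [h7]
      simp only [hg, hg']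
      match t with
      | 0 => push_cast; ring
      | v + 1 =>
        rw [Nat.add_sub_cancel]
        push_cast
        ring
    have H2 : HasSum (fun t => x * g t y + y * g' t y) (x * h y + y * T) :=
      (Hh.mul_left x).add (HdT.mul_left y)
    have H3 : HasSum (fun t => g' (t + 1) y) (x * h y + y * T) := by
      simpa only [key] using H2
    have := Hshift.unique H3
    linarith [this]
  -- the function (1-y)^x * h y has zero derivative on [0,c]
  have Hphi : ∀ y ∈ Set.Icc 0 c, HasDerivAt (fun z => (1 - z) ^ x * h z) 0 y := by
    intro y hy
    obtain ⟨hy0, hyc⟩ := hy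
    have hyr : y < r := lt_of_le_of_lt hyc hcr
    have h1y : 0 < 1 - y := by linarith
    have hb : HasDerivAt (fun z : ℝ => 1 - z) (-1) y := (hasDerivAt_id y).const_sub 1
    have A1 : HasDerivAt (fun z : ℝ => (1 - z) ^ x) (-1 * x * (1 - y) ^ (x - 1)) y :=
      hb.rpow_const (Or.inl h1y.ne')
    have A2 : HasDerivAt h (∑' s, g' s y) y :=
      HD y (Set.mem_Ioo.2 ⟨by linarith, hyr⟩)
    have A3 := A1.mul A2
    have hval : -1 * x * (1 - y) ^ (x - 1) * h y + (1 - y) ^ x * (∑' s, g' s y) = 0 := by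
      have hpow : (1 - y) ^ x = (1 - y) ^ (x - 1) * (1 - y) := by
        have h9 := Real.rpow_add_one h1y.ne' (x - 1)
        rw [sub_add_cancel] at h9
        exact h9
      rw [hpow]
      have hode := ODE y hy0 hyr
      linear_combination ((1 - y) ^ (x - 1)) * hode
    rw [hval] at A3
    exact A3
  have hconst : (1 - c) ^ x * h c = 1 := by
    have hcc := constant_of_has_deriv_right_zero
      (f := fun z => (1 - z) ^ x * h z) (a := 0) (b := c)
      (fun y hy => ((Hphi y hy).continuousAt).continuousWithinAt)
      (fun y hy => ((Hphi y (Set.mem_Icc_of_Ico hy)).hasDerivWithinAt))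
      c (Set.mem_Icc.2 ⟨h0, le_refl c⟩)
    have hh0 : h 0 = 1 := by
      have hz : ∀ s : ℕ, s ≠ 0 → g s 0 = 0 := by
        intro s hs
        simp [hg, zero_pow hs]
      show (∑' s, g s 0) = 1
      rw [tsum_eq_single 0 hz]
      simp [hg, bino_zero]
    simp only [sub_zero, Real.one_rpow, one_mul] at hcc
    rw [hh0] at hcc
    exact hcc
  have hpos : (0:ℝ) < (1 - c) ^ x := Real.rpow_pos_of_pos (by linarith) x
  have hc : h c = (1 - c) ^ (-x) := by
    rw [Real.rpow_neg (by linarith)]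
    field_simp at hconst ⊢
    linarith [hconst]
  have hfin := (hsummand c (by rw [abs_of_nonneg h0]; exact hcr.le)).hasSum
  have hfin2 : HasSum (fun s : ℕ => bino x s * c ^ s) (h c) := by
    simpa only [hg] using hfin
  rwa [hc] at hfin2


lemma bino_one (x : ℝ) : bino x 1 = x := by
  have h := bino_succ_mul x 0
  simp [bino_zero] at h
  simpa using h

noncomputable def Pser (a ci : ℝ) : PowerSeries ℝ := PowerSeries.mk (fun s => bino a s * ci ^ s)
noncomputable def Eser (ci : ℝ) : PowerSeries ℝ := PowerSeries.mk (fun s => ci ^ s)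

lemma E_unit (ci : ℝ) : (1 - PowerSeries.C ci * X) * Eser ci = 1 := by
  have expand : (1 - PowerSeries.C ci * X) * Eser ci
      = Eser ci - PowerSeries.C ci * (X * Eser ci) := by ring
  rw [expand]
  ext k
  rcases k with _ | k
  · simp [Eser, coeff_mk]
  · simp only [map_sub, coeff_C_mul, coeff_succ_X_mul, Eser, coeff_mk,
      PowerSeries.coeff_one, Nat.succ_ne_zero, if_false]
    rw [pow_succ]
    ring

lemma P_deriv (a ci : ℝ) :
    (1 - PowerSeries.C ci * X) * (d⁄dX ℝ (Pser a ci))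
      = PowerSeries.C (a * ci) * Pser a ci := by
  have expand : (1 - PowerSeries.C ci * X) * (d⁄dX ℝ (Pser a ci))
      = d⁄dX ℝ (Pser a ci) - PowerSeries.C ci * (X * d⁄dX ℝ (Pser a ci)) := by ring
  rw [expand]
  ext k
  rcases k with _ | k
  · simp only [map_sub, coeff_C_mul, coeff_derivative, Pser, coeff_mk,
      coeff_zero_eq_constantCoeff_apply, map_mul, constantCoeff_X, mul_zero, sub_zero]
    simp [bino_one, bino_zero]
  · simp only [map_sub, coeff_C_mul, coeff_succ_X_mul, coeff_derivative, Pser, coeff_mk]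
    have h := bino_succ_mul a (k + 1)
    push_cast at h ⊢
    linear_combination (ci ^ (k + 2)) * h


lemma P_deriv' (a ci : ℝ) :
    d⁄dX ℝ (Pser a ci) = PowerSeries.C (a * ci) * Eser ci * Pser a ci := by
  have h1 := E_unit ci
  calc d⁄dX ℝ (Pser a ci) = 1 * d⁄dX ℝ (Pser a ci) := (one_mul _).symm
    _ = ((1 - PowerSeries.C ci * X) * Eser ci) * d⁄dX ℝ (Pser a ci) := by rw [h1]
    _ = Eser ci * ((1 - PowerSeries.C ci * X) * d⁄dX ℝ (Pser a ci)) := by ring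
    _ = Eser ci * (PowerSeries.C (a * ci) * Pser a ci) := by rw [P_deriv]
    _ = PowerSeries.C (a * ci) * Eser ci * Pser a ci := by ring

lemma prod_deriv {ι : Type*} [DecidableEq ι] (s : Finset ι) (a cc : ι → ℝ) :
    d⁄dX ℝ (∏ i ∈ s, Pser (a i) (cc i))
      = (∑ i ∈ s, PowerSeries.C (a i * cc i) * Eser (cc i)) * ∏ i ∈ s, Pser (a i) (cc i) := by
  induction s using Finset.induction_on with
  | empty => simp
  | insert b t hx ih =>
    rw [Finset.prod_insert hx, Finset.sum_insert hx]
    rw [Derivation.leibniz]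
    simp only [smul_eq_mul]
    rw [ih, P_deriv']
    ring

lemma coeff_rec {ι : Type*} [DecidableEq ι] (s : Finset ι) (a cc : ι → ℝ) (k : ℕ) :
    PowerSeries.coeff (k + 1) (∏ i ∈ s, Pser (a i) (cc i)) * ((k : ℝ) + 1)
      = ∑ l ∈ Finset.Icc 1 (k + 1), (∑ i ∈ s, a i * cc i ^ l) *
          PowerSeries.coeff (k + 1 - l) (∏ i ∈ s, Pser (a i) (cc i)) := by
  have h := congrArg (PowerSeries.coeff k) (prod_deriv s a cc)
  rw [coeff_derivative, PowerSeries.coeff_mul] at h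
  push_cast at h
  rw [h]
  rw [Finset.Nat.sum_antidiagonal_eq_sum_range_succ_mk]
  rw [← Finset.Ico_add_one_right_eq_Icc, Finset.sum_Ico_eq_sum_range]
  have h3 : k + 1 + 1 - 1 = k + 1 := by omega
  rw [h3]
  apply Finset.sum_congr rfl
  intro i hi
  rw [Finset.mem_range] at hi
  have h2 : k + 1 - (1 + i) = k - i := by omega
  rw [h2]
  congr 1
  rw [map_sum]
  apply Finset.sum_congr rfl
  intro j _
  rw [coeff_C_mul]
  simp only [Eser, coeff_mk]
  rw [pow_add, pow_one]
  ring

lemma delta_unique {n : ℕ} (a cc : Fin n → ℝ) (δ : ℕ → ℝ) (hδ0 : δ 0 = 1)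
    (hδ : ∀ j : ℕ, δ (j + 1) = (1 / ((j:ℝ) + 1)) *
      ∑ l ∈ Finset.Icc 1 (j + 1), (∑ i : Fin n, a i * cc i ^ l) * δ (j + 1 - l)) :
    ∀ j : ℕ, δ j = PowerSeries.coeff j (∏ i : Fin n, Pser (a i) (cc i)) := by
  intro j
  induction j using Nat.strong_induction_on with
  | _ j ih =>
    match j with
    | 0 =>
      rw [hδ0]
      rw [coeff_zero_eq_constantCoeff_apply, map_prod]
      have : ∀ i : Fin n, constantCoeff (Pser (a i) (cc i)) = 1 := by
        intro i
        rw [← coeff_zero_eq_constantCoeff_apply]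
        simp [Pser, coeff_mk, bino_zero]
      simp [this]
    | j + 1 =>
      rw [hδ j]
      have hrec := coeff_rec (Finset.univ : Finset (Fin n)) a cc j
      have hne : ((j:ℝ) + 1) ≠ 0 := by positivity
      have hsum : ∑ l ∈ Finset.Icc 1 (j + 1), (∑ i : Fin n, a i * cc i ^ l) * δ (j + 1 - l)
          = ∑ l ∈ Finset.Icc 1 (j + 1), (∑ i : Fin n, a i * cc i ^ l) *
              PowerSeries.coeff (j + 1 - l) (∏ i : Fin n, Pser (a i) (cc i)) := by
        apply Finset.sum_congr rfl
        intro l hl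
        rw [Finset.mem_Icc] at hl
        rw [ih (j + 1 - l) (by omega)]
      rw [hsum, ← hrec]
      field_simp

lemma antidiagonalTuple_eq_finsuppAntidiag (n j : ℕ) (F : (Fin n → ℕ) → ℝ) :
    ∑ l ∈ Finset.finsuppAntidiag (Finset.univ : Finset (Fin n)) j, F ⇑l
      = ∑ k ∈ Finset.Nat.antidiagonalTuple n j, F k := by
  apply Finset.sum_nbij' (i := fun l => (fun i => l i))
    (j := fun g => Finsupp.equivFunOnFinite.symm g)
  · intro l hl
    rw [Finset.mem_finsuppAntidiag] at hl
    rw [Finset.Nat.mem_antidiagonalTuple]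
    exact hl.1
  · intro g hg
    rw [Finset.Nat.mem_antidiagonalTuple] at hg
    rw [Finset.mem_finsuppAntidiag]
    constructor
    · simpa using hg
    · simp
  · intro l _
    exact Finsupp.equivFunOnFinite_symm_coe l
  · intro g _
    rfl
  · intro l _
    rfl

lemma coeff_prod_tuple {n : ℕ} (a cc : Fin n → ℝ) (j : ℕ) :
    PowerSeries.coeff j (∏ i : Fin n, Pser (a i) (cc i))
      = ∑ k ∈ Finset.Nat.antidiagonalTuple n j,
          ∏ i : Fin n, (bino (a i) (k i) * cc i ^ (k i)) := by
  rw [PowerSeries.coeff_prod]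
  rw [← antidiagonalTuple_eq_finsuppAntidiag n j
    (fun k => ∏ i : Fin n, (bino (a i) (k i) * cc i ^ (k i)))]
  apply Finset.sum_congr rfl
  intro l _
  apply Finset.prod_congr rfl
  intro i _
  simp [Pser, coeff_mk]



lemma coeff_Pser (a ci : ℝ) (j : ℕ) :
    PowerSeries.coeff j (Pser a ci) = bino a j * ci ^ j := by
  simp [Pser, coeff_mk]

lemma bino_sum_eq {N : ℕ} (x : Fin N → ℝ) (j : ℕ) :
    bino (∑ i, x i) j = PowerSeries.coeff j (∏ i : Fin N, Pser (x i) 1) := by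
  induction j using Nat.strong_induction_on with
  | _ j ih =>
    match j with
    | 0 =>
      rw [bino_zero, coeff_zero_eq_constantCoeff_apply, map_prod]
      have : ∀ i : Fin N, constantCoeff (Pser (x i) 1) = 1 := by
        intro i
        rw [← coeff_zero_eq_constantCoeff_apply, coeff_Pser]
        simp [bino_zero]
      simp [this]
    | j + 1 =>
      have h1 := coeff_rec (Finset.univ : Finset (Fin N)) x (fun _ => 1) j
      have h2 := coeff_rec (Finset.univ : Finset (Fin 1)) (fun _ => ∑ i, x i) (fun _ => 1) j
      have hone : (∏ i : Fin 1, Pser (∑ i, x i) 1) = Pser (∑ i, x i) 1 := by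
        rw [Fin.prod_univ_one]
      rw [hone] at h2
      simp only [coeff_Pser, one_pow, mul_one] at h2
      simp only [one_pow, mul_one] at h1
      simp only [Fin.sum_univ_one] at h2
      have hIH : ∑ l ∈ Finset.Icc 1 (j + 1), (∑ i, x i) * bino (∑ i, x i) (j + 1 - l)
          = ∑ l ∈ Finset.Icc 1 (j + 1), (∑ i, x i) *
              PowerSeries.coeff (j + 1 - l) (∏ i : Fin N, Pser (x i) 1) := by
        apply Finset.sum_congr rfl
        intro l hl
        rw [Finset.mem_Icc] at hl
        rw [ih (j + 1 - l) (by omega)]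
      have hne : ((j:ℝ) + 1) ≠ 0 := by positivity
      have := h2.trans (hIH.trans h1.symm)
      exact mul_right_cancel₀ hne this

theorem vandermonde_poch {N : ℕ} (x : Fin N → ℝ) (m : ℕ) :
    poch (∑ i, x i) m = ∑ f ∈ Finset.Nat.antidiagonalTuple N m,
      (Nat.multinomial Finset.univ f : ℝ) * ∏ i, poch (x i) (f i) := by
  have h1 := bino_sum_eq x m
  rw [coeff_prod_tuple] at h1
  have h2 : poch (∑ i, x i) m = (m.factorial : ℝ) * bino (∑ i, x i) m := by
    rw [bino]
    have : (m.factorial : ℝ) ≠ 0 := by positivity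
    field_simp
  rw [h2, h1, Finset.mul_sum]
  apply Finset.sum_congr rfl
  intro f hf
  rw [Finset.Nat.mem_antidiagonalTuple] at hf
  simp only [one_pow, mul_one]
  have hprod : ∏ i, bino (x i) (f i) = (∏ i, poch (x i) (f i)) / (∏ i, ((f i).factorial : ℝ)) := by
    rw [← Finset.prod_div_distrib]
    rfl
  rw [hprod]
  have hspec := Nat.multinomial_spec Finset.univ f
  have hfact : (0:ℝ) < ∏ i, ((f i).factorial : ℝ) := by positivity
  have hcast : (∏ i, ((f i).factorial : ℝ)) * (Nat.multinomial Finset.univ f : ℝ)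
      = (m.factorial : ℝ) := by
    rw [← Nat.cast_prod, ← Nat.cast_mul, hspec, hf]
  field_simp
  linarith [congrArg (fun z => z * ∏ i, poch (x i) (f i)) hcast]


lemma hasSum_pi_prod : ∀ {n : ℕ} (g : Fin n → ℕ → ℝ) (S : Fin n → ℝ),
    (∀ i, HasSum (g i) (S i)) → (∀ i s, 0 ≤ g i s) →
    HasSum (fun k : Fin n → ℕ => ∏ i, g i (k i)) (∏ i, S i) := by
  intro n
  induction n with
  | zero =>
    intro g S _ _
    have h := hasSum_single (f := fun k : Fin 0 → ℕ => ∏ i : Fin 0, g i (k i))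
      (default : Fin 0 → ℕ) (fun b hb => absurd (Subsingleton.elim b default) hb)
    simpa using h
  | succ n ih =>
    intro g S hg hpos
    have h0 := hg 0
    have ihs := ih (fun i => g i.succ) (fun i => S i.succ) (fun i => hg i.succ)
      (fun i s => hpos i.succ s)
    have hsummable : Summable (fun x : ℕ × (Fin n → ℕ) =>
        g 0 x.1 * ∏ i : Fin n, g i.succ (x.2 i)) := by
      apply Summable.mul_of_nonneg h0.summable ihs.summable
      · intro s; exact hpos 0 s
      · intro k; exact Finset.prod_nonneg (fun i _ => hpos i.succ (k i))
    have hmul := h0.mul ihs hsummable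
    have he := (Fin.consEquiv (fun _ : Fin (n+1) => ℕ)).hasSum_iff
      (f := fun k : Fin (n+1) → ℕ => ∏ i, g i (k i)) (a := ∏ i, S i)
    apply he.1
    have hfun : ((fun k : Fin (n+1) → ℕ => ∏ i, g i (k i)) ∘
        (Fin.consEquiv (fun _ : Fin (n+1) => ℕ)))
        = fun x : ℕ × (Fin n → ℕ) => g 0 x.1 * ∏ i : Fin n, g i.succ (x.2 i) := by
      funext x
      simp only [Function.comp_apply, Fin.consEquiv_apply]
      rw [Fin.prod_univ_succ]
      simp [Fin.cons_zero, Fin.cons_succ]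
    rw [hfun]
    have hS : (∏ i : Fin (n+1), S i) = S 0 * ∏ i : Fin n, S i.succ := Fin.prod_univ_succ S
    rw [hS]
    exact hmul

lemma hasSum_regroup {n : ℕ} {F : (Fin n → ℕ) → ℝ} {T : ℝ} (h : HasSum F T) :
    HasSum (fun j : ℕ => ∑ k ∈ Finset.Nat.antidiagonalTuple n j, F k) T := by
  have he : HasSum (F ∘ (Finset.Nat.sigmaAntidiagonalTupleEquivTuple n)) T :=
    ((Finset.Nat.sigmaAntidiagonalTupleEquivTuple n).hasSum_iff).2 h
  apply he.sigma
  intro j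
  have hf := hasSum_fintype (fun c : {x // x ∈ Finset.Nat.antidiagonalTuple n j} => F c.1)
  rwa [Finset.sum_coe_sort] at hf


lemma rpow_key {b1 bi ai : ℝ} (hb1 : 0 < b1) (hbi : 0 < bi) (fi : ℕ) :
    (b1 / bi) ^ ai * b1 ^ fi * (b1 / bi) ^ (-(ai + (fi : ℝ))) = bi ^ fi := by
  have hb : 0 < b1 / bi := div_pos hb1 hbi
  have h1 : (b1 / bi) ^ ai * (b1 / bi) ^ (-(ai + (fi : ℝ)))
      = (b1 / bi) ^ (-(fi : ℝ)) := by
    rw [← Real.rpow_add hb]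
    ring_nf
  have h2 : (b1 / bi) ^ (-(fi : ℝ)) = ((b1 / bi) ^ (fi : ℕ))⁻¹ := by
    rw [Real.rpow_neg hb.le, Real.rpow_natCast]
  calc (b1 / bi) ^ ai * b1 ^ fi * (b1 / bi) ^ (-(ai + (fi : ℝ)))
      = ((b1 / bi) ^ ai * (b1 / bi) ^ (-(ai + (fi : ℝ)))) * b1 ^ fi := by ring
    _ = ((b1 / bi) ^ (fi : ℕ))⁻¹ * b1 ^ fi := by rw [h1, h2]
    _ = bi ^ fi := by
        rw [div_pow, inv_div]
        field_simp


/-- For `n ≥ 2`, an integer `m ≥ 1`, `αᵢ > 0`, `βᵢ > 0` with `β₁ = min βᵢ`,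
setting `A = ∑ αᵢ`, `γₗ = (1/l) ∑ᵢ αᵢ (1 - β₁/βᵢ)^l`, `δ₀ = 1` and
`δ_{j+1} = (1/(j+1)) ∑_{l=1}^{j+1} l γₗ δ_{j+1-l}`, the series
`∑ⱼ δⱼ Γ(A+j+m)/Γ(A+j)` converges and
`∏ᵢ (β₁/βᵢ)^{αᵢ} · β₁^m · ∑_{j=0}^∞ δⱼ Γ(A+j+m)/Γ(A+j)` equals the multinomial
sum `∑_{i₁+⋯+iₙ=m} (m!/(i₁!⋯iₙ!)) ∏ₖ (Γ(αₖ+iₖ)/Γ(αₖ)) βₖ^{iₖ}`. -/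
theorem gamma_sum_moment_identity
    (n : ℕ) (hn : 2 ≤ n) (m : ℕ) (hm : 1 ≤ m) (α β : Fin n → ℝ)
    (hα : ∀ i, 0 < α i) (hβ : ∀ i, 0 < β i)
    (β1 : ℝ) (hβ1 : β1 = β ⟨0, by omega⟩) (hmin : ∀ i, β1 ≤ β i)
    (A : ℝ) (hA : A = ∑ i : Fin n, α i)
    (γ δ : ℕ → ℝ)
    (hγ : ∀ l : ℕ, 1 ≤ l →
      γ l = (∑ i : Fin n, α i * (1 - β1 / β i) ^ l) / l)
    (hδ0 : δ 0 = 1)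
    (hδ : ∀ j : ℕ, δ (j + 1) =
      (1 / (j + 1 : ℝ)) * ∑ l ∈ Finset.Icc 1 (j + 1), (l : ℝ) * γ l * δ (j + 1 - l)) :
    Summable (fun j : ℕ => δ j * (Real.Gamma (A + j + m) / Real.Gamma (A + j))) ∧
      (∏ i : Fin n, (β1 / β i) ^ (α i)) * β1 ^ (m : ℕ) *
          (∑' j : ℕ, δ j * (Real.Gamma (A + j + m) / Real.Gamma (A + j))) =
        ∑ f ∈ Finset.Nat.antidiagonalTuple n m,
          (Nat.multinomial Finset.univ f : ℝ) *
            ∏ k : Fin n, (Real.Gamma (α k + f k) / Real.Gamma (α k)) * β k ^ f k := by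
  have hβ1pos : 0 < β1 := by rw [hβ1]; exact hβ _
  set c : Fin n → ℝ := fun i => 1 - β1 / β i with hc
  have hc0 : ∀ i, 0 ≤ c i := by
    intro i
    simp only [hc, sub_nonneg]
    exact (div_le_one (hβ i)).2 (hmin i)
  have hc1 : ∀ i, c i < 1 := by
    intro i
    simp only [hc]
    have : 0 < β1 / β i := div_pos hβ1pos (hβ i)
    linarith
  have h1c : ∀ i, 1 - c i = β1 / β i := by intro i; simp [hc]
  have hApos : 0 < A := by
    rw [hA]
    apply Finset.sum_pos (fun i _ => hα i)
    exact ⟨⟨0, by omega⟩, Finset.mem_univ _⟩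
  -- identify δ with power series coefficients
  have hδ' : ∀ j : ℕ, δ (j + 1) = (1 / ((j:ℝ) + 1)) *
      ∑ l ∈ Finset.Icc 1 (j + 1), (∑ i : Fin n, α i * c i ^ l) * δ (j + 1 - l) := by
    intro j
    rw [hδ j]
    congr 1
    apply Finset.sum_congr rfl
    intro l hl
    rw [Finset.mem_Icc] at hl
    have hl1 : 1 ≤ l := hl.1
    have hlne : ((l:ℝ)) ≠ 0 := by
      have : 0 < l := hl1
      positivity
    rw [hγ l hl1]
    congr 1
    field_simp
    rfl
  have hδeq := delta_unique α c δ hδ0 hδ'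
  -- Gamma ratios are Pochhammer values
  have hgam : ∀ j : ℕ, Real.Gamma (A + j + m) / Real.Gamma (A + j) = poch (A + j) m := by
    intro j
    have hAj : 0 < A + (j:ℝ) := by positivity
    rw [Gamma_poch hAj m]
    rw [mul_div_assoc, div_self (Real.Gamma_pos_of_pos hAj).ne', mul_one]
  -- per-index inner sums
  have hinner : ∀ (f : Fin n → ℕ) (i : Fin n),
      HasSum (fun s : ℕ => (bino (α i) s * c i ^ s) * poch (α i + s) (f i))
        (poch (α i) (f i) * (β1 / β i) ^ (-(α i + (f i : ℝ)))) := by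
    intro f i
    have hx : 0 < α i + (f i : ℝ) := by have := hα i; positivity
    have hbs := (hasSum_bino hx (hc0 i) (hc1 i)).mul_left (poch (α i) (f i))
    rw [h1c i] at hbs
    have heq : (fun s : ℕ => (bino (α i) s * c i ^ s) * poch (α i + s) (f i))
        = (fun s : ℕ => poch (α i) (f i) * (bino (α i + (f i : ℝ)) s * c i ^ s)) := by
      funext s
      have hfact : ((s.factorial : ℝ)) ≠ 0 := by positivity
      have hswap := poch_swap (α i) s (f i)
      simp only [bino]
      field_simp
      linear_combination (c i ^ s) * hswap
    rw [heq]
    exact hbs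
  -- per-f HasSum over all tuples
  set t : (Fin n → ℕ) → Fin n → ℝ :=
    fun f i => poch (α i) (f i) * (β1 / β i) ^ (-(α i + (f i : ℝ))) with ht
  have htuple : ∀ f : Fin n → ℕ,
      HasSum (fun k : Fin n → ℕ =>
          ∏ i, ((bino (α i) (k i) * c i ^ (k i)) * poch (α i + (k i : ℝ)) (f i)))
        (∏ i, t f i) := by
    intro f
    apply hasSum_pi_prod
      (g := fun i s => (bino (α i) s * c i ^ s) * poch (α i + (s : ℝ)) (f i))
    · intro i
      exact hinner f i
    · intro i s
      have h1 : 0 < bino (α i) s := bino_pos (hα i) s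
      have h2 : (0:ℝ) ≤ c i ^ s := pow_nonneg (hc0 i) s
      have h3 : 0 < poch (α i + (s : ℝ)) (f i) := poch_pos (by have := hα i; positivity) _
      positivity
  -- the global function F
  set F : (Fin n → ℕ) → ℝ :=
    fun k => (∏ i, (bino (α i) (k i) * c i ^ (k i))) * poch (A + ((∑ i, k i : ℕ) : ℝ)) m
    with hF
  set total : ℝ := ∑ f ∈ Finset.Nat.antidiagonalTuple n m,
      (Nat.multinomial Finset.univ f : ℝ) * ∏ i, t f i with htotal
  have hFsum : HasSum F total := by
    have hFeq : ∀ k : Fin n → ℕ, F k = ∑ f ∈ Finset.Nat.antidiagonalTuple n m,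
        (Nat.multinomial Finset.univ f : ℝ) *
          ∏ i, ((bino (α i) (k i) * c i ^ (k i)) * poch (α i + (k i : ℝ)) (f i)) := by
      intro k
      have hAk : A + ((∑ i, k i : ℕ) : ℝ) = ∑ i, (α i + (k i : ℝ)) := by
        rw [hA, Finset.sum_add_distrib]
        push_cast
        ring
      rw [hF]
      simp only
      rw [hAk, vandermonde_poch (fun i => α i + (k i : ℝ)) m, Finset.mul_sum]
      apply Finset.sum_congr rfl
      intro f _
      conv_rhs => rw [Finset.prod_mul_distrib]
      ring
    have h2 : HasSum (fun k : Fin n → ℕ => ∑ f ∈ Finset.Nat.antidiagonalTuple n m,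
        (Nat.multinomial Finset.univ f : ℝ) *
          ∏ i, ((bino (α i) (k i) * c i ^ (k i)) * poch (α i + (k i : ℝ)) (f i)))
        total := by
      rw [htotal]
      apply hasSum_sum
      intro f _
      exact (htuple f).mul_left _
    exact (funext hFeq : F = _) ▸ h2
  -- regroup along the total degree
  have hregroup := hasSum_regroup hFsum
  have hgroup : ∀ j : ℕ, ∑ k ∈ Finset.Nat.antidiagonalTuple n j, F k
      = δ j * poch (A + (j:ℝ)) m := by
    intro j
    have h1 : ∀ k ∈ Finset.Nat.antidiagonalTuple n j,
        F k = (∏ i, (bino (α i) (k i) * c i ^ (k i))) * poch (A + (j:ℝ)) m := by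
      intro k hk
      rw [Finset.Nat.mem_antidiagonalTuple] at hk
      rw [hF]
      simp only
      rw [hk]
    rw [Finset.sum_congr rfl h1, ← Finset.sum_mul, ← coeff_prod_tuple α c j, ← hδeq j]
  have hδsum : HasSum (fun j : ℕ => δ j * poch (A + (j:ℝ)) m) total := by
    have := hregroup
    simp only [hgroup] at this
    exact this
  have hfun : (fun j : ℕ => δ j * (Real.Gamma (A + j + m) / Real.Gamma (A + j)))
      = fun j : ℕ => δ j * poch (A + (j:ℝ)) m := by
    funext j
    rw [hgam j]
  constructor
  · rw [hfun]
    exact hδsum.summable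
  · rw [hfun, hδsum.tsum_eq, htotal, Finset.mul_sum]
    apply Finset.sum_congr rfl
    intro f hf
    rw [Finset.Nat.mem_antidiagonalTuple] at hf
    have hβ1m : β1 ^ (m : ℕ) = ∏ i, β1 ^ (f i) := by
      rw [Finset.prod_pow_eq_pow_sum, hf]
    have hgamf : ∀ k : Fin n, Real.Gamma (α k + (f k : ℝ)) / Real.Gamma (α k)
        = poch (α k) (f k) := by
      intro k
      rw [Gamma_poch (hα k) (f k), mul_div_assoc,
        div_self (Real.Gamma_pos_of_pos (hα k)).ne', mul_one]
    simp only [ht]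
    have key : ∀ i : Fin n,
        (β1 / β i) ^ (α i) * β1 ^ (f i) *
          (poch (α i) (f i) * (β1 / β i) ^ (-(α i + (f i : ℝ))))
          = poch (α i) (f i) * β i ^ (f i) := by
      intro i
      have hstep : (β1 / β i) ^ (α i) * β1 ^ (f i) *
          (poch (α i) (f i) * (β1 / β i) ^ (-(α i + (f i : ℝ))))
          = poch (α i) (f i) *
            ((β1 / β i) ^ (α i) * β1 ^ (f i) * (β1 / β i) ^ (-(α i + (f i : ℝ)))) := by
        ring
      rw [hstep, rpow_key hβ1pos (hβ i) (f i)]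
    have hsplit : ∏ i, ((β1 / β i) ^ (α i) * β1 ^ (f i) *
          (poch (α i) (f i) * (β1 / β i) ^ (-(α i + (f i : ℝ)))))
        = (∏ i, (β1 / β i) ^ (α i)) * (∏ i, β1 ^ (f i)) *
          ∏ i, (poch (α i) (f i) * (β1 / β i) ^ (-(α i + (f i : ℝ)))) := by
      rw [Finset.prod_mul_distrib, Finset.prod_mul_distrib]
    have hmerge : ∏ i, ((β1 / β i) ^ (α i) * β1 ^ (f i) *
          (poch (α i) (f i) * (β1 / β i) ^ (-(α i + (f i : ℝ)))))
        = ∏ i, (poch (α i) (f i) * β i ^ (f i)) :=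
      Finset.prod_congr rfl (fun i _ => key i)
    have hfinalprod : ∀ k : Fin n,
        poch (α k) (f k) * β k ^ (f k)
          = (Real.Gamma (α k + f k) / Real.Gamma (α k)) * β k ^ f k := by
      intro k
      rw [hgamf k]
    calc (∏ i, (β1 / β i) ^ (α i)) * β1 ^ (m : ℕ) *
          ((Nat.multinomial Finset.univ f : ℝ) *
            ∏ i, (poch (α i) (f i) * (β1 / β i) ^ (-(α i + (f i : ℝ)))))
        = (Nat.multinomial Finset.univ f : ℝ) *
            ((∏ i, (β1 / β i) ^ (α i)) * (∏ i, β1 ^ (f i)) *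
              ∏ i, (poch (α i) (f i) * (β1 / β i) ^ (-(α i + (f i : ℝ))))) := by
          rw [hβ1m]; ring
      _ = (Nat.multinomial Finset.univ f : ℝ) *
            ∏ i, (poch (α i) (f i) * β i ^ (f i)) := by
          rw [← hsplit, hmerge]
      _ = (Nat.multinomial Finset.univ f : ℝ) *
            ∏ k, (Real.Gamma (α k + f k) / Real.Gamma (α k)) * β k ^ f k := by
          rw [Finset.prod_congr rfl (fun k _ => hfinalprod k)]
end

section
/- For all integers m ≥ 1 and n ≥ 1, (1/(n−1)!) · { n^{m+n}/(m+n) + ∑_{i=1}^{n} (−1)^i C(n,i) [ ∑_{j=0}^{n−1} C(n−1,j) (−i)^{n−j−1} (n^{m+j+1} − i^{m+j+1})/(m+j+1) ] } = ∑_{i_1 + ⋯ + i_n = m} (m!/(i_1! ⋯ i_n!)) · 1/((i_1+1) ⋯ (i_n+1)), where the right sum ranges over all n-tuples of nonnegative integers summing to m; the identity holds in the rational numbers. -/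
open Finset

section helpers
open PowerSeries


noncomputable def phiAux : PowerSeries ℚ := PowerSeries.mk fun k => 1 / (k+1).factorial

lemma exp_sub_one_eq : PowerSeries.exp ℚ - 1 = PowerSeries.X * phiAux := by
  ext k
  cases k with
  | zero => simp [coeff_exp, phiAux]
  | succ k => simp [coeff_succ_X_mul, coeff_exp, phiAux, PowerSeries.coeff_one]

lemma coeff_exp_sub_one_pow (n k : ℕ) :
    coeff k ((PowerSeries.exp ℚ - 1)^n) =
      (∑ i ∈ range (n+1), (-1:ℚ)^(i+n) * n.choose i * (i:ℚ)^k) / k.factorial := by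
  rw [sub_pow, map_sum, Finset.sum_div]
  refine Finset.sum_congr rfl fun i hi => ?_
  rw [one_pow, mul_one, exp_pow_eq_rescale_exp]
  rw [show ((-1:ℚ⟦X⟧)^(i+n)) = PowerSeries.C ((-1:ℚ)^(i+n)) by simp [map_pow],
    show ((n.choose i : ℚ⟦X⟧)) = PowerSeries.C ((n.choose i : ℚ)) by simp,
    mul_assoc, PowerSeries.coeff_C_mul, PowerSeries.coeff_mul_C, coeff_rescale, coeff_exp]
  simp [algebraMap]
  ring

lemma alt_sum_pow_eq_zero {n k : ℕ} (h : k < n) :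
    ∑ i ∈ range (n+1), (-1:ℚ)^(i+n) * n.choose i * (i:ℚ)^k = 0 := by
  have h0 : coeff k ((PowerSeries.exp ℚ - 1)^n) = 0 := by
    rw [exp_sub_one_eq, mul_pow, PowerSeries.coeff_X_pow_mul', if_neg (by omega)]
  rw [coeff_exp_sub_one_pow, div_eq_zero_iff] at h0
  rcases h0 with h0 | h0
  · exact h0
  · exact absurd h0 (Nat.cast_ne_zero.2 k.factorial_ne_zero)

lemma alt_sum_pow_eq_zero' {n k : ℕ} (h : k < n) :
    ∑ i ∈ range (n+1), (-1:ℚ)^i * n.choose i * (i:ℚ)^k = 0 := by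
  have h0 := alt_sum_pow_eq_zero h
  have e : ∀ i ∈ range (n+1), (-1:ℚ)^(i+n) * n.choose i * (i:ℚ)^k
      = (-1:ℚ)^n * ((-1)^i * n.choose i * (i:ℚ)^k) := by
    intro i _; rw [pow_add]; ring
  rw [Finset.sum_congr rfl e, ← Finset.mul_sum] at h0
  rcases mul_eq_zero.1 h0 with h' | h'
  · exact absurd h' (pow_ne_zero _ (by norm_num))
  · exact h'

lemma sum_adt_eq_coeff (n m : ℕ) :
    ∑ f ∈ Finset.Nat.antidiagonalTuple n m, ∏ k : Fin n, (1:ℚ) / ((f k)+1).factorial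
      = coeff m (phiAux ^ n) := by
  have : phiAux ^ n = ∏ _k : Fin n, phiAux := by simp
  rw [this, PowerSeries.coeff_prod]
  refine Finset.sum_nbij' (fun f => Finsupp.equivFunOnFinite.symm f) (fun l => ⇑l) ?_ ?_ ?_ ?_ ?_
  · intro f hf
    rw [Finset.mem_finsuppAntidiag]
    refine ⟨?_, Finset.subset_univ _⟩
    simpa using (Finset.Nat.mem_antidiagonalTuple.1 hf)
  · intro l hl
    rw [Finset.mem_finsuppAntidiag] at hl
    rw [Finset.Nat.mem_antidiagonalTuple]
    simpa using hl.1
  · intro f hf; exact Finsupp.equivFunOnFinite.apply_symm_apply f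
  · intro l hl; simp
  · intro f hf
    refine Finset.prod_congr rfl fun k _ => ?_
    simp [phiAux, coeff_mk]

lemma stepA (m n : ℕ) :
    ∑ f ∈ Finset.Nat.antidiagonalTuple n m,
        (Nat.multinomial Finset.univ f : ℚ) * ∏ k : Fin n, (1 : ℚ) / (f k + 1)
      = (m.factorial : ℚ) *
          ((∑ i ∈ range (n+1), (-1:ℚ)^(i+n) * n.choose i * (i:ℚ)^(m+n)) / (m+n).factorial) := by
  have step1 : ∀ f ∈ Finset.Nat.antidiagonalTuple n m,
      (Nat.multinomial Finset.univ f : ℚ) * ∏ k : Fin n, (1 : ℚ) / (f k + 1)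
        = m.factorial * ∏ k : Fin n, (1:ℚ) / ((f k)+1).factorial := by
    intro f hf
    have hs : ∑ k, f k = m := Finset.Nat.mem_antidiagonalTuple.1 hf
    have h1 : (∏ k : Fin n, ((f k).factorial : ℚ)) * (Nat.multinomial Finset.univ f : ℚ)
        = m.factorial := by
      rw [← hs]
      exact_mod_cast congrArg (Nat.cast : ℕ → ℚ) (Nat.multinomial_spec univ f)
    have hprodne : (∏ k : Fin n, ((f k).factorial:ℚ)) ≠ 0 :=
      Finset.prod_ne_zero_iff.2 fun k _ => Nat.cast_ne_zero.2 (f k).factorial_ne_zero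
    have hM : (Nat.multinomial Finset.univ f : ℚ)
        = m.factorial * ∏ k : Fin n, (1:ℚ)/(f k).factorial := by
      rw [show ∏ k : Fin n, (1:ℚ)/((f k).factorial:ℚ)
            = (∏ k : Fin n, ((f k).factorial:ℚ))⁻¹ by
          rw [← Finset.prod_inv_distrib]; simp [one_div]]
      field_simp
      linarith [h1]
    rw [hM, mul_assoc, ← Finset.prod_mul_distrib]
    congr 1
    refine Finset.prod_congr rfl fun k _ => ?_
    rw [Nat.factorial_succ, Nat.cast_mul, one_div, one_div, one_div, mul_inv]
    push_cast
    ring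
  rw [Finset.sum_congr rfl step1, ← Finset.mul_sum, sum_adt_eq_coeff]
  congr 1
  rw [← PowerSeries.coeff_X_pow_mul (phiAux ^ n) n m, ← mul_pow, ← exp_sub_one_eq,
    coeff_exp_sub_one_pow]

lemma beta_sum : ∀ (k : ℕ) (x : ℚ), (∀ t ∈ range (k+1), x + t ≠ 0) →
    ∑ j ∈ range (k+1), (-1:ℚ)^j * (k.choose j) / (x + j)
      = k.factorial / ∏ t ∈ range (k+1), (x + t) := by
  intro k
  induction k with
  | zero => intro x hx; simp
  | succ k ih =>
    intro x hx
    have hx0 : x ≠ 0 := by simpa using hx 0 (by simp)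
    have hxk : x + ((k:ℚ)+1) ≠ 0 := by
      have := hx (k+1) (by simp); push_cast at this; intro hc; exact this (by linarith)
    have hx' : ∀ t ∈ range (k+1), (x+1) + (t:ℚ) ≠ 0 := by
      intro t ht
      have h := hx (t+1) (by simp at ht ⊢; omega)
      push_cast at h
      intro hc; exact h (by linarith)
    have hxall : ∀ t ∈ range (k+1), x + (t:ℚ) ≠ 0 := by
      intro t ht
      exact hx t (by simp at ht ⊢; omega)
    have hP : (∏ t ∈ range (k+1), (x + (t:ℚ))) ≠ 0 := Finset.prod_ne_zero_iff.2 hxall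
    have hQ : (∏ t ∈ range (k+1), (x + 1 + (t:ℚ))) ≠ 0 :=
      Finset.prod_ne_zero_iff.2 hx'
    have key : ∑ j ∈ range (k+2), (-1:ℚ)^j * ((k+1).choose j) / (x + j)
        = (∑ j ∈ range (k+1), (-1:ℚ)^j * (k.choose j) / (x + j))
          - ∑ j ∈ range (k+1), (-1:ℚ)^j * (k.choose j) / ((x+1) + j) := by
      rw [Finset.sum_range_succ' _ (k+1)]
      have e1 : ∀ j ∈ range (k+1), (-1:ℚ)^(j+1) * (((k+1).choose (j+1) : ℕ) : ℚ) / (x + ((j:ℚ)+1))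
          = -((-1:ℚ)^j * (k.choose j) / ((x+1) + j))
            - ((-1:ℚ)^j * (k.choose (j+1)) / (x + ((j:ℚ)+1))) := by
        intro j hj
        rw [Nat.choose_succ_succ]
        have hd : x + ((j:ℚ)+1) ≠ 0 := by
          have := hx (j+1) (by simp at hj ⊢; omega); push_cast at this
          intro hc; exact this (by linarith)
        have hd2 : x + 1 + (j:ℚ) ≠ 0 := hx' j hj
        push_cast
        field_simp
        ring
      push_cast
      rw [Finset.sum_congr rfl e1, Finset.sum_sub_distrib]
      simp only [Finset.sum_neg_distrib]
      have hD : ∑ j ∈ range (k+1), (-1:ℚ)^j * (k.choose (j+1))/(x+((j:ℚ)+1))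
          = ∑ j ∈ range k, (-1:ℚ)^j * (k.choose (j+1))/(x+((j:ℚ)+1)) := by
        rw [Finset.sum_range_succ]; simp
      have hB : (∑ j ∈ range (k+1), (-1:ℚ)^j * (k.choose j)/(x + (j:ℚ)))
          = 1/x - ∑ j ∈ range k, (-1:ℚ)^j * (k.choose (j+1))/(x+((j:ℚ)+1)) := by
        rw [Finset.sum_range_succ' (fun j => (-1:ℚ)^j * (k.choose j)/(x + (j:ℚ))) k]
        have e2 : ∀ j ∈ range k, (-1:ℚ)^(j+1) * (k.choose (j+1))/(x+((j:ℚ)+1))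
            = -((-1:ℚ)^j * (k.choose (j+1))/(x+((j:ℚ)+1))) := by
          intro j _; rw [pow_succ]; ring
        push_cast
        rw [Finset.sum_congr rfl e2, Finset.sum_neg_distrib]
        simp
        ring
      rw [hD, hB]
      simp
      ring
    have hprod1 : ∏ t ∈ range (k+2), (x + (t:ℚ))
        = (∏ t ∈ range (k+1), (x + 1 + (t:ℚ))) * x := by
      rw [Finset.prod_range_succ' (fun t => x + (t:ℚ)) (k+1)]
      push_cast
      congr 1
      refine Finset.prod_congr rfl fun t _ => by ring
      simp
    have hprod2 : ∏ t ∈ range (k+2), (x + (t:ℚ))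
        = (∏ t ∈ range (k+1), (x + (t:ℚ))) * (x + ((k:ℚ)+1)) := by
      rw [Finset.prod_range_succ]
      push_cast
      ring
    have hQx : (∏ t ∈ range (k+1), (x + 1 + (t:ℚ))) * x
        = (∏ t ∈ range (k+1), (x + (t:ℚ))) * (x + ((k:ℚ)+1)) := by
      rw [← hprod1, ← hprod2]
    rw [key, ih x hxall, ih (x+1) hx']
    rw [show k+1+1 = k+2 from rfl, hprod2]
    rw [div_sub_div _ _ hP hQ, div_eq_div_iff (mul_ne_zero hP hQ) (mul_ne_zero hP hxk)]
    push_cast [Nat.factorial_succ]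
    linear_combination ((k.factorial : ℚ) * (∏ t ∈ range (k+1), (x + (t:ℚ)))) * hQx

lemma prod_shift (m n : ℕ) :
    ∏ t ∈ range n, ((m:ℚ)+1+t) = (m+n).factorial / m.factorial := by
  induction n with
  | zero => simp [div_self (show (m.factorial:ℚ) ≠ 0 from Nat.cast_ne_zero.2 m.factorial_ne_zero)]
  | succ n ih =>
    rw [Finset.prod_range_succ, ih, show m + (n+1) = (m+n)+1 from by omega, Nat.factorial_succ]
    have h : (m.factorial : ℚ) ≠ 0 := Nat.cast_ne_zero.2 m.factorial_ne_zero
    field_simp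
    push_cast
    ring

lemma neg_one_pow_split {a : ℕ} (j : ℕ) (hj : j ≤ a) :
    (-1:ℚ)^(a-j) = (-1)^a * (-1)^j := by
  have h1 : (-1:ℚ)^(a-j) * (-1)^j = (-1)^a := by rw [← pow_add]; congr 1; omega
  have h2 : (-1:ℚ)^j * (-1)^j = 1 := by rw [← pow_add]; exact Even.neg_one_pow ⟨j, rfl⟩
  calc (-1:ℚ)^(a-j) = (-1)^(a-j) * ((-1)^j * (-1)^j) := by rw [h2, mul_one]
    _ = (-1)^a * (-1)^j := by rw [← mul_assoc, h1]

end helpers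

/-- For integers `m ≥ 1` and `n ≥ 1`,
`(1/(n-1)!) (n^{m+n}/(m+n) + ∑_{i=1}^{n} (-1)^i C(n,i)
  ∑_{j=0}^{n-1} C(n-1,j) (-i)^{n-j-1} (n^{m+j+1} - i^{m+j+1})/(m+j+1))`
equals `∑_{i₁+⋯+iₙ=m} (m!/(i₁!⋯iₙ!)) / ((i₁+1)⋯(iₙ+1))`, in the rationals. -/
theorem uniform_moment_identity (m n : ℕ) (hm : 1 ≤ m) (hn : 1 ≤ n) :
    (1 / ((n - 1).factorial : ℚ)) *
        ((n : ℚ) ^ (m + n) / (m + n) +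
          ∑ i ∈ Finset.Icc 1 n, (-1 : ℚ) ^ i * n.choose i *
            ∑ j ∈ Finset.range n, ((n - 1).choose j : ℚ) * (-(i : ℚ)) ^ (n - j - 1) *
              (((n : ℚ) ^ (m + j + 1) - (i : ℚ) ^ (m + j + 1)) / (m + j + 1))) =
      ∑ f ∈ Finset.Nat.antidiagonalTuple n m,
        (Nat.multinomial Finset.univ f : ℚ) * ∏ k : Fin n, (1 : ℚ) / (f k + 1) := by
  rw [stepA]
  have hSS : (∑ i ∈ range (n+1), (-1:ℚ)^(i+n) * n.choose i * (i:ℚ)^(m+n))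
      = (-1:ℚ)^n * ∑ i ∈ range (n+1), (-1:ℚ)^i * n.choose i * (i:ℚ)^(m+n) := by
    rw [Finset.mul_sum]
    exact Finset.sum_congr rfl fun i _ => by rw [pow_add]; ring
  rw [hSS]
  -- the summand function
  set g : ℕ → ℚ := fun i => (-1 : ℚ) ^ i * n.choose i *
      ∑ j ∈ Finset.range n, ((n - 1).choose j : ℚ) * (-(i : ℚ)) ^ (n - j - 1) *
        (((n : ℚ) ^ (m + j + 1) - (i : ℚ) ^ (m + j + 1)) / (m + j + 1)) with hg
  have hg0 : g 0 = (n : ℚ) ^ (m + n) / (m + n) := by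
    rw [hg]
    simp only [pow_zero, Nat.choose_zero_right, Nat.cast_one, one_mul, Nat.cast_zero, neg_zero]
    rw [Finset.sum_eq_single_of_mem (n-1) (by simp; omega)]
    · rw [Nat.choose_self, zero_pow (by omega : m + (n-1) + 1 ≠ 0),
        show n - (n-1) - 1 = 0 from by omega, pow_zero]
      have : m + (n-1) + 1 = m + n := by omega
      rw [this]
      push_cast [Nat.cast_sub hn]
      ring_nf
    · intro j hj hne
      simp at hj
      rw [zero_pow (by omega : n - j - 1 ≠ 0)]
      ring
  have hsplit : (range (n+1)) = insert 0 (Finset.Icc 1 n) := by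
    ext a; simp [Finset.mem_Icc, Finset.mem_range]; omega
  have hsum : (n : ℚ) ^ (m + n) / (m + n) + ∑ i ∈ Finset.Icc 1 n, g i
      = ∑ i ∈ range (n+1), g i := by
    rw [hsplit, Finset.sum_insert (by simp), hg0]
  rw [show (∑ i ∈ Finset.Icc 1 n, (-1 : ℚ) ^ i * n.choose i *
      ∑ j ∈ Finset.range n, ((n - 1).choose j : ℚ) * (-(i : ℚ)) ^ (n - j - 1) *
        (((n : ℚ) ^ (m + j + 1) - (i : ℚ) ^ (m + j + 1)) / (m + j + 1)))
      = ∑ i ∈ Finset.Icc 1 n, g i from rfl, hsum]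
  -- swap sums
  have hswap : ∑ i ∈ range (n+1), g i
      = ∑ j ∈ range n, ∑ i ∈ range (n+1), (-1 : ℚ) ^ i * n.choose i *
          (((n - 1).choose j : ℚ) * (-(i : ℚ)) ^ (n - j - 1) *
            (((n : ℚ) ^ (m + j + 1) - (i : ℚ) ^ (m + j + 1)) / (m + j + 1))) := by
    rw [hg]
    simp_rw [Finset.mul_sum]
    exact Finset.sum_comm
  rw [hswap]
  have hinner : ∀ j ∈ range n, (∑ i ∈ range (n+1), (-1 : ℚ) ^ i * n.choose i *
          (((n - 1).choose j : ℚ) * (-(i : ℚ)) ^ (n - j - 1) *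
            (((n : ℚ) ^ (m + j + 1) - (i : ℚ) ^ (m + j + 1)) / (m + j + 1))))
      = -(((n - 1).choose j : ℚ) * (-1)^(n-j-1) / ((m:ℚ) + j + 1)) *
          ∑ i ∈ range (n+1), (-1:ℚ)^i * n.choose i * (i:ℚ)^(m+n) := by
    intro j hj
    simp only [Finset.mem_range] at hj
    have hrw : ∀ i ∈ range (n+1), (-1 : ℚ) ^ i * n.choose i *
          (((n - 1).choose j : ℚ) * (-(i : ℚ)) ^ (n - j - 1) *
            (((n : ℚ) ^ (m + j + 1) - (i : ℚ) ^ (m + j + 1)) / (m + j + 1)))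
        = (((n - 1).choose j : ℚ) * (-1)^(n-j-1) * (n:ℚ)^(m+j+1) / ((m:ℚ) + j + 1)) *
            ((-1:ℚ)^i * n.choose i * (i:ℚ)^(n-j-1))
          - (((n - 1).choose j : ℚ) * (-1)^(n-j-1) / ((m:ℚ) + j + 1)) *
            ((-1:ℚ)^i * n.choose i * (i:ℚ)^(m+n)) := by
      intro i _
      have hpow : (i:ℚ)^(n-j-1) * (i:ℚ)^(m+j+1) = (i:ℚ)^(m+n) := by
        rw [← pow_add]; congr 1; omega
      rw [neg_pow, ← hpow]
      ring
    rw [Finset.sum_congr rfl hrw, Finset.sum_sub_distrib, ← Finset.mul_sum, ← Finset.mul_sum,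
      alt_sum_pow_eq_zero' (show n-j-1 < n by omega), mul_zero, zero_sub]
    ring
  rw [Finset.sum_congr rfl hinner]
  -- sum of coefficients via beta
  have hfact_m : ((m.factorial : ℚ)) ≠ 0 := Nat.cast_ne_zero.2 m.factorial_ne_zero
  have hfact_mn : (((m+n).factorial : ℚ)) ≠ 0 := Nat.cast_ne_zero.2 (m+n).factorial_ne_zero
  have hfact_n1 : (((n-1).factorial : ℚ)) ≠ 0 := Nat.cast_ne_zero.2 (n-1).factorial_ne_zero
  have hbeta := beta_sum (n-1) ((m:ℚ)+1) (fun t ht => by positivity)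
  rw [show n-1+1 = n from by omega, prod_shift] at hbeta
  have hcoef : ∑ j ∈ range n, (((n - 1).choose j : ℚ) * (-1)^(n-j-1) / ((m:ℚ) + j + 1))
      = (-1:ℚ)^(n-1) * ((n-1).factorial / ((m+n).factorial / m.factorial)) := by
    have e : ∀ j ∈ range n, (((n - 1).choose j : ℚ) * (-1)^(n-j-1) / ((m:ℚ) + j + 1))
        = (-1:ℚ)^(n-1) * ((-1:ℚ)^j * ((n-1).choose j : ℚ) / (((m:ℚ)+1) + j)) := by
      intro j hj
      simp only [Finset.mem_range] at hj
      rw [show n-j-1 = (n-1)-j from by omega, neg_one_pow_split j (by omega)]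
      ring
    rw [Finset.sum_congr rfl e, ← Finset.mul_sum, hbeta]
  rw [show (∑ j ∈ range n, -(((n - 1).choose j : ℚ) * (-1)^(n-j-1) / ((m:ℚ) + j + 1)) *
        ∑ i ∈ range (n+1), (-1:ℚ)^i * n.choose i * (i:ℚ)^(m+n))
      = -(∑ j ∈ range n, (((n - 1).choose j : ℚ) * (-1)^(n-j-1) / ((m:ℚ) + j + 1))) *
        ∑ i ∈ range (n+1), (-1:ℚ)^i * n.choose i * (i:ℚ)^(m+n) from by
    rw [← Finset.sum_mul, ← Finset.sum_neg_distrib], hcoef]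
  have hneg : (-1:ℚ)^n = -(-1:ℚ)^(n-1) := by
    conv_lhs => rw [show n = (n-1)+1 from by omega]
    rw [pow_succ]; ring
  rw [hneg]
  field_simp
end

section
/- Let n ≥ 2 and let X_1, …, X_n be independent random variables with X_i uniformly distributed on [0, a_i], a_i > 0. Then the distribution of S_n = X_1 + ⋯ + X_n has density with respect to Lebesgue measure given, for 0 ≤ x ≤ a_1 + ⋯ + a_n, by h̃_n(x) = (1/((n−1)! ∏_{i=1}^{n} a_i)) · { x^{n−1} + ∑_{i=1}^{n} (−1)^i ∑_{1 ≤ j_1 < ⋯ < j_i ≤ n} [ (x − ∑_{l=1}^{i} a_{j_l})_+ ]^{n−1} }, and h̃_n(x) = 0 outside [0, a_1 + ⋯ + a_n], where y_+ = max(y, 0). -/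
open Finset MeasureTheory ProbabilityTheory

noncomputable def pos (y : ℝ) (k : ℕ) : ℝ := if 0 < y then y ^ k else 0

lemma pos_nonneg (y : ℝ) (k : ℕ) : 0 ≤ pos y k := by
  unfold pos; split <;> positivity

lemma pos_mono (k : ℕ) : Monotone (pos · k) := by
  intro x y hxy
  show (if 0 < x then x ^ k else 0) ≤ (if 0 < y then y ^ k else 0)
  split <;> split
  · exact pow_le_pow_left₀ (le_of_lt ‹_›) hxy k
  · exact absurd (lt_of_lt_of_le ‹0 < x› hxy) ‹¬ 0 < y›
  · positivity
  · exact le_rfl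

lemma pos_of_nonpos {y : ℝ} (h : y ≤ 0) (k : ℕ) : pos y k = 0 := by
  unfold pos; rw [if_neg (not_lt.mpr h)]

lemma pos_eq_max_pow {y : ℝ} {k : ℕ} (hk : 1 ≤ k) : pos y k = max y 0 ^ k := by
  unfold pos
  rcases lt_or_ge 0 y with h | h
  · rw [if_pos h, max_eq_left h.le]
  · rw [if_neg (not_lt.mpr h), max_eq_right h, zero_pow (by omega)]

lemma pos_sub_mono (b : ℝ) (k : ℕ) : Monotone (fun t : ℝ => pos (t - b) k) :=
  (pos_mono k).comp (fun x y h => sub_le_sub_right h b)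

lemma pos_intervalIntegrable (b : ℝ) (k : ℕ) (c d : ℝ) :
    IntervalIntegrable (fun t => pos (t - b) k) volume c d :=
  (pos_sub_mono b k).intervalIntegrable

lemma pos_measurable (b : ℝ) (k : ℕ) : Measurable (fun t : ℝ => pos (t - b) k) :=
  (pos_sub_mono b k).measurable

lemma pos_integral0_nonpos {c d : ℝ} (hcd : c ≤ d) (hd : d ≤ 0) (k : ℕ) :
    ∫ t in c..d, pos t k = 0 := by
  rw [← intervalIntegral.integral_zero (a := c) (b := d) (μ := volume)]
  apply intervalIntegral.integral_congr
  intro t ht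
  rw [Set.uIcc_of_le hcd] at ht
  exact pos_of_nonpos (ht.2.trans hd) k

lemma pos_integral0_nonneg {c d : ℝ} (hcd : c ≤ d) (hc : 0 ≤ c) (k : ℕ) :
    ∫ t in c..d, pos t k = (pos d (k + 1) - pos c (k + 1)) / (k + 1) := by
  have h1 : ∫ t in c..d, pos t k = ∫ t in c..d, t ^ k := by
    apply intervalIntegral.integral_congr_ae
    filter_upwards with t ht
    rw [Set.uIoc_of_le hcd] at ht
    have : 0 < t := lt_of_le_of_lt hc ht.1
    unfold pos; rw [if_pos this]
  rw [h1, integral_pow]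
  have hp : ∀ y : ℝ, 0 ≤ y → pos y (k + 1) = y ^ (k + 1) := by
    intro y hy
    rcases hy.lt_or_eq with h | h
    · unfold pos; rw [if_pos h]
    · rw [← h, pos_of_nonpos le_rfl, zero_pow (by omega)]
  rw [hp d (hc.trans hcd), hp c hc]

lemma pos_integral0_le {c d : ℝ} (hcd : c ≤ d) (k : ℕ) :
    ∫ t in c..d, pos t k = (pos d (k + 1) - pos c (k + 1)) / (k + 1) := by
  rcases le_total d 0 with hd | hd
  · rw [pos_integral0_nonpos hcd hd, pos_of_nonpos hd, pos_of_nonpos (hcd.trans hd)]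
    simp
  rcases le_total 0 c with hc | hc
  · exact pos_integral0_nonneg hcd hc k
  · have hint : ∀ u v : ℝ, IntervalIntegrable (fun t => pos t k) volume u v := by
      intro u v
      simpa using pos_intervalIntegrable 0 k u v
    rw [← intervalIntegral.integral_add_adjacent_intervals (hint c 0) (hint 0 d),
      pos_integral0_nonpos hc le_rfl, pos_integral0_nonneg hd le_rfl,
      pos_of_nonpos (le_refl (0:ℝ)), pos_of_nonpos hc]
    ring

lemma pos_integral0 (c d : ℝ) (k : ℕ) :
    ∫ t in c..d, pos t k = (pos d (k + 1) - pos c (k + 1)) / (k + 1) := by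
  rcases le_total c d with h | h
  · exact pos_integral0_le h k
  · rw [intervalIntegral.integral_symm, pos_integral0_le h k]
    ring

lemma pos_integral (c d b : ℝ) (k : ℕ) :
    ∫ t in c..d, pos (t - b) k = (pos (d - b) (k + 1) - pos (c - b) (k + 1)) / (k + 1) := by
  rw [intervalIntegral.integral_comp_sub_right (fun t => pos t k) b, pos_integral0]

section gdens
variable {ι : Type*} [DecidableEq ι]

noncomputable def gdens (a : ι → ℝ) (s : Finset ι) (x : ℝ) : ℝ :=
  (1 / (((s.card - 1).factorial : ℝ) * ∏ i ∈ s, a i)) *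
    ∑ T ∈ s.powerset, (-1 : ℝ) ^ T.card * pos (x - ∑ i ∈ T, a i) (s.card - 1)

lemma gdens_intervalIntegrable (a : ι → ℝ) (s : Finset ι) (c d : ℝ) :
    IntervalIntegrable (gdens a s) volume c d := by
  have h1 := IntervalIntegrable.sum (μ := volume) (a := c) (b := d) s.powerset
    (f := fun T x => (-1 : ℝ) ^ T.card * pos (x - ∑ i ∈ T, a i) (s.card - 1))
    (fun T _ => (pos_intervalIntegrable (∑ i ∈ T, a i) (s.card - 1) c d).const_mul _)
  rw [Finset.sum_fn] at h1
  exact h1.const_mul _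

lemma gdens_measurable (a : ι → ℝ) (s : Finset ι) : Measurable (gdens a s) := by
  unfold gdens
  exact (Finset.measurable_sum _ (fun T _ => (pos_measurable _ _).const_mul _)).const_mul _

lemma gdens_singleton (a : ι → ℝ) (i : ι) (x : ℝ) :
    gdens a {i} x = (1 / a i) * (pos x 0 - pos (x - a i) 0) := by
  unfold gdens
  rw [show ({i} : Finset ι) = insert i ∅ from rfl,
    Finset.sum_powerset_insert (Finset.notMem_empty i), Finset.powerset_empty,
    Finset.sum_singleton, Finset.sum_singleton]
  simp only [Finset.card_empty, Finset.sum_empty, Finset.card_insert_of_notMem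
    (Finset.notMem_empty i), Finset.sum_insert (Finset.notMem_empty i),
    Finset.prod_insert (Finset.notMem_empty i), Finset.prod_empty, Finset.sum_empty,
    Nat.factorial_zero, pow_zero, pow_one, sub_zero, add_zero, mul_one, one_mul,
    Nat.cast_one, Nat.add_sub_cancel]
  ring

lemma gdens_insert (a : ι → ℝ) {s : Finset ι} (hs : s.Nonempty) {j : ι} (hj : j ∉ s)
    (hpos : ∀ i ∈ insert j s, 0 < a i) (x : ℝ) :
    gdens a (insert j s) x = (1 / a j) * ∫ t in (x - a j)..x, gdens a s t := by
  classical
  set m := s.card with hmdef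
  have hm1 : 1 ≤ m := hs.card_pos
  have haj : 0 < a j := hpos j (mem_insert_self j s)
  have hprod : 0 < ∏ i ∈ s, a i := Finset.prod_pos (fun i hi => hpos i (mem_insert_of_mem hi))
  have hcast : ((m - 1 : ℕ) : ℝ) + 1 = (m : ℝ) := by
    rw [Nat.cast_sub hm1]; push_cast; ring
  have hmm : m - 1 + 1 = m := by omega
  have hker : ∀ T ∈ s.powerset,
      IntervalIntegrable (fun t => (-1:ℝ)^T.card * pos (t - ∑ i ∈ T, a i) (m-1))
        volume (x - a j) x :=
    fun T _ => (pos_intervalIntegrable _ _ _ _).const_mul _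
  have hInt : (∫ t in (x - a j)..x, gdens a s t)
      = (1 / (((m-1).factorial : ℝ) * ∏ i ∈ s, a i)) *
        ∑ T ∈ s.powerset, (-1:ℝ)^T.card *
          ((pos (x - ∑ i ∈ T, a i) m - pos (x - a j - ∑ i ∈ T, a i) m) / m) := by
    unfold gdens
    simp only [← hmdef]
    rw [intervalIntegral.integral_const_mul, intervalIntegral.integral_finset_sum hker]
    congr 1
    refine Finset.sum_congr rfl (fun T hT => ?_)
    rw [intervalIntegral.integral_const_mul, pos_integral, hmm, hcast]
  rw [hInt]
  unfold gdens
  rw [Finset.card_insert_of_notMem hj, Finset.prod_insert hj,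
    Finset.sum_powerset_insert hj, Nat.add_sub_cancel]
  simp only [← hmdef]
  have h2 : ∑ T ∈ s.powerset, (-1:ℝ)^(insert j T).card * pos (x - ∑ i ∈ insert j T, a i) m
      = ∑ T ∈ s.powerset, -((-1:ℝ)^T.card * pos (x - a j - ∑ i ∈ T, a i) m) := by
    refine Finset.sum_congr rfl (fun T hT => ?_)
    have hjT : j ∉ T := fun h => hj (Finset.mem_powerset.mp hT h)
    rw [Finset.card_insert_of_notMem hjT, Finset.sum_insert hjT, pow_succ,
      sub_add_eq_sub_sub]
    ring
  rw [h2, ← Finset.sum_add_distrib]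
  simp only [Finset.mul_sum]
  refine Finset.sum_congr rfl (fun T hT => ?_)
  have hfac : (m.factorial : ℝ) = m * (m - 1).factorial := by
    conv_lhs => rw [← hmm]
    rw [Nat.factorial_succ, hmm]
    push_cast [Nat.cast_sub hm1]
    ring
  have hm0 : (m : ℝ) ≠ 0 := by positivity
  have hfac0 : ((m-1).factorial : ℝ) ≠ 0 := by positivity
  rw [hfac]
  field_simp
  ring

lemma gdens_nonneg (a : ι → ℝ) {s : Finset ι} (hs : s.Nonempty)
    (hpos : ∀ i ∈ s, 0 < a i) (x : ℝ) : 0 ≤ gdens a s x := by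
  induction hs using Finset.Nonempty.cons_induction generalizing x with
  | singleton i =>
    rw [gdens_singleton]
    have h1 : 0 < a i := hpos i (Finset.mem_singleton_self i)
    have h2 : pos (x - a i) 0 ≤ pos x 0 := pos_mono 0 (by linarith)
    have : (0:ℝ) ≤ pos x 0 - pos (x - a i) 0 := by linarith
    positivity
  | cons j s hj hs ih =>
    rw [Finset.cons_eq_insert] at hpos ⊢
    rw [gdens_insert a hs hj hpos x]
    have haj : 0 < a j := hpos j (mem_insert_self j s)
    have hint : 0 ≤ ∫ t in (x - a j)..x, gdens a s t := by
      apply intervalIntegral.integral_nonneg (by linarith)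
      intro u _
      exact ih (fun i hi => hpos i (mem_insert_of_mem hi)) u
    positivity

end gdens

section alt
variable {ι : Type*} [DecidableEq ι]

lemma alt_sum_poly (a : ι → ℝ) (u : Finset ι) :
    ∀ (p : Polynomial ℝ), (p.natDegree < u.card ∨ p = 0) →
      ∀ x : ℝ, ∑ T ∈ u.powerset, (-1:ℝ)^T.card * p.eval (x - ∑ i ∈ T, a i) = 0 := by
  classical
  induction u using Finset.induction_on with
  | empty =>
    intro p hp x
    rcases hp with hp | rfl
    · simp at hp
    · simp
  | insert _ _ hj =>
    rename_i j u ih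
    intro p hp x
    rw [Finset.sum_powerset_insert hj]
    set q := p - p.comp (Polynomial.X - Polynomial.C (a j)) with hq
    have hqeval : ∀ y : ℝ, q.eval y = p.eval y - p.eval (y - a j) := by
      intro y; simp [hq]
    have h2 : ∑ T ∈ u.powerset, (-1:ℝ)^(insert j T).card * p.eval (x - ∑ i ∈ insert j T, a i)
        = ∑ T ∈ u.powerset, -((-1:ℝ)^T.card * p.eval (x - a j - ∑ i ∈ T, a i)) := by
      refine Finset.sum_congr rfl (fun T hT => ?_)
      have hjT : j ∉ T := fun h => hj (Finset.mem_powerset.mp hT h)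
      rw [Finset.card_insert_of_notMem hjT, Finset.sum_insert hjT, pow_succ,
        sub_add_eq_sub_sub]
      ring
    rw [h2, ← Finset.sum_add_distrib]
    have h3 : ∀ T ∈ u.powerset,
        (-1:ℝ)^T.card * p.eval (x - ∑ i ∈ T, a i) +
          -((-1:ℝ)^T.card * p.eval (x - a j - ∑ i ∈ T, a i))
        = (-1:ℝ)^T.card * q.eval (x - ∑ i ∈ T, a i) := by
      intro T _
      rw [hqeval, sub_sub x (a j), sub_sub x _ (a j), add_comm (a j)]
      ring
    rw [Finset.sum_congr rfl h3]
    by_cases hq0 : q = 0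
    · simp [hq0]
    apply ih
    left
    rcases hp with hp | rfl
    · have hp0 : p ≠ 0 := by
        intro h; apply hq0; simp [hq, h]
      have hcomp0 : p.comp (Polynomial.X - Polynomial.C (a j)) ≠ 0 := by
        intro h
        have := Polynomial.leadingCoeff_comp (q := Polynomial.X - Polynomial.C (a j))
          (p := p) (by rw [Polynomial.natDegree_X_sub_C]; omega)
        rw [h] at this
        rw [Polynomial.leadingCoeff_zero, Polynomial.leadingCoeff_X_sub_C, one_pow,
          mul_one] at this
        exact hp0 (Polynomial.leadingCoeff_eq_zero.mp this.symm)
      have hdeg : (p.comp (Polynomial.X - Polynomial.C (a j))).degree = p.degree := by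
        rw [Polynomial.degree_eq_natDegree hcomp0, Polynomial.degree_eq_natDegree hp0,
          Polynomial.natDegree_comp, Polynomial.natDegree_X_sub_C, mul_one]
      have hlc : (p.comp (Polynomial.X - Polynomial.C (a j))).leadingCoeff = p.leadingCoeff := by
        rw [Polynomial.leadingCoeff_comp (by rw [Polynomial.natDegree_X_sub_C]; omega),
          Polynomial.leadingCoeff_X_sub_C, one_pow, mul_one]
      have := Polynomial.degree_sub_lt hdeg.symm hp0 hlc.symm
      have hlt : q.natDegree < p.natDegree := Polynomial.natDegree_lt_natDegree hq0 this
      rw [Finset.card_insert_of_notMem hj] at hp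
      omega
    · exact absurd (by simp [hq]) hq0

lemma alt_sum_pow (a : ι → ℝ) (u : Finset ι) (k : ℕ) (hk : k < u.card) (x : ℝ) :
    ∑ T ∈ u.powerset, (-1:ℝ)^T.card * (x - ∑ i ∈ T, a i)^k = 0 := by
  have := alt_sum_poly a u (Polynomial.X ^ k)
    (Or.inl (by rw [Polynomial.natDegree_X_pow]; exact hk)) x
  simpa using this

end alt

lemma conv_withDensity (f g : ℝ → ENNReal) (hf : Measurable f) (hg : Measurable g) :
    Measure.map (fun p : ℝ × ℝ => p.1 + p.2)
      ((volume.withDensity f).prod (volume.withDensity g)) =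
      volume.withDensity (fun u => ∫⁻ t, f t * g (u - t)) := by
  ext s hs
  rw [Measure.map_apply (by fun_prop) hs, Measure.prod_apply (measurable_add hs),
    withDensity_apply _ hs]
  have h1 : ∀ x : ℝ, (volume.withDensity g) (Prod.mk x ⁻¹' ((fun p : ℝ × ℝ => p.1 + p.2) ⁻¹' s))
      = ∫⁻ u, s.indicator (fun _ => 1) u * g (u - x) := by
    intro x
    have hpre : (Prod.mk x ⁻¹' ((fun p : ℝ × ℝ => p.1 + p.2) ⁻¹' s)) = (fun y => x + y) ⁻¹' s := rfl
    rw [hpre, withDensity_apply _ (measurable_const_add x hs)]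
    rw [← lintegral_indicator (measurable_const_add x hs)]
    have : ∀ y : ℝ, ((fun y => x + y) ⁻¹' s).indicator g y
        = (fun u => s.indicator (fun _ => 1) u * g (u - x)) (x + y) := by
      intro y
      by_cases h : x + y ∈ s <;>
        simp [Set.indicator, Set.mem_preimage, h, add_sub_cancel_left]
    rw [lintegral_congr this]
    exact lintegral_add_left_eq_self (fun u => s.indicator (fun _ => 1) u * g (u - x)) x
  rw [lintegral_congr h1]
  have hunc : Measurable (Function.uncurry fun x u =>
      s.indicator (fun _ => (1:ENNReal)) u * g (u - x)) :=
    ((measurable_const.indicator hs).comp measurable_snd).mul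
      (hg.comp (measurable_snd.sub measurable_fst))
  have hmg : Measurable (fun x : ℝ => ∫⁻ u, s.indicator (fun _ => (1:ENNReal)) u * g (u - x)) :=
    hunc.lintegral_prod_right'
  rw [lintegral_withDensity_eq_lintegral_mul volume hf hmg]
  have h2 : ∫⁻ x, (f * fun x => ∫⁻ u, s.indicator (fun _ => 1) u * g (u - x)) x
      = ∫⁻ x, ∫⁻ u, f x * (s.indicator (fun _ => 1) u * g (u - x)) := by
    refine lintegral_congr fun x => ?_
    simp only [Pi.mul_apply]
    have hx : Measurable (fun u : ℝ => s.indicator (fun _ => (1:ENNReal)) u * g (u - x)) :=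
      (measurable_const.indicator hs).mul (hg.comp (measurable_id.sub measurable_const))
    exact (lintegral_const_mul _ hx).symm
  have hunc2 : Measurable (Function.uncurry fun x u =>
      f x * (s.indicator (fun _ => (1:ENNReal)) u * g (u - x))) :=
    (hf.comp measurable_fst).mul (((measurable_const.indicator hs).comp measurable_snd).mul
      (hg.comp (measurable_snd.sub measurable_fst)))
  rw [h2, lintegral_lintegral_swap hunc2.aemeasurable]
  rw [← lintegral_indicator hs]
  refine lintegral_congr fun u => ?_
  simp only [Set.indicator]
  split
  · simp only [one_mul]
  · simp

section step
variable {ι : Type*} [DecidableEq ι]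

lemma step_density (a : ι → ℝ) {s : Finset ι} (hs : s.Nonempty) {j : ι} (hj : j ∉ s)
    (hpos : ∀ i ∈ insert j s, 0 < a i) (u : ℝ) :
    ∫⁻ t, ENNReal.ofReal (gdens a s t) *
        ENNReal.ofReal (if u - t ∈ Set.Icc 0 (a j) then 1 / a j else 0)
      = ENNReal.ofReal (gdens a (insert j s) u) := by
  have haj : 0 < a j := hpos j (mem_insert_self j s)
  have hg0 : ∀ x, 0 ≤ gdens a s x :=
    gdens_nonneg a hs (fun i hi => hpos i (mem_insert_of_mem hi))
  set φ : ℝ → ℝ := fun t => gdens a s t * (if u - t ∈ Set.Icc 0 (a j) then 1 / a j else 0)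
    with hφ
  have hφeq : ∀ t, ENNReal.ofReal (gdens a s t) *
      ENNReal.ofReal (if u - t ∈ Set.Icc 0 (a j) then 1 / a j else 0) = ENNReal.ofReal (φ t) := by
    intro t
    rw [hφ]
    rw [ENNReal.ofReal_mul' (by
      split_ifs
      · exact le_of_lt (one_div_pos.mpr haj)
      · exact le_rfl)]
  rw [lintegral_congr hφeq]
  have hind : φ = Set.indicator (Set.Icc (u - a j) u) (fun t => gdens a s t * (1 / a j)) := by
    funext t
    simp only [hφ, Set.indicator, Set.mem_Icc]
    by_cases h : u - a j ≤ t ∧ t ≤ u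
    · rw [if_pos h, if_pos (by constructor <;> [linarith [h.2]; linarith [h.1]])]
    · rw [if_neg h, if_neg (by intro hc; exact h ⟨by linarith [hc.2], by linarith [hc.1]⟩),
        mul_zero]
  have hii : IntegrableOn (fun t => gdens a s t * (1 / a j)) (Set.Icc (u - a j) u) volume := by
    rw [integrableOn_Icc_iff_integrableOn_Ioc]
    exact ((gdens_intervalIntegrable a s (u - a j) u).mul_const _).1
  have hint : Integrable φ volume := by
    rw [hind]
    exact hii.integrable_indicator measurableSet_Icc
  have hnn : 0 ≤ᵐ[volume] φ := by
    filter_upwards with t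
    refine mul_nonneg (hg0 t) ?_
    split_ifs
    · exact le_of_lt (one_div_pos.mpr haj)
    · exact le_rfl
  rw [← ofReal_integral_eq_lintegral_ofReal hint hnn]
  congr 1
  rw [hind, integral_indicator measurableSet_Icc, integral_Icc_eq_integral_Ioc,
    ← intervalIntegral.integral_of_le (by linarith), intervalIntegral.integral_mul_const,
    gdens_insert a hs hj hpos u]
  ring

end step

/-- If `X₁, …, Xₙ` (`n ≥ 2`) are independent random variables with `Xᵢ` uniform
on `[0, aᵢ]` (`aᵢ > 0`), then `Sₙ = X₁ + ⋯ + Xₙ` has density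
`h̃ₙ(x) = (1/((n-1)! ∏ᵢ aᵢ)) (x^{n-1} + ∑_{i=1}^{n} (-1)^i
  ∑_{1 ≤ j₁ < ⋯ < jᵢ ≤ n} ((x - ∑ₗ a_{jₗ})₊)^{n-1})`
for `0 ≤ x ≤ a₁ + ⋯ + aₙ` and `0` otherwise, where `y₊ = max y 0` and the
inner sum is over all `i`-element subsets of `{1, …, n}`. -/
theorem sum_indep_uniform_density
    {Ω : Type*} [MeasurableSpace Ω] (μ : Measure Ω) [IsProbabilityMeasure μ]
    (n : ℕ) (hn : 2 ≤ n) (a : Fin n → ℝ) (ha : ∀ i, 0 < a i)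
    (X : Fin n → Ω → ℝ) (hmeas : ∀ i, Measurable (X i))
    (hindep : iIndepFun X μ)
    (hlaw : ∀ i, Measure.map (X i) μ =
      volume.withDensity fun x =>
        ENNReal.ofReal (if x ∈ Set.Icc 0 (a i) then 1 / a i else 0)) :
    Measure.map (fun ω => ∑ i : Fin n, X i ω) μ =
      volume.withDensity fun x =>
        ENNReal.ofReal (if x ∈ Set.Icc 0 (∑ i : Fin n, a i) then
          (1 / (((n - 1).factorial : ℝ) * ∏ i : Fin n, a i)) *
            (x ^ (n - 1) +
              ∑ i ∈ Finset.Icc 1 n, (-1 : ℝ) ^ i *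
                ∑ S ∈ Finset.powersetCard i (Finset.univ : Finset (Fin n)),
                  max (x - ∑ l ∈ S, a l) 0 ^ (n - 1))
        else 0) := by
  classical
  -- Step 1: the law of a partial sum is `gdens`.
  have key : ∀ s : Finset (Fin n), s.Nonempty →
      Measure.map (fun ω => ∑ i ∈ s, X i ω) μ =
        volume.withDensity (fun x => ENNReal.ofReal (gdens a s x)) := by
    intro s hs
    induction hs using Finset.Nonempty.cons_induction with
    | singleton i =>
      have h1 : (fun ω => ∑ k ∈ ({i} : Finset (Fin n)), X k ω) = X i := by
        funext ω; simp
      rw [h1, hlaw i]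
      apply withDensity_congr_ae
      have hnull : volume ({0} : Set ℝ) = 0 := Real.volume_singleton
      have hae : ∀ᵐ x : ℝ ∂volume, x ≠ 0 := by
        rw [ae_iff]
        convert hnull using 2
        ext x; simp
      filter_upwards [hae] with x hx
      congr 1
      rw [gdens_singleton]
      rcases lt_trichotomy x 0 with h | h | h
      · rw [if_neg (by intro hc; exact absurd hc.1 (not_le.mpr h)),
          pos_of_nonpos h.le, pos_of_nonpos (by have := (ha i).le; linarith)]
        ring
      · exact absurd h hx
      · have hposx : pos x 0 = 1 := by unfold pos; rw [if_pos h, pow_zero]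
        rcases le_or_gt x (a i) with h2 | h2
        · rw [if_pos ⟨h.le, h2⟩, hposx, pos_of_nonpos (by linarith)]
          ring
        · rw [if_neg (by intro hc; exact absurd hc.2 (not_le.mpr h2)), hposx]
          have : pos (x - a i) 0 = 1 := by unfold pos; rw [if_pos (by linarith), pow_zero]
          rw [this]
          ring
    | cons j s hj hs ih =>
      rw [Finset.cons_eq_insert]
      have hposins : ∀ i ∈ insert j s, 0 < a i := fun i _ => ha i
      have hSfun : (∑ i ∈ s, X i) = (fun ω => ∑ i ∈ s, X i ω) := by
        funext ω; exact Finset.sum_apply ω s X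
      have hmS : Measurable (∑ i ∈ s, X i) :=
        hSfun ▸ Finset.measurable_sum s (fun i _ => hmeas i)
      have hindep2 : IndepFun (∑ i ∈ s, X i) (X j) μ :=
        hindep.indepFun_finset_sum_of_notMem hmeas hj
      have hpair := (indepFun_iff_map_prod_eq_prod_map_map hmS.aemeasurable
        (hmeas j).aemeasurable).mp hindep2
      have hsum : (fun ω => ∑ i ∈ insert j s, X i ω)
          = (fun p : ℝ × ℝ => p.1 + p.2) ∘ (fun ω => ((∑ i ∈ s, X i) ω, X j ω)) := by
        funext ω
        simp only [Function.comp_apply, Finset.sum_apply]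
        rw [Finset.sum_insert hj]
        ring
      rw [hsum, ← Measure.map_map (by fun_prop) (hmS.prodMk (hmeas j)), hpair,
        hSfun, ih, hlaw j]
      have hmf : Measurable (fun x => ENNReal.ofReal (gdens a s x)) :=
        ENNReal.measurable_ofReal.comp (gdens_measurable a s)
      have hmg : Measurable (fun x : ℝ =>
          ENNReal.ofReal (if x ∈ Set.Icc 0 (a j) then 1 / a j else 0)) :=
        ENNReal.measurable_ofReal.comp (Measurable.ite measurableSet_Icc
          measurable_const measurable_const)
      rw [conv_withDensity _ _ hmf hmg]
      congr 1
      funext u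
      exact step_density a hs hj hposins u
  -- Step 2: identify `gdens univ` with the stated density.
  have huniv : (Finset.univ : Finset (Fin n)).Nonempty :=
    ⟨⟨0, by omega⟩, Finset.mem_univ _⟩
  have hkey := key Finset.univ huniv
  rw [hkey]
  congr 1
  funext x
  congr 1
  have hcard : (Finset.univ : Finset (Fin n)).card = n := by
    rw [Finset.card_univ, Fintype.card_fin]
  have hk1 : 1 ≤ n - 1 := by omega
  have hTnn : ∀ T : Finset (Fin n), 0 ≤ ∑ i ∈ T, a i :=
    fun T => Finset.sum_nonneg (fun i _ => (ha i).le)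
  by_cases hx : x ∈ Set.Icc 0 (∑ i : Fin n, a i)
  · rw [if_pos hx]
    unfold gdens
    simp only [hcard]
    congr 1
    rw [Finset.sum_powerset, hcard]
    have hsplit : Finset.range (n+1) = insert 0 (Finset.Icc 1 n) := by
      ext m; simp only [Finset.mem_range, Finset.mem_insert, Finset.mem_Icc]; omega
    rw [hsplit, Finset.sum_insert (by simp)]
    congr 1
    · rw [Finset.powersetCard_zero, Finset.sum_singleton]
      simp only [Finset.card_empty, pow_zero, one_mul, Finset.sum_empty, sub_zero]
      rw [pos_eq_max_pow hk1, max_eq_left hx.1]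
    · refine Finset.sum_congr rfl (fun i hi => ?_)
      rw [Finset.mul_sum]
      refine Finset.sum_congr rfl (fun T hT => ?_)
      have hTc : T.card = i := (Finset.mem_powersetCard.mp hT).2
      rw [pos_eq_max_pow hk1, hTc]
  · rw [if_neg hx]
    simp only [Set.mem_Icc, not_and_or, not_le] at hx
    rcases hx with hx | hx
    · -- x < 0
      unfold gdens
      rw [Finset.sum_eq_zero, mul_zero]
      intro T _
      rw [pos_of_nonpos (by have := hTnn T; linarith)]
      ring
    · -- x > A
      unfold gdens
      have hcg : ∀ T ∈ (Finset.univ : Finset (Fin n)).powerset,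
          (-1:ℝ)^T.card * pos (x - ∑ i ∈ T, a i) ((Finset.univ : Finset (Fin n)).card - 1)
            = (-1:ℝ)^T.card * (x - ∑ i ∈ T, a i)^(n-1) := by
        intro T _
        have hTle : ∑ i ∈ T, a i ≤ ∑ i : Fin n, a i :=
          Finset.sum_le_sum_of_subset_of_nonneg (Finset.subset_univ T)
            (fun i _ _ => (ha i).le)
        have hpos : 0 < x - ∑ i ∈ T, a i := by linarith
        rw [hcard]
        unfold pos
        rw [if_pos hpos]
      rw [Finset.sum_congr rfl hcg, alt_sum_pow a Finset.univ (n-1) (by omega) x, mul_zero]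
end

section
/- For all integers m ≥ 1, n ≥ 2 and positive reals a_1, …, a_n, with A = a_1 + ⋯ + a_n, one has (1/((n−1)! ∏_{i=1}^{n} a_i)) · [ A^{m+n}/(m+n) + B(n) ] = ∑_{i_1 + ⋯ + i_n = m} (m!/(i_1! ⋯ i_n!)) · (a_1^{i_1}/(i_1+1)) ⋯ (a_n^{i_n}/(i_n+1)), where B(n) = ∑_{i=1}^{n} (−1)^i ∑_{1 ≤ j_1 < ⋯ < j_i ≤ n} [ ∑_{k=0}^{n−1} C(n−1,k) (−∑_{l=1}^{i} a_{j_l})^{n−1−k} · (A^{k+m+1} − (∑_{l=1}^{i} a_{j_l})^{k+m+1})/(k+m+1) ], and the right-hand sum ranges over all n-tuples of nonnegative integers summing to m. -/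
open Finset Polynomial


lemma aux_comp_degree (p : ℝ[X]) (c : ℝ) (N : ℕ) (hp : p.degree < (N + 1 : ℕ)) :
    (p - p.comp (X + C c)).degree < (N : ℕ) := by
  by_cases hp0 : p.natDegree = 0
  · obtain ⟨r, rfl⟩ := Polynomial.natDegree_eq_zero.mp hp0
    simp [Polynomial.C_comp]
  · have hpne : p ≠ 0 := fun h => hp0 (by simp [h])
    have h1 : (p.comp (X + C c)).natDegree = p.natDegree := by
      rw [natDegree_comp, natDegree_X_add_C, mul_one]
    have hlc : (p.comp (X + C c)).leadingCoeff = p.leadingCoeff := by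
      rw [leadingCoeff_comp (by simp [natDegree_X_add_C]), (monic_X_add_C c).leadingCoeff,
        one_pow, mul_one]
    have hcne : p.comp (X + C c) ≠ 0 := by
      intro h
      apply hpne
      rw [← leadingCoeff_eq_zero, ← hlc, h, leadingCoeff_zero]
    have hdeg : p.degree = (p.comp (X + C c)).degree := by
      rw [degree_eq_natDegree hcne, degree_eq_natDegree hpne, h1]
    have := degree_sub_lt hdeg hpne hlc.symm
    refine lt_of_lt_of_le this ?_
    rw [degree_eq_natDegree hpne] at hp ⊢
    have : p.natDegree < N + 1 := by exact_mod_cast hp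
    exact_mod_cast Nat.lt_succ_iff.mp this

lemma aux_mixed_diff {ι : Type*} [DecidableEq ι] (t : Finset ι) (b : ι → ℝ) :
    ∀ p : ℝ[X], p.degree < (t.card : ℕ) →
      ∑ S ∈ t.powerset, (-1 : ℝ) ^ S.card * p.eval (∑ l ∈ S, b l) = 0 := by
  induction t using Finset.induction_on with
  | empty =>
    intro p hp
    have hp0 : p = 0 := by
      rw [Finset.card_empty] at hp
      rw [← Polynomial.degree_eq_bot]
      exact Nat.WithBot.lt_zero_iff.mp (by exact_mod_cast hp)
    simp [hp0]
  | @insert c s ha ih =>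
    intro p hp
    rw [Finset.sum_powerset_insert ha]
    have hins : ∀ S ∈ s.powerset, (-1 : ℝ) ^ (insert c S).card * p.eval (∑ l ∈ insert c S, b l)
        = -((-1 : ℝ) ^ S.card * p.eval ((∑ l ∈ S, b l) + b c)) := by
      intro S hS
      have hcS : c ∉ S := fun hmem => ha (Finset.mem_powerset.mp hS hmem)
      rw [Finset.card_insert_of_notMem hcS, Finset.sum_insert hcS, pow_succ]
      ring_nf
    rw [Finset.sum_congr rfl hins, ← Finset.sum_add_distrib]
    have hcomb : ∀ S ∈ s.powerset,
        (-1 : ℝ) ^ S.card * p.eval (∑ l ∈ S, b l)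
          + -((-1 : ℝ) ^ S.card * p.eval ((∑ l ∈ S, b l) + b c))
        = (-1 : ℝ) ^ S.card * (p - p.comp (X + C (b c))).eval (∑ l ∈ S, b l) := by
      intro S _
      rw [Polynomial.eval_sub, Polynomial.eval_comp]
      simp only [Polynomial.eval_add, Polynomial.eval_X, Polynomial.eval_C]
      ring
    rw [Finset.sum_congr rfl hcomb]
    apply ih
    apply aux_comp_degree
    rwa [Finset.card_insert_of_notMem ha] at hp

lemma aux_beta (N : ℕ) : ∀ m : ℕ, ∑ k ∈ Finset.range (N + 1),
    (-1 : ℝ) ^ k * (N.choose k) / (k + m + 1)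
    = (N.factorial * m.factorial : ℝ) / (N + m + 1).factorial := by
  induction N with
  | zero =>
    intro m
    have hm : (m.factorial : ℝ) ≠ 0 := by positivity
    simp only [Finset.sum_range_one, pow_zero, Nat.choose_self, Nat.cast_one, one_mul,
      Nat.cast_zero, Nat.factorial_zero, Nat.zero_add, Nat.factorial_succ]
    push_cast
    rw [div_eq_div_iff (by positivity) (by positivity)]
    ring
  | succ N ih =>
    intro m
    have h1 := ih (m + 1)
    have h2 := ih m
    rw [Finset.sum_range_succ'] at h2
    rw [Finset.sum_range_succ']
    have expand : ∑ k ∈ Finset.range (N + 1),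
        (-1:ℝ) ^ (k+1) * (((N+1).choose (k+1) : ℕ) : ℝ) / (((k+1 : ℕ) : ℝ) + (m : ℝ) + 1)
        = (∑ k ∈ Finset.range (N + 1),
            -((-1:ℝ) ^ k * ((N.choose k : ℕ) : ℝ) / ((k : ℝ) + (((m+1) : ℕ) : ℝ) + 1)))
          + ∑ k ∈ Finset.range (N + 1),
            (-1:ℝ) ^ (k+1) * ((N.choose (k+1) : ℕ) : ℝ) / (((k+1 : ℕ) : ℝ) + (m : ℝ) + 1) := by
      rw [← Finset.sum_add_distrib]
      refine Finset.sum_congr rfl fun k _ => ?_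
      rw [Nat.choose_succ_succ]
      push_cast
      ring
    rw [expand]
    have hzero : ∑ k ∈ Finset.range (N + 1),
        (-1:ℝ) ^ (k+1) * ((N.choose (k+1) : ℕ) : ℝ) / (((k+1 : ℕ) : ℝ) + (m : ℝ) + 1)
        = ∑ k ∈ Finset.range N,
        (-1:ℝ) ^ (k+1) * ((N.choose (k+1) : ℕ) : ℝ) / (((k+1 : ℕ) : ℝ) + (m : ℝ) + 1) := by
      rw [Finset.sum_range_succ, Nat.choose_succ_self]
      simp
    have h2' : ∑ k ∈ Finset.range N,
        (-1:ℝ) ^ (k+1) * ((N.choose (k+1) : ℕ) : ℝ) / (((k+1 : ℕ) : ℝ) + (m : ℝ) + 1)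
        = (N.factorial * m.factorial : ℝ) / (N + m + 1).factorial
          - (-1:ℝ) ^ 0 * ((N.choose 0 : ℕ) : ℝ) / (((0 : ℕ) : ℝ) + (m : ℝ) + 1) := by
      linarith [h2]
    rw [hzero, h2', Finset.sum_neg_distrib, h1]
    -- now pure arithmetic
    rw [show N + (m + 1) + 1 = (N + m + 1) + 1 from by omega,
        show N + 1 + m + 1 = (N + m + 1) + 1 from by omega,
        Nat.factorial_succ (N + m + 1), Nat.factorial_succ m, Nat.factorial_succ N]
    have hf1 : ((N + m + 1).factorial : ℝ) ≠ 0 := by positivity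
    have hfm : (m.factorial : ℝ) ≠ 0 := by positivity
    have hfN : (N.factorial : ℝ) ≠ 0 := by positivity
    have hm1 : ((m : ℝ) + 1) ≠ 0 := by positivity
    have hNm2 : ((N : ℝ) + (m : ℝ) + 1 + 1) ≠ 0 := by positivity
    simp only [Nat.choose_zero_right, Nat.cast_one, pow_zero, one_mul, Nat.cast_zero]
    push_cast
    field_simp
    ring

lemma aux_multinomial_subset {ι : Type*} [DecidableEq ι] {s t : Finset ι} (hst : s ⊆ t)
    (f : ι → ℕ) (hf : ∀ i, f i ≠ 0 → i ∈ s) : Nat.multinomial t f = Nat.multinomial s f := by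
  have hsum : ∑ i ∈ t, f i = ∑ i ∈ s, f i :=
    (Finset.sum_subset hst (fun i _ hi => by
      by_contra h; exact hi (hf i h))).symm
  have hprod : ∏ i ∈ t, (f i).factorial = ∏ i ∈ s, (f i).factorial :=
    (Finset.prod_subset hst (fun i _ hi => by
      have : f i = 0 := by by_contra h; exact hi (hf i h)
      rw [this, Nat.factorial_zero])).symm
  have h1 := Nat.multinomial_spec t f
  have h2 := Nat.multinomial_spec s f
  rw [hsum, hprod] at h1
  exact Nat.eq_of_mul_eq_mul_left (Finset.prod_pos fun i _ => Nat.factorial_pos _)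
    (h1.trans h2.symm)

lemma aux_ie_core (n : ℕ) (T : Finset (Fin n)) :
    ∑ S ∈ (Finset.univ : Finset (Fin n)).powerset,
        (if T ⊆ S then (-1 : ℝ) ^ (n - S.card) else 0)
    = if T = Finset.univ then 1 else 0 := by
  have key : ∑ S ∈ (Finset.univ : Finset (Fin n)).powerset,
      (if T ⊆ S then (-1 : ℝ) ^ (n - S.card) else 0)
      = ∑ U ∈ (Finset.univ : Finset (Fin n)).powerset,
        (if U ⊆ Tᶜ then (-1 : ℝ) ^ U.card else 0) := by
    refine Finset.sum_nbij' (fun S => Sᶜ) (fun U => Uᶜ) ?_ ?_ ?_ ?_ ?_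
    · intro S _; simp
    · intro U _; simp
    · intro S _; simp
    · intro U _; simp
    · intro S _
      have h1 : T ⊆ S ↔ Sᶜ ⊆ Tᶜ := by
        constructor
        · exact fun h => Finset.compl_subset_compl.mpr h
        · intro h; simpa using Finset.compl_subset_compl.mpr h
      have h2 : n - S.card = Sᶜ.card := by
        rw [Finset.card_compl, Fintype.card_fin]
      rw [h2, if_congr h1 rfl rfl]
  rw [key]
  have hfil : ∀ U ∈ (Finset.univ : Finset (Fin n)).powerset,
      (if U ⊆ Tᶜ then (-1 : ℝ) ^ U.card else 0)
      = (if U ∈ Tᶜ.powerset then (-1 : ℝ) ^ U.card else 0) := by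
    intro U _; simp [Finset.mem_powerset]
  rw [Finset.sum_congr rfl hfil, Finset.sum_ite_mem, Finset.powerset_univ,
    Finset.univ_inter]
  have := @Finset.sum_powerset_neg_one_pow_card (Fin n) _ Tᶜ
  have hcast : ∑ U ∈ Tᶜ.powerset, (-1 : ℝ) ^ U.card
      = ((∑ U ∈ Tᶜ.powerset, (-1 : ℤ) ^ U.card : ℤ) : ℝ) := by push_cast; rfl
  rw [hcast, this]
  by_cases hT : T = Finset.univ
  · simp [hT]
  · have : Tᶜ ≠ ∅ := by
      simp only [ne_eq, Finset.compl_eq_empty_iff]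
      exact hT
    simp [this, hT]

lemma aux_inclusion_exclusion (n M : ℕ) (b : Fin n → ℝ) :
    ∑ S ∈ (Finset.univ : Finset (Fin n)).powerset,
        (-1 : ℝ) ^ (n - S.card) * (∑ l ∈ S, b l) ^ M
    = ∑ g ∈ (Finset.piAntidiag (Finset.univ : Finset (Fin n)) M).filter
        (fun g : Fin n → ℕ => ∀ i, g i ≠ 0),
        (Nat.multinomial Finset.univ g : ℝ) * ∏ i, b i ^ g i := by
  -- Step 1: expand each power by the multinomial theorem, in "univ" form
  have step1 : ∀ S ∈ (Finset.univ : Finset (Fin n)).powerset,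
      (-1 : ℝ) ^ (n - S.card) * (∑ l ∈ S, b l) ^ M
      = ∑ g ∈ Finset.piAntidiag Finset.univ M,
          (if ∀ i, g i ≠ 0 → i ∈ S then
            (-1 : ℝ) ^ (n - S.card) * ((Nat.multinomial Finset.univ g : ℝ) * ∏ i, b i ^ g i)
          else 0) := by
    intro S _
    rw [Finset.sum_pow_eq_sum_piAntidiag S b M]
    have hSsub : Finset.piAntidiag S M
        = (Finset.piAntidiag (Finset.univ : Finset (Fin n)) M).filter
            (fun g : Fin n → ℕ => ∀ i, g i ≠ 0 → i ∈ S) := by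
      ext g
      simp only [Finset.mem_piAntidiag, Finset.mem_filter, Finset.mem_univ, true_and]
      constructor
      · rintro ⟨hsum, hsupp⟩
        refine ⟨⟨?_, fun i _ => trivial⟩, hsupp⟩
        rw [← hsum]
        exact (Finset.sum_subset (Finset.subset_univ S) (fun i _ hi => by
          by_contra h; exact hi (hsupp i h))).symm
      · rintro ⟨⟨hsum, _⟩, hsupp⟩
        refine ⟨?_, hsupp⟩
        rw [← hsum]
        exact Finset.sum_subset (Finset.subset_univ S) (fun i _ hi => by
          by_contra h; exact hi (hsupp i h))
    rw [hSsub, Finset.sum_filter, Finset.mul_sum]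
    refine Finset.sum_congr rfl fun g hg => ?_
    by_cases hsupp : ∀ i, g i ≠ 0 → i ∈ S
    · rw [if_pos hsupp, if_pos hsupp]
      rw [aux_multinomial_subset (Finset.subset_univ S) g hsupp]
      congr 1
      congr 1
      exact Finset.prod_subset (Finset.subset_univ S) (fun i _ hi => by
        have : g i = 0 := by by_contra h; exact hi (hsupp i h)
        rw [this, pow_zero])
    · simp [hsupp]
  rw [Finset.sum_congr rfl step1, Finset.sum_comm]
  -- Step 2: inner sum over S
  have step2 : ∀ g ∈ Finset.piAntidiag (Finset.univ : Finset (Fin n)) M,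
      ∑ S ∈ (Finset.univ : Finset (Fin n)).powerset,
        (if ∀ i, g i ≠ 0 → i ∈ S then
          (-1 : ℝ) ^ (n - S.card) * ((Nat.multinomial Finset.univ g : ℝ) * ∏ i, b i ^ g i)
        else 0)
      = (if ∀ i, g i ≠ 0 then 1 else 0)
          * ((Nat.multinomial Finset.univ g : ℝ) * ∏ i, b i ^ g i) := by
    intro g _
    set T : Finset (Fin n) := Finset.univ.filter (fun i => g i ≠ 0) with hT
    have hTS : ∀ S : Finset (Fin n), (∀ i, g i ≠ 0 → i ∈ S) ↔ T ⊆ S := by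
      intro S
      constructor
      · intro h i hi
        rw [hT, Finset.mem_filter] at hi
        exact h i hi.2
      · intro h i hi
        exact h (by rw [hT, Finset.mem_filter]; exact ⟨Finset.mem_univ i, hi⟩)
    have hcond : (∀ i, g i ≠ 0) ↔ T = Finset.univ := by
      rw [hT]
      constructor
      · intro h; ext i; simp [h i]
      · intro h i
        have hi : i ∈ T := by rw [hT, h]; exact Finset.mem_univ i
        rw [hT] at hi
        exact (Finset.mem_filter.mp hi).2
    have := aux_ie_core n T
    calc ∑ S ∈ (Finset.univ : Finset (Fin n)).powerset,
        (if ∀ i, g i ≠ 0 → i ∈ S then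
          (-1 : ℝ) ^ (n - S.card) * ((Nat.multinomial Finset.univ g : ℝ) * ∏ i, b i ^ g i)
        else 0)
        = (∑ S ∈ (Finset.univ : Finset (Fin n)).powerset,
            (if T ⊆ S then (-1 : ℝ) ^ (n - S.card) else 0))
            * ((Nat.multinomial Finset.univ g : ℝ) * ∏ i, b i ^ g i) := by
          rw [Finset.sum_mul]
          refine Finset.sum_congr rfl fun S _ => ?_
          rw [if_congr (hTS S) rfl rfl, ite_mul, zero_mul]
      _ = _ := by
          rw [this, if_congr hcond.symm rfl rfl]
  rw [Finset.sum_congr rfl step2]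
  rw [Finset.sum_filter]
  refine Finset.sum_congr rfl fun g _ => ?_
  by_cases h : ∀ i, g i ≠ 0 <;> simp [h]

lemma aux_rhs (n m : ℕ) (hn : 1 ≤ n) (b : Fin n → ℝ) :
    ∑ g ∈ (Finset.piAntidiag (Finset.univ : Finset (Fin n)) (m + n)).filter
        (fun g : Fin n → ℕ => ∀ i, g i ≠ 0),
        (Nat.multinomial Finset.univ g : ℝ) * ∏ i, b i ^ g i
    = (((m + n).factorial : ℝ) / (m.factorial : ℝ)) * (∏ i, b i) *
      ∑ f ∈ Finset.Nat.antidiagonalTuple n m,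
        (Nat.multinomial Finset.univ f : ℝ) * ∏ k, b k ^ f k / (f k + 1) := by
  rw [Finset.mul_sum]
  refine Finset.sum_nbij' (fun g => fun i => g i - 1) (fun f => fun i => f i + 1)
    ?_ ?_ ?_ ?_ ?_
  · intro g hg
    rw [Finset.mem_filter, Finset.mem_piAntidiag] at hg
    obtain ⟨⟨hsum, -⟩, hpos⟩ := hg
    have hsum' : ∑ i : Fin n, g i = m + n := hsum
    rw [Finset.Nat.mem_antidiagonalTuple]
    show ∑ i : Fin n, (g i - 1) = m
    have hone : ∀ i : Fin n, 1 ≤ g i := fun i => Nat.one_le_iff_ne_zero.mpr (hpos i)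
    have key : (∑ i : Fin n, (g i - 1)) + ∑ _i : Fin n, 1 = m + n := by
      rw [← Finset.sum_add_distrib, Finset.sum_congr rfl
        (fun i (_ : i ∈ Finset.univ) => show g i - 1 + 1 = g i from by
          have := hone i; omega)]
      exact hsum'
    have hcard : ∑ _i : Fin n, (1 : ℕ) = n := by simp
    omega
  · intro f hf
    rw [Finset.Nat.mem_antidiagonalTuple] at hf
    rw [Finset.mem_filter, Finset.mem_piAntidiag]
    refine ⟨⟨?_, fun i _ => Finset.mem_univ i⟩, fun i => Nat.succ_ne_zero _⟩
    have : (∑ i : Fin n, (f i + 1)) = (∑ i : Fin n, f i) + ∑ _i : Fin n, 1 :=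
      Finset.sum_add_distrib
    have hcard : ∑ _i : Fin n, (1 : ℕ) = n := by simp
    show ∑ i : Fin n, (f i + 1) = m + n
    rw [this, hcard, hf]
  · intro g hg
    rw [Finset.mem_filter] at hg
    funext i
    show g i - 1 + 1 = g i
    have := Nat.one_le_iff_ne_zero.mpr (hg.2 i)
    omega
  · intro f _
    funext i
    show f i + 1 - 1 = f i
    omega
  · intro g hg
    rw [Finset.mem_filter, Finset.mem_piAntidiag] at hg
    obtain ⟨⟨hsum, -⟩, hpos⟩ := hg
    have hsum' : ∑ i : Fin n, g i = m + n := hsum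
    set f : Fin n → ℕ := fun i => g i - 1 with hfdef
    have hgf : ∀ i, g i = f i + 1 := fun i => by
      have := Nat.one_le_iff_ne_zero.mpr (hpos i); simp only [hfdef]; omega
    have hfsum : ∑ i : Fin n, f i = m := by
      have h2 : ∑ i : Fin n, (f i + 1) = ∑ i : Fin n, g i :=
        Finset.sum_congr rfl fun i _ => (hgf i).symm
      rw [Finset.sum_add_distrib] at h2
      have hcard : ∑ _i : Fin n, (1 : ℕ) = n := by simp
      omega
    have hMf : (∏ i : Fin n, ((f i).factorial : ℝ)) * (Nat.multinomial Finset.univ f : ℝ)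
        = (m.factorial : ℝ) := by
      have h := Nat.multinomial_spec (Finset.univ : Finset (Fin n)) f
      have h' : Finset.univ.sum f = m := hfsum
      rw [h'] at h
      exact_mod_cast congrArg (Nat.cast : ℕ → ℝ) h
    have hMg : (∏ i : Fin n, ((g i).factorial : ℝ)) * (Nat.multinomial Finset.univ g : ℝ)
        = ((m + n).factorial : ℝ) := by
      have h := Nat.multinomial_spec (Finset.univ : Finset (Fin n)) g
      rw [hsum] at h
      exact_mod_cast congrArg (Nat.cast : ℕ → ℝ) h
    have hgfact : ∀ i, ((g i).factorial : ℝ) = ((f i : ℝ) + 1) * ((f i).factorial : ℝ) := by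
      intro i
      rw [hgf i, Nat.factorial_succ]
      push_cast
      ring
    have hbg : ∀ i, b i ^ g i = b i ^ f i * b i := fun i => by rw [hgf i, pow_succ]
    have hfne : (∏ i : Fin n, ((f i).factorial : ℝ)) ≠ 0 := by positivity
    have hf1ne : (∏ i : Fin n, ((f i : ℝ) + 1)) ≠ 0 := by positivity
    have hmne : (m.factorial : ℝ) ≠ 0 := by positivity
    have hMfv : (Nat.multinomial Finset.univ f : ℝ)
        = (m.factorial : ℝ) / ∏ i : Fin n, ((f i).factorial : ℝ) := by
      field_simp
      linarith [hMf]
    have hMgv : (Nat.multinomial Finset.univ g : ℝ)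
        = ((m + n).factorial : ℝ) /
          ((∏ i : Fin n, ((f i : ℝ) + 1)) * ∏ i : Fin n, ((f i).factorial : ℝ)) := by
      rw [eq_div_iff (by positivity)]
      have hp : ∏ i : Fin n, ((g i).factorial : ℝ)
          = (∏ i : Fin n, ((f i : ℝ) + 1)) * ∏ i : Fin n, ((f i).factorial : ℝ) := by
        rw [← Finset.prod_mul_distrib]
        exact Finset.prod_congr rfl fun i _ => hgfact i
      rw [← hp]
      linarith [hMg]
    show (Nat.multinomial Finset.univ g : ℝ) * ∏ i : Fin n, b i ^ g i
        = ((m + n).factorial : ℝ) / (m.factorial : ℝ) * (∏ i : Fin n, b i) *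
          ((Nat.multinomial Finset.univ f : ℝ) * ∏ k : Fin n, b k ^ f k / ((f k : ℝ) + 1))
    rw [hMgv, hMfv]
    have hprod : ∏ i : Fin n, b i ^ g i = (∏ i : Fin n, b i ^ f i) * ∏ i : Fin n, b i := by
      rw [← Finset.prod_mul_distrib]
      exact Finset.prod_congr rfl fun i _ => hbg i
    have hprod2 : ∏ k : Fin n, b k ^ f k / ((f k : ℝ) + 1)
        = (∏ k : Fin n, b k ^ f k) / ∏ k : Fin n, ((f k : ℝ) + 1) := by
      rw [Finset.prod_div_distrib]
    rw [hprod, hprod2]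
    field_simp

noncomputable def auxG (n m : ℕ) (A x : ℝ) : ℝ :=
  ∑ k ∈ Finset.range n, ((n - 1).choose k : ℝ) * (-x) ^ (n - 1 - k) *
    ((A ^ (k + m + 1) - x ^ (k + m + 1)) / (k + m + 1))





lemma aux_step1 (m n : ℕ) (hn : 1 ≤ n) (a : Fin n → ℝ) (A : ℝ) :
    ∑ S ∈ (Finset.univ : Finset (Fin n)).powerset,
        (-1 : ℝ) ^ S.card * auxG n m A (∑ l ∈ S, a l)
    = A ^ (m + n) / (m + n) + ∑ i ∈ Finset.Icc 1 n, (-1 : ℝ) ^ i *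
        ∑ S ∈ Finset.powersetCard i (Finset.univ : Finset (Fin n)),
          auxG n m A (∑ l ∈ S, a l) := by
  rw [Finset.sum_powerset]
  have hcard : (Finset.univ : Finset (Fin n)).card = n := by simp
  rw [hcard]
  have hcongr : ∀ i ∈ Finset.range (n + 1),
      ∑ S ∈ Finset.powersetCard i (Finset.univ : Finset (Fin n)),
        (-1 : ℝ) ^ S.card * auxG n m A (∑ l ∈ S, a l)
      = (-1 : ℝ) ^ i * ∑ S ∈ Finset.powersetCard i (Finset.univ : Finset (Fin n)),
          auxG n m A (∑ l ∈ S, a l) := by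
    intro i _
    rw [Finset.mul_sum]
    exact Finset.sum_congr rfl fun S hS => by
      rw [(Finset.mem_powersetCard.mp hS).2]
  rw [Finset.sum_congr rfl hcongr]
  have hr : Finset.range (n + 1) = insert 0 (Finset.Icc 1 n) := by
    ext x
    simp only [Finset.mem_range, Finset.mem_insert, Finset.mem_Icc]
    omega
  rw [hr, Finset.sum_insert (by simp)]
  congr 1
  -- the i = 0 term equals A^(m+n)/(m+n)
  rw [Finset.powersetCard_zero, Finset.sum_singleton, pow_zero, one_mul, Finset.sum_empty]
  unfold auxG
  rw [Finset.sum_eq_single_of_mem (n - 1) (Finset.mem_range.mpr (by omega))]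
  · rw [Nat.choose_self, neg_zero, Nat.sub_self, pow_zero,
      zero_pow (by omega : n - 1 + m + 1 ≠ 0), Nat.cast_one, one_mul, one_mul, sub_zero,
      show n - 1 + m + 1 = m + n from by omega]
    congr 1
    push_cast [Nat.cast_sub (show 1 ≤ n from hn)]
    ring
  · intro k hk hkne
    rw [neg_zero, zero_pow (by rw [Finset.mem_range] at hk; omega : n - 1 - k ≠ 0)]
    ring





lemma aux_step2 (m n : ℕ) (hn : 1 ≤ n) (a : Fin n → ℝ) (A : ℝ) :
    ∑ S ∈ (Finset.univ : Finset (Fin n)).powerset,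
        (-1 : ℝ) ^ S.card * auxG n m A (∑ l ∈ S, a l)
    = (((n - 1).factorial * m.factorial : ℝ) / ((m + n).factorial : ℝ)) *
      ∑ S ∈ (Finset.univ : Finset (Fin n)).powerset,
        (-1 : ℝ) ^ (n - S.card) * (∑ l ∈ S, a l) ^ (m + n) := by
  set q : ℝ[X] := ∑ k ∈ Finset.range n,
    Polynomial.C (((n - 1).choose k : ℝ) * (-1) ^ (n - 1 - k) * A ^ (k + m + 1)
      / ((k : ℝ) + (m : ℝ) + 1)) * Polynomial.X ^ (n - 1 - k) with hqdef
  set β : ℝ := ∑ k ∈ Finset.range n,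
    (-1 : ℝ) ^ (n - 1 - k) * ((n - 1).choose k : ℝ) / ((k : ℝ) + (m : ℝ) + 1) with hβdef
  -- G x = q.eval x - β * x^(m+n)
  have hG : ∀ x : ℝ, auxG n m A x = q.eval x - β * x ^ (m + n) := by
    intro x
    rw [hqdef, Polynomial.eval_finset_sum]
    simp only [Polynomial.eval_mul, Polynomial.eval_C, Polynomial.eval_pow, Polynomial.eval_X]
    rw [hβdef, Finset.sum_mul, ← Finset.sum_sub_distrib]
    unfold auxG
    refine Finset.sum_congr rfl fun k hk => ?_
    have hkn : k < n := Finset.mem_range.mp hk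
    have e1 : x ^ (n - 1 - k) * x ^ (k + m + 1) = x ^ (m + n) := by
      rw [← pow_add]
      congr 1
      omega
    rw [neg_pow]
    calc ((n - 1).choose k : ℝ) * ((-1 : ℝ) ^ (n - 1 - k) * x ^ (n - 1 - k)) *
        ((A ^ (k + m + 1) - x ^ (k + m + 1)) / ((k : ℝ) + (m : ℝ) + 1)) =
        ((n - 1).choose k : ℝ) * (-1) ^ (n - 1 - k) * A ^ (k + m + 1) / ((k : ℝ) + (m : ℝ) + 1)
          * x ^ (n - 1 - k)
        - (-1 : ℝ) ^ (n - 1 - k) * ((n - 1).choose k : ℝ) / ((k : ℝ) + (m : ℝ) + 1)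
          * (x ^ (n - 1 - k) * x ^ (k + m + 1)) := by ring
      _ = _ := by rw [e1]
  have hdeg : q.degree < (((Finset.univ : Finset (Fin n)).card : ℕ) : WithBot ℕ) := by
    have hcard : (Finset.univ : Finset (Fin n)).card = n := by simp
    rw [hcard, hqdef]
    refine lt_of_le_of_lt (Polynomial.degree_sum_le _ _) ?_
    rw [Finset.sup_lt_iff (by exact_mod_cast WithBot.bot_lt_coe n)]
    intro k hk
    refine lt_of_le_of_lt (Polynomial.degree_C_mul_X_pow_le _ _) ?_
    exact_mod_cast (show n - 1 - k < n by omega)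
  have hvanish := aux_mixed_diff Finset.univ a q hdeg
  have hsplit : ∑ S ∈ (Finset.univ : Finset (Fin n)).powerset,
        (-1 : ℝ) ^ S.card * auxG n m A (∑ l ∈ S, a l)
      = ∑ S ∈ (Finset.univ : Finset (Fin n)).powerset,
          (-1 : ℝ) ^ S.card * q.eval (∑ l ∈ S, a l)
        - β * ∑ S ∈ (Finset.univ : Finset (Fin n)).powerset,
            (-1 : ℝ) ^ S.card * (∑ l ∈ S, a l) ^ (m + n) := by
    rw [Finset.mul_sum, ← Finset.sum_sub_distrib]
    refine Finset.sum_congr rfl fun S _ => ?_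
    rw [hG]
    ring
  rw [hsplit, hvanish, zero_sub]
  have hβval : β = (-1 : ℝ) ^ (n - 1) *
      (((n - 1).factorial * m.factorial : ℝ) / ((m + n).factorial : ℝ)) := by
    have hb := aux_beta (n - 1) m
    rw [show n - 1 + 1 = n from by omega] at hb
    rw [show n - 1 + m + 1 = m + n from by omega] at hb
    rw [hβdef, ← hb, Finset.mul_sum]
    refine Finset.sum_congr rfl fun k hk => ?_
    have hkn : k < n := Finset.mem_range.mp hk
    have hsq : ((-1 : ℝ)) ^ k * (-1 : ℝ) ^ k = 1 := by
      rw [← pow_add, ← two_mul, pow_mul]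
      norm_num
    have hpa : (-1 : ℝ) ^ (n - 1 - k) * (-1 : ℝ) ^ k = (-1 : ℝ) ^ (n - 1) := by
      rw [← pow_add, show n - 1 - k + k = n - 1 from by omega]
    have key : (-1 : ℝ) ^ (n - 1) * (-1 : ℝ) ^ k = (-1 : ℝ) ^ (n - 1 - k) := by
      rw [← hpa, mul_assoc, hsq, mul_one]
    rw [← key]
    ring
  rw [hβval]
  have hfinal : ∑ S ∈ (Finset.univ : Finset (Fin n)).powerset,
        (-1 : ℝ) ^ (n - S.card) * (∑ l ∈ S, a l) ^ (m + n)
      = (-1 : ℝ) ^ n * ∑ S ∈ (Finset.univ : Finset (Fin n)).powerset,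
          (-1 : ℝ) ^ S.card * (∑ l ∈ S, a l) ^ (m + n) := by
    rw [Finset.mul_sum]
    refine Finset.sum_congr rfl fun S hS => ?_
    have hcle : S.card ≤ n := by
      have h := Finset.card_le_card (Finset.mem_powerset.mp hS)
      simpa using h
    have hsq : ((-1 : ℝ)) ^ S.card * (-1 : ℝ) ^ S.card = 1 := by
      rw [← pow_add, ← two_mul, pow_mul]
      norm_num
    have hpa : (-1 : ℝ) ^ (n - S.card) * (-1 : ℝ) ^ S.card = (-1 : ℝ) ^ n := by
      rw [← pow_add, show n - S.card + S.card = n from by omega]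
    have key : (-1 : ℝ) ^ n * (-1 : ℝ) ^ S.card = (-1 : ℝ) ^ (n - S.card) := by
      rw [← hpa, mul_assoc, hsq, mul_one]
    rw [← key]
    ring
  rw [hfinal]
  have hpow : (-1 : ℝ) ^ n = (-1 : ℝ) ^ (n - 1) * (-1) := by
    rw [← pow_succ, show n - 1 + 1 = n from by omega]
  rw [hpow]
  ring

open Finset

/-- For integers `m ≥ 1`, `n ≥ 2` and positive reals `a₁, …, aₙ` with
`A = a₁ + ⋯ + aₙ`,
`(1/((n-1)! ∏ᵢ aᵢ)) (A^{m+n}/(m+n) + B(n))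
  = ∑_{i₁+⋯+iₙ=m} (m!/(i₁!⋯iₙ!)) (a₁^{i₁}/(i₁+1)) ⋯ (aₙ^{iₙ}/(iₙ+1))`,
where `B(n) = ∑_{i=1}^{n} (-1)^i ∑_{1 ≤ j₁ < ⋯ < jᵢ ≤ n}
  ∑_{k=0}^{n-1} C(n-1,k) (-∑ₗ a_{jₗ})^{n-1-k}
    (A^{k+m+1} - (∑ₗ a_{jₗ})^{k+m+1})/(k+m+1)`. -/
theorem uniform_general_moment_identity
    (m n : ℕ) (hm : 1 ≤ m) (hn : 2 ≤ n) (a : Fin n → ℝ) (ha : ∀ i, 0 < a i)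
    (A : ℝ) (hA : A = ∑ i : Fin n, a i) :
    (1 / (((n - 1).factorial : ℝ) * ∏ i : Fin n, a i)) *
        (A ^ (m + n) / (m + n) +
          ∑ i ∈ Finset.Icc 1 n, (-1 : ℝ) ^ i *
            ∑ S ∈ Finset.powersetCard i (Finset.univ : Finset (Fin n)),
              ∑ k ∈ Finset.range n, ((n - 1).choose k : ℝ) *
                (-(∑ l ∈ S, a l)) ^ (n - 1 - k) *
                  ((A ^ (k + m + 1) - (∑ l ∈ S, a l) ^ (k + m + 1)) / (k + m + 1))) =
      ∑ f ∈ Finset.Nat.antidiagonalTuple n m,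
        (Nat.multinomial Finset.univ f : ℝ) *
          ∏ k : Fin n, a k ^ f k / (f k + 1) := by
  have hn1 : 1 ≤ n := by omega
  have e : (A ^ (m + n) / (m + n) +
          ∑ i ∈ Finset.Icc 1 n, (-1 : ℝ) ^ i *
            ∑ S ∈ Finset.powersetCard i (Finset.univ : Finset (Fin n)),
              ∑ k ∈ Finset.range n, ((n - 1).choose k : ℝ) *
                (-(∑ l ∈ S, a l)) ^ (n - 1 - k) *
                  ((A ^ (k + m + 1) - (∑ l ∈ S, a l) ^ (k + m + 1)) / (k + m + 1)))
      = ∑ S ∈ (Finset.univ : Finset (Fin n)).powerset,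
          (-1 : ℝ) ^ S.card * auxG n m A (∑ l ∈ S, a l) := (aux_step1 m n hn1 a A).symm
  rw [e, aux_step2 m n hn1 a A, aux_inclusion_exclusion n (m + n) a, aux_rhs n m hn1 a]
  have hP : (0 : ℝ) < ∏ i : Fin n, a i := Finset.prod_pos fun i _ => ha i
  have h1 : ((n - 1).factorial : ℝ) ≠ 0 := by positivity
  have h2 : (m.factorial : ℝ) ≠ 0 := by positivity
  have h3 : ((m + n).factorial : ℝ) ≠ 0 := by positivity
  have h4 : (∏ i : Fin n, a i) ≠ 0 := ne_of_gt hP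
  field_simp
end

section
/- For all integers m ≥ 0, n ≥ 1, and every integer i with 0 ≤ i ≤ n, one has ∫_i^n (x − i)^{n−1} x^m dx = (m!(n−1)!/(m+n)!) ∑_{j=0}^{m} (−1)^j C(m+n, m−j) (n − i)^{n+j} n^{m−j}. -/
open Finset intervalIntegral

lemma beta_integral_aux (a : ℝ) : ∀ (k j : ℕ),
    ∫ x in (0:ℝ)..a, x ^ j * (a - x) ^ k =
      ((j.factorial : ℝ) * (k.factorial : ℝ) / ((j + k + 1).factorial : ℝ)) * a ^ (j + k + 1) := by
  intro k
  induction k with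
  | zero =>
    intro j
    simp only [pow_zero, mul_one, integral_pow, Nat.add_zero, Nat.factorial_one,
      Nat.factorial_succ]
    have h2 : (j.factorial : ℝ) ≠ 0 := Nat.cast_ne_zero.mpr j.factorial_ne_zero
    have h3 : (j : ℝ) + 1 ≠ 0 := by positivity
    push_cast
    field_simp
    ring
  | succ k ih =>
    intro j
    have hj : ((j : ℝ) + 1) ≠ 0 := by positivity
    have hu : ∀ x ∈ Set.uIcc (0:ℝ) a,
        HasDerivAt (fun x : ℝ => (a - x) ^ (k + 1))
          (-((k + 1 : ℝ) * (a - x) ^ k)) x := by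
      intro x _
      have h1 : HasDerivAt (fun x : ℝ => a - x) (-1) x := by
        simpa using (hasDerivAt_id x).const_sub a
      have := (h1.fun_pow (k + 1))
      simpa [mul_comm, mul_assoc, mul_left_comm] using this
    have hv : ∀ x ∈ Set.uIcc (0:ℝ) a,
        HasDerivAt (fun x : ℝ => x ^ (j + 1) / (j + 1)) ((x : ℝ) ^ j) x := by
      intro x _
      have h1 : HasDerivAt (fun x : ℝ => x ^ (j + 1)) ((j + 1 : ℝ) * x ^ j) x := by
        simpa using hasDerivAt_pow (j + 1) x
      have := h1.div_const ((j : ℝ) + 1)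
      simpa [mul_comm, mul_div_assoc, div_self hj] using this
    have hu' : IntervalIntegrable (fun x : ℝ => -((k + 1 : ℝ) * (a - x) ^ k))
        MeasureTheory.volume 0 a := (Continuous.intervalIntegrable (by continuity) _ _)
    have hv' : IntervalIntegrable (fun x : ℝ => (x : ℝ) ^ j)
        MeasureTheory.volume 0 a := (Continuous.intervalIntegrable (by continuity) _ _)
    have ibp := intervalIntegral.integral_mul_deriv_eq_deriv_mul hu hv hu' hv'
    have key : ∫ x in (0:ℝ)..a, x ^ j * (a - x) ^ (k + 1)
        = ((k : ℝ) + 1) / ((j : ℝ) + 1) * ∫ x in (0:ℝ)..a, x ^ (j + 1) * (a - x) ^ k := by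
      have e1 : (∫ x in (0:ℝ)..a, x ^ j * (a - x) ^ (k + 1))
          = ∫ x in (0:ℝ)..a, (a - x) ^ (k + 1) * x ^ j := by
        congr 1; ext x; ring
      rw [e1, ibp]
      rw [← intervalIntegral.integral_const_mul]
      simp only [sub_self, zero_pow (Nat.succ_ne_zero k), zero_mul, zero_pow (Nat.succ_ne_zero j),
        zero_div, mul_zero, sub_zero, zero_sub, ← intervalIntegral.integral_neg]
      congr 1; ext x
      field_simp
    rw [key, ih (j + 1)]
    have h2 : ((j + 1).factorial : ℝ) = ((j : ℝ) + 1) * j.factorial := by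
      rw [Nat.factorial_succ]; push_cast; ring
    have h3 : ((k + 1).factorial : ℝ) = ((k : ℝ) + 1) * k.factorial := by
      rw [Nat.factorial_succ]; push_cast; ring
    have he : j + 1 + k + 1 = j + (k + 1) + 1 := by ring
    rw [he, h2, h3]
    have h4 : ((j + (k + 1) + 1).factorial : ℝ) ≠ 0 :=
      Nat.cast_ne_zero.mpr (Nat.factorial_ne_zero _)
    field_simp

/-- For integers `m ≥ 0`, `n ≥ 1` and `0 ≤ i ≤ n`,
`∫_i^n (x-i)^{n-1} x^m dx
  = (m!(n-1)!/(m+n)!) ∑_{j=0}^{m} (-1)^j C(m+n, m-j) (n-i)^{n+j} n^{m-j}`. -/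
theorem integral_pow_shift_eq_sum (m n i : ℕ) (hn : 1 ≤ n) (hi : i ≤ n) :
    ∫ x in (i : ℝ)..(n : ℝ), (x - i) ^ (n - 1) * x ^ m =
      ((m.factorial : ℝ) * ((n - 1).factorial : ℝ) / ((m + n).factorial : ℝ)) *
        ∑ j ∈ Finset.range (m + 1),
          (-1 : ℝ) ^ j * ((m + n).choose (m - j) : ℝ) *
            ((n : ℝ) - (i : ℝ)) ^ (n + j) * (n : ℝ) ^ (m - j) := by
  set a : ℝ := (n : ℝ) - (i : ℝ) with ha
  -- substitution t = n - x
  have sub1 : (∫ x in (0:ℝ)..a, ((n : ℝ) - x - i) ^ (n - 1) * ((n : ℝ) - x) ^ m)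
      = ∫ x in (i : ℝ)..(n : ℝ), (x - i) ^ (n - 1) * x ^ m := by
    have := intervalIntegral.integral_comp_sub_left (a := 0) (b := a)
      (fun x : ℝ => (x - i) ^ (n - 1) * x ^ m) (n : ℝ)
    simpa [ha] using this
  rw [← sub1]
  -- expand (n - x)^m via binomial theorem
  have expand : ∀ x : ℝ, ((n : ℝ) - x) ^ m
      = ∑ j ∈ Finset.range (m + 1), (-x) ^ j * (n : ℝ) ^ (m - j) * (m.choose j : ℝ) := by
    intro x
    rw [show ((n : ℝ) - x) = (-x) + n by ring, add_pow]
  have step : (∫ x in (0:ℝ)..a, ((n : ℝ) - x - i) ^ (n - 1) * ((n : ℝ) - x) ^ m)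
      = ∑ j ∈ Finset.range (m + 1),
        ((-1 : ℝ) ^ j * (n : ℝ) ^ (m - j) * (m.choose j : ℝ)) *
          ∫ x in (0:ℝ)..a, x ^ j * (a - x) ^ (n - 1) := by
    have : (∫ x in (0:ℝ)..a, ((n : ℝ) - x - i) ^ (n - 1) * ((n : ℝ) - x) ^ m)
        = ∫ x in (0:ℝ)..a, ∑ j ∈ Finset.range (m + 1),
            ((-1 : ℝ) ^ j * (n : ℝ) ^ (m - j) * (m.choose j : ℝ)) * (x ^ j * (a - x) ^ (n - 1)) := by
      congr 1; ext x
      rw [expand x, Finset.mul_sum]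
      congr 1; ext j
      have : ((n : ℝ) - x - i) = a - x := by rw [ha]; ring
      rw [this, neg_pow]
      ring
    rw [this, intervalIntegral.integral_finset_sum]
    · congr 1; ext j
      rw [intervalIntegral.integral_const_mul]
    · intro j _
      exact (Continuous.intervalIntegrable (by continuity) _ _)
  rw [step]
  rw [Finset.mul_sum]
  apply Finset.sum_congr rfl
  intro j hj
  rw [Finset.mem_range] at hj
  have hjm : j ≤ m := Nat.lt_succ_iff.mp hj
  rw [beta_integral_aux]
  have hexp : j + (n - 1) + 1 = n + j := by omega
  rw [hexp]
  -- now an identity of factorials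
  have key1 : (m.factorial : ℝ) = (m.choose j : ℝ) * j.factorial * (m - j).factorial := by
    rw [← Nat.choose_mul_factorial_mul_factorial hjm]; push_cast; ring
  have key2 : ((m + n).factorial : ℝ)
      = ((m + n).choose (m - j) : ℝ) * (m - j).factorial * (n + j).factorial := by
    have h1 : m - j ≤ m + n := by omega
    have h2 : m + n - (m - j) = n + j := by omega
    rw [← Nat.choose_mul_factorial_mul_factorial h1, h2]; push_cast; ring
  have hne1 : ((n + j).factorial : ℝ) ≠ 0 := Nat.cast_ne_zero.mpr (Nat.factorial_ne_zero _)
  have hne2 : ((m + n).factorial : ℝ) ≠ 0 := Nat.cast_ne_zero.mpr (Nat.factorial_ne_zero _)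
  have hne3 : ((m - j).factorial : ℝ) ≠ 0 := Nat.cast_ne_zero.mpr (Nat.factorial_ne_zero _)
  have hc : (((m + n).choose (m - j)) : ℝ) ≠ 0 :=
    Nat.cast_ne_zero.mpr (Nat.choose_pos (by omega)).ne'
  rw [key1, key2]
  field_simp
end
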